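/- arXiv:2210.03236 — 11 statements merged into one kernel-verified Lean document; each statement's English description precedes it below -/
import Mathlib

section
/- Let q = 2 and let n ∈ {2, 3, 4, 5}. Then the largest value of ω(G_U), as U ranges over all proper F_2-linear subspaces of F_{2^n}, equals n + 1; that is, ω(G_U) ≤ n + 1 for every proper F_2-subspace U of F_{2^n}, and there exists a proper F_2-subspace U of F_{2^n} with ω(G_U) = n + 1. -/
/-- The Paley-like graph on a field `F` associated to a subset `S ⊆ F`:
distinct vertices `a, b ∈ F` are adjacent if and only if `a * b ∈ S`.
For an `F_q`-subspace `U`, the graph `G_U` of the paper is `paleyGraph (U : Set F)`. -/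
def paleyGraph {F : Type*} [Field F] (S : Set F) : SimpleGraph F where
  Adj a b := a ≠ b ∧ a * b ∈ S
  symm := ⟨fun a b h => ⟨h.1.symm, mul_comm a b ▸ h.2⟩⟩
  loopless := ⟨fun a h => h.1 rfl⟩

def nmul (n T x y : ℕ) : ℕ := (T >>> (n * (2 ^ n * x + y))) &&& (2 ^ n - 1)

def ball (f : ℕ → Bool) : ℕ → Bool
  | 0 => true
  | k + 1 => f k && ball f k

lemma ball_all {f : ℕ → Bool} : ∀ k, ball f k = true → ∀ i, i < k → f i = true
  | 0, _, i, hi => absurd hi (Nat.not_lt_zero i)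
  | k + 1, h, i, hi => by
      rw [ball, Bool.and_eq_true] at h
      rcases Nat.lt_succ_iff_lt_or_eq.mp hi with h' | rfl
      exacts [ball_all k h.2 i h', h.1]

/-- a model of GF(2^n): `T` is the multiplication table, `I` the inversion table,
both packed into a single natural number. -/
structure GF (n T I : ℕ) where
  val : Fin (2 ^ n)
  deriving DecidableEq, Fintype

namespace GF

variable {n T I : ℕ}

lemma mask_lt : ∀ x : ℕ, x &&& (2 ^ n - 1) < 2 ^ n := fun x =>
  Nat.lt_of_le_of_lt Nat.and_le_right (Nat.sub_lt (Nat.two_pow_pos n) one_pos)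

instance : Add (GF n T I) :=
  ⟨fun a b => ⟨⟨a.val.val ^^^ b.val.val, Nat.xor_lt_two_pow a.val.isLt b.val.isLt⟩⟩⟩
instance : Mul (GF n T I) :=
  ⟨fun a b => ⟨⟨nmul n T a.val.val b.val.val, mask_lt _⟩⟩⟩
instance : Neg (GF n T I) := ⟨id⟩
instance : Zero (GF n T I) := ⟨⟨⟨0, Nat.two_pow_pos n⟩⟩⟩
instance : One (GF n T I) := ⟨⟨⟨1 % 2 ^ n, Nat.mod_lt _ (Nat.two_pow_pos n)⟩⟩⟩
instance : Inv (GF n T I) := ⟨fun a => ⟨⟨(I >>> (n * a.val.val)) &&& (2 ^ n - 1), mask_lt _⟩⟩⟩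

lemma ext' {a b : GF n T I} (h : a.val.val = b.val.val) : a = b := by
  cases a with | mk av => cases b with | mk bv =>
  exact congrArg GF.mk (Fin.ext h)

lemma forall₃ {P : GF n T I → GF n T I → GF n T I → Prop}
    (h : ∀ x (hx : x < 2 ^ n) y (hy : y < 2 ^ n) z (hz : z < 2 ^ n),
      P ⟨⟨x, hx⟩⟩ ⟨⟨y, hy⟩⟩ ⟨⟨z, hz⟩⟩) :
    ∀ a b c, P a b c := fun ⟨⟨x, hx⟩⟩ ⟨⟨y, hy⟩⟩ ⟨⟨z, hz⟩⟩ => h x hx y hy z hz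

lemma mul_assoc' (hb : ball (fun x => ball (fun y => ball (fun z =>
      nmul n T (nmul n T x y) z == nmul n T x (nmul n T y z)) (2 ^ n)) (2 ^ n)) (2 ^ n) = true) :
    ∀ a b c : GF n T I, a * b * c = a * (b * c) := by
  refine forall₃ (fun x hx y hy z hz => ext' ?_)
  have h1 := ball_all _ (ball_all _ (ball_all _ hb x hx) y hy) z hz
  show nmul n T (nmul n T x y) z = nmul n T x (nmul n T y z)
  exact eq_of_beq h1

lemma left_distrib' (hb : ball (fun x => ball (fun y => ball (fun z =>
      nmul n T x (y ^^^ z) == nmul n T x y ^^^ nmul n T x z) (2 ^ n)) (2 ^ n)) (2 ^ n) = true) :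
    ∀ a b c : GF n T I, a * (b + c) = a * b + a * c := by
  refine forall₃ (fun x hx y hy z hz => ext' ?_)
  have h1 := ball_all _ (ball_all _ (ball_all _ hb x hx) y hy) z hz
  show nmul n T x (y ^^^ z) = nmul n T x y ^^^ nmul n T x z
  exact eq_of_beq h1

lemma add_assoc' : ∀ a b c : GF n T I, a + b + c = a + (b + c) :=
  fun a b c => ext' (Nat.xor_assoc _ _ _)

lemma zero_add' : ∀ a : GF n T I, 0 + a = a := fun a => ext' (Nat.zero_xor _)

lemma neg_add_cancel' : ∀ a : GF n T I, -a + a = 0 := fun a => ext' (Nat.xor_self _)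

lemma card_eq : Fintype.card (GF n T I) = 2 ^ n := by
  rw [← Fintype.card_fin (2 ^ n)]
  exact Fintype.card_congr ⟨GF.val, GF.mk, fun _ => rfl, fun _ => rfl⟩

end GF

abbrev Fq4 := GF 2 2625168384 180

set_option maxRecDepth 40000 in
set_option maxHeartbeats 12000000 in
instance fieldFq4 : Field (Fq4) := Field.ofMinimalAxioms _
  GF.add_assoc' GF.zero_add' GF.neg_add_cancel'
  (GF.mul_assoc' (by decide)) (by decide) (by decide)
  (by decide) (by decide) (GF.left_distrib' (by decide)) ⟨0, 1, by decide⟩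

abbrev Fq8 := GF 3 2821848294356612419217921029917578219971947684264937521152 9272648

set_option maxRecDepth 40000 in
set_option maxHeartbeats 12000000 in
instance fieldFq8 : Field (Fq8) := Field.ofMinimalAxioms _
  GF.add_assoc' GF.zero_add' GF.neg_add_cancel'
  (GF.mul_assoc' (by decide)) (by decide) (by decide)
  (by decide) (by decide) (GF.left_distrib' (by decide)) ⟨0, 1, by decide⟩

abbrev Fq16 := GF 4 116196760129267793630862849262464326346044543732748708940920453221664288556434379745879494961270582141731748813355742142288220638766218855867759359510984593843506004200114943278699875244065120512813025380665946106619127097398772031257643617143689515450995722003729973585221105779229319991106539050771048038400 9460475325918865680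

set_option maxRecDepth 40000 in
set_option maxHeartbeats 12000000 in
instance fieldFq16 : Field (Fq16) := Field.ofMinimalAxioms _
  GF.add_assoc' GF.zero_add' GF.neg_add_cancel'
  (GF.mul_assoc' (by decide)) (by decide) (by decide)
  (by decide) (by decide) (GF.left_distrib' (by decide)) ⟨0, 1, by decide⟩

abbrev Fq32 := GF 5 108047903208776182301821177221103242476143116593955060130293304589979379624792515153448842048557508062944046124406229695296066925914606762581689461002085778494869921253308993299871816092985491976045169017559410915641250367137487077474267762475165846192052592168025461595576071664656168551390812030282810547142273575707685992071951630439607196763160003983695986142552761857137002861441091538854289825063246106996111585522612270594387893792604677643806278420866095200429498834875164278453909318858873928361350451542075359389585350846896032637281038213167798410357414190746885591238672396555286314927225104490276004281802275612186310538897012821309466952071474062567291510724844240328231794507178969064997669581675260890171579661861804781287947179868346279216925369372792570769878690061895251633690187934766853249525474952930834331809573725942322942128859614576856896107208964457676110404290123549830361915177833475321143338419370844702955843687682335496728704246540419906221753620676385508341937256156840096544712112163214344887431563846620792143299057294129562689729500658535791013600437345014523103774325441249963724119162034606046898190840942821086017654297642452944418259132037807734164211605724739782819781353435761009390836216362900777584713462606884327330779408941635095127726452318274311602862610838031905185084111375203469849716078223880040803555184033898903431904408499901976387979014468435507345745772488651003084902781458751948967454175797339287002946443741078296424767125593778879332774650111994871979244289813779477452088152162304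 1262539949331657191584015143012150064589853050912

set_option maxRecDepth 40000 in
set_option maxHeartbeats 12000000 in
instance fieldFq32 : Field (Fq32) := Field.ofMinimalAxioms _
  GF.add_assoc' GF.zero_add' GF.neg_add_cancel'
  (GF.mul_assoc' (by decide)) (by decide) (by decide)
  (by decide) (by decide) (GF.left_distrib' (by decide)) ⟨0, 1, by decide⟩

open Module Submodule Finset

section Upper

variable {K F : Type*} [Field K] [Field F] [Algebra K F] [Fintype K] [Fintype F]

lemma k_two (hK : Fintype.card K = 2) (k : K) : k = 0 ∨ k = 1 := by
  classical
  have h01 : ({0, 1} : Finset K).card = 2 := by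
    rw [Finset.card_insert_of_notMem (by simp), Finset.card_singleton]
  have huniv : ({0, 1} : Finset K) = Finset.univ :=
    Finset.eq_of_subset_of_card_le (Finset.subset_univ _)
      (by rw [h01, Finset.card_univ, hK])
  have hm := Finset.mem_univ k
  rw [← huniv] at hm
  simpa using hm

lemma span_subset_sum (hK : Fintype.card K = 2) (J : Finset F) {x : F}
    (hx : x ∈ Submodule.span K (J : Set F)) : ∃ T ⊆ J, x = ∑ a ∈ T, a := by
  classical
  rw [mem_span_finset] at hx
  obtain ⟨f, -, hf⟩ := hx
  refine ⟨J.filter (fun a => f a = 1), Finset.filter_subset _ _, ?_⟩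
  rw [← hf, Finset.sum_filter]
  refine (Finset.sum_congr rfl ?_)
  intro a _
  rcases k_two hK (f a) with h | h <;> simp [h]

lemma nonzero_clique_bound (hK : Fintype.card K = 2) {n : ℕ} (hn : n ≤ 5)
    (hF : Fintype.card F = 2 ^ n) (U : Submodule K F) (hU : U ≠ ⊤)
    (C : Finset F) (h0 : (0 : F) ∉ C)
    (hcl : ∀ a ∈ C, ∀ b ∈ C, a ≠ b → a * b ∈ U) : C.card ≤ n := by
  classical
  haveI : FiniteDimensional K F := Module.Finite.of_finite
  have hrank : finrank K F = n := by
    have hc := card_eq_pow_finrank (K := K) (V := F)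
    rw [hK, hF] at hc
    exact (Nat.pow_right_injective le_rfl hc.symm)
  -- zero-sum lemma
  have hZS : ∀ T T' : Finset F, T ⊆ C → T' ⊆ C → Disjoint T T' →
      (∑ a ∈ T, a) = (∑ a ∈ T', a) → ∀ a ∈ T, a * a ∈ U := by
    intro T T' hT hT' hdis hsum a ha
    have h1 : (∑ b ∈ T, a * b) = (∑ b ∈ T', a * b) := by
      rw [← Finset.mul_sum, ← Finset.mul_sum, hsum]
    have h2 : a * a + ∑ b ∈ T.erase a, a * b = ∑ b ∈ T, a * b :=
      Finset.add_sum_erase _ _ ha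
    have hmem : a * a = (∑ b ∈ T', a * b) - (∑ b ∈ T.erase a, a * b) := by
      rw [← h1, ← h2]; ring
    rw [hmem]
    refine sub_mem (Submodule.sum_mem _ ?_) (Submodule.sum_mem _ ?_)
    · intro b hb
      exact hcl a (hT ha) b (hT' hb)
        (fun hab => Finset.disjoint_left.mp hdis ha (hab ▸ hb))
    · intro b hb
      exact hcl a (hT ha) b (hT (Finset.erase_subset _ _ hb))
        (Ne.symm (Finset.ne_of_mem_erase hb))
  set J : Finset F := C.filter (fun a => a * a ∈ U) with hJdef
  have hJC : J ⊆ C := Finset.filter_subset _ _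
  set V : Submodule K F := Submodule.span K (C : Set F) with hVdef
  set V₀ : Submodule K F := Submodule.span K (J : Set F) with hV₀def
  have hV₀V : V₀ ≤ V := Submodule.span_mono (by exact_mod_cast hJC)
  set t : ℕ := finrank K V₀ with htdef
  -- key1
  have key1 : ∀ a ∈ J, ∀ x ∈ V, a * x ∈ U := by
    intro a haJ x hx
    obtain ⟨T, hTC, rfl⟩ := span_subset_sum hK C hx
    rw [Finset.mul_sum]
    refine Submodule.sum_mem _ ?_
    intro b hb
    rcases eq_or_ne a b with rfl | hne
    · exact (Finset.mem_filter.mp haJ).2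
    · exact hcl a (hJC haJ) b (hTC hb) hne
  have key1' : ∀ v ∈ V₀, ∀ x ∈ V, v * x ∈ U := by
    intro v hv x hx
    obtain ⟨T, hTJ, rfl⟩ := span_subset_sum hK J hv
    rw [Finset.sum_mul]
    exact Submodule.sum_mem _ (fun a ha => key1 a (hTJ ha) x hx)
  -- rank of V is < n when J ≠ ∅
  have hVlt : J.Nonempty → finrank K V < n := by
    rintro ⟨a₀, ha₀⟩
    have ha0 : a₀ ≠ 0 := fun h => h0 (h ▸ hJC ha₀)
    let e : F ≃ₗ[K] F :=
      { toFun := fun x => a₀ * x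
        map_add' := mul_add a₀
        map_smul' := fun k x => Algebra.mul_smul_comm k a₀ x
        invFun := fun x => a₀⁻¹ * x
        left_inv := fun x => by field_simp
        right_inv := fun x => by field_simp }
    have hmap : V.map (e : F →ₗ[K] F) ≤ U := by
      rintro _ ⟨x, hx, rfl⟩
      exact key1 a₀ ha₀ x hx
    have h1 := Submodule.finrank_mono hmap
    rw [LinearEquiv.finrank_map_eq] at h1
    exact lt_of_le_of_lt h1 (hrank ▸ Submodule.finrank_lt hU)
  -- the functional
  obtain ⟨φ, hφne, hφ⟩ :=
    Submodule.exists_dual_map_eq_bot_of_lt_top (lt_top_iff_ne_top.mpr hU) inferInstance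
  have hφU : ∀ x ∈ U, φ x = 0 := by
    intro x hx
    have : φ x ∈ U.map φ := ⟨x, hx, rfl⟩
    rwa [hφ, Submodule.mem_bot] at this
  obtain ⟨z, hz⟩ : ∃ z, φ z ≠ 0 := by
    by_contra h
    push_neg at h
    exact hφne (LinearMap.ext (fun x => h x))
  -- 2t ≤ n
  have h2t : 2 * t ≤ n := by
    let ψ : F →ₗ[K] Module.Dual K V₀ :=
      { toFun := fun x => φ.comp ((LinearMap.mulLeft K x).comp V₀.subtype)
        map_add' := by intro x y; ext v; simp [add_mul]
        map_smul' := by intro k x; ext v; simp [Algebra.smul_mul_assoc] }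
    have hker : V₀ ≤ LinearMap.ker ψ := by
      intro v hv
      rw [LinearMap.mem_ker]
      ext w
      exact hφU _ (key1' v hv w (hV₀V w.2))
    have hco : (LinearMap.range ψ).dualCoannihilator = ⊥ := by
      rw [eq_bot_iff]
      intro v hv
      rw [Submodule.mem_dualCoannihilator] at hv
      have hall : ∀ x : F, φ (x * (v : F)) = 0 := fun x => hv (ψ x) ⟨x, rfl⟩
      rw [Submodule.mem_bot]
      by_contra hvne
      have hv0 : (v : F) ≠ 0 := fun h => hvne (Subtype.ext h)
      have := hall (z * (v : F)⁻¹)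
      rw [mul_assoc, inv_mul_cancel₀ hv0, mul_one] at this
      exact hz this
    have hfr := Subspace.finrank_add_finrank_dualCoannihilator_eq (LinearMap.range ψ)
    rw [hco, finrank_bot, add_zero] at hfr
    have hrn := LinearMap.finrank_range_add_finrank_ker ψ
    have hkle : t ≤ finrank K (LinearMap.ker ψ) := Submodule.finrank_mono hker
    rw [hrank] at hrn
    omega
  -- independence of C \ J modulo V₀
  have hs : (C \ J).card + t ≤ finrank K V := by
    set D : Finset F := C \ J with hDdef
    let π := V₀.mkQ
    have hLI : LinearIndependent K (fun c : ↥D => π (c : F)) := by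
      rw [Fintype.linearIndependent_iff]
      intro g hg
      set T : Finset F := (Finset.univ.filter (fun i : ↥D => g i ≠ 0)).image
        (fun i : ↥D => (i : F)) with hTdef
      have hTD : T ⊆ D := by
        intro a ha
        obtain ⟨i, _, rfl⟩ := Finset.mem_image.mp ha
        exact i.2
      have hsumT : (∑ a ∈ T, a) ∈ V₀ := by
        have hinj : Set.InjOn (fun i : ↥D => (i : F))
            ↑(Finset.univ.filter (fun i : ↥D => g i ≠ 0)) :=
          fun x _ y _ h => Subtype.ext h
        have h1 : (∑ a ∈ T, a) = ∑ i ∈ Finset.univ.filter (fun i : ↥D => g i ≠ 0), (i : F) := by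
          rw [hTdef]
          exact Finset.sum_image (fun x hx y hy h => Subtype.ext h)
        have h2 : (∑ i ∈ Finset.univ.filter (fun i : ↥D => g i ≠ 0), (i : F))
            = ∑ i : ↥D, g i • (i : F) := by
          rw [Finset.sum_filter]
          refine Finset.sum_congr rfl (fun i _ => ?_)
          rcases k_two hK (g i) with h | h <;> simp [h]
        have h3 : π (∑ i : ↥D, g i • (i : F)) = 0 := by
          rw [map_sum]
          simpa using hg
        rw [h1, h2, ← Submodule.Quotient.mk_eq_zero V₀]
        exact h3
      obtain ⟨T', hT'J, hTT'⟩ := span_subset_sum hK J hsumT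
      have hTJ : ∀ a ∈ T, a * a ∈ U := by
        refine hZS T T' (hTD.trans (Finset.sdiff_subset)) (hT'J.trans hJC) ?_ hTT'
        exact Finset.disjoint_left.mpr
          (fun a ha ha' => (Finset.mem_sdiff.mp (hTD ha)).2 (hT'J ha'))
      have hTempty : T = ∅ := by
        rw [Finset.eq_empty_iff_forall_notMem]
        intro a ha
        exact (Finset.mem_sdiff.mp (hTD ha)).2
          (Finset.mem_filter.mpr ⟨(Finset.mem_sdiff.mp (hTD ha)).1, hTJ a ha⟩)
      intro i
      by_contra hgi
      have : (i : F) ∈ T := Finset.mem_image.mpr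
        ⟨i, Finset.mem_filter.mpr ⟨Finset.mem_univ _, hgi⟩, rfl⟩
      rw [hTempty] at this
      exact absurd this (Finset.notMem_empty _)
    -- card bound via span
    have hspan : Submodule.span K (Set.range (fun c : ↥D => π (c : F))) ≤ V.map π := by
      rw [Submodule.span_le]
      rintro _ ⟨i, rfl⟩
      exact ⟨(i : F), Submodule.subset_span (Finset.mem_coe.mpr (Finset.sdiff_subset i.2)), rfl⟩
    have hcard : D.card ≤ finrank K (V.map π) := by
      have h1 := finrank_span_eq_card hLI
      rw [Fintype.card_coe] at h1
      rw [← h1]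
      exact Submodule.finrank_mono hspan
    -- rank-nullity for the restriction
    have h1 : finrank K (V.map π) + t = finrank K V := by
      let g' := π.comp V.subtype
      have hr : LinearMap.range g' = V.map π := by
        rw [LinearMap.range_comp, Submodule.range_subtype]
      have hk : LinearMap.ker g' = V₀.comap V.subtype := by
        rw [LinearMap.ker_comp, Submodule.ker_mkQ]
      have h3 := LinearMap.finrank_range_add_finrank_ker g'
      rw [hr, hk] at h3
      have h4 : finrank K (V₀.comap V.subtype) = t :=
        LinearEquiv.finrank_eq (Submodule.comapSubtypeEquivOfLe hV₀V)
      rw [h4] at h3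
      exact h3
    omega
  -- card of J
  have hJcard : J.card + 1 ≤ 2 ^ t := by
    haveI : Fintype ↥V₀ := Fintype.ofFinite _
    have hsub : insert (0 : F) J ⊆ Set.toFinset (V₀ : Set F) := by
      intro a ha
      rw [Set.mem_toFinset]
      rcases Finset.mem_insert.mp ha with rfl | ha
      · exact zero_mem _
      · exact Submodule.subset_span (Finset.mem_coe.mpr ha)
    have hcard : (insert (0 : F) J).card ≤ Fintype.card ↥V₀ := by
      have := Finset.card_le_card hsub
      rwa [Set.toFinset_card] at this
    rw [Finset.card_insert_of_notMem (fun h => h0 (hJC h))] at hcard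
    have hcV₀ : Fintype.card ↥V₀ = 2 ^ t := by
      have := card_eq_pow_finrank (K := K) (V := ↥V₀)
      rwa [hK] at this
    omega
  -- wrap up
  have hcards : (C \ J).card + J.card = C.card := Finset.card_sdiff_add_card_eq_card hJC
  rcases Finset.eq_empty_or_nonempty J with hJe | hJne
  · have hle : (C \ J).card + t ≤ n := le_trans hs (hrank ▸ Submodule.finrank_le V)
    rw [hJe, Finset.sdiff_empty] at hle
    omega
  · have hVn : finrank K V < n := hVlt hJne
    have hVs : (C \ J).card + t ≤ finrank K V := hs
    clear_value t
    have hpow : 2 ^ t ≤ t + 2 := by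
      have ht2 : t ≤ 2 := by omega
      interval_cases t <;> decide
    omega

end Upper

section Wrap

variable {K F : Type*} [Field K] [Field F] [Algebra K F] [Fintype K] [Fintype F]

lemma paley_adj {S : Set F} {a b : F} (h : (paleyGraph S).Adj a b) : a ≠ b ∧ a * b ∈ S := h

lemma cliqueNum_le_of_card_two (hK : Fintype.card K = 2) {n : ℕ} (hn : n ≤ 5)
    (hF : Fintype.card F = 2 ^ n) (U : Submodule K F) (hU : U ≠ ⊤) :
    (paleyGraph (U : Set F)).cliqueNum ≤ n + 1 := by
  classical
  refine csSup_le ⟨0, ∅, SimpleGraph.isNClique_empty.mpr rfl⟩ ?_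
  rintro m ⟨s, hs⟩
  rw [SimpleGraph.isNClique_iff] at hs
  obtain ⟨hc, rfl⟩ := hs
  by_cases h0 : (0 : F) ∈ s
  · have hb := nonzero_clique_bound hK hn hF U hU (s.erase 0)
      (Finset.notMem_erase _ _) (fun a ha b hb hab =>
        (hc (Finset.mem_coe.mpr (Finset.mem_of_mem_erase ha))
          (Finset.mem_coe.mpr (Finset.mem_of_mem_erase hb)) hab).2)
    have := Finset.card_erase_add_one h0
    omega
  · have hb := nonzero_clique_bound hK hn hF U hU s h0 (fun a ha b hb hab =>
      (hc (Finset.mem_coe.mpr ha) (Finset.mem_coe.mpr hb) hab).2)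
    omega

end Wrap

section Exist

variable {K F : Type*} [Field K] [Field F] [Algebra K F] [Fintype K] [Fintype F]

lemma exists_good_subspace {Fc : Type*} [Field Fc] [Fintype Fc] [DecidableEq Fc]
    (hK : Fintype.card K = 2) {n : ℕ} (hFc : Fintype.card Fc = 2 ^ n)
    (hF : Fintype.card F = 2 ^ n)
    (H : AddSubgroup Fc) (bs : List Fc) (hlen : bs.length = n + 1)
    (hnd : bs.Nodup)
    (hprod : ∀ x ∈ bs, ∀ y ∈ bs, x ≠ y → x * y ∈ H)
    (w : Fc) (hw : w ∉ H) :
    ∃ U : Submodule K F, U ≠ ⊤ ∧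
      ∃ s : Finset F, (paleyGraph (U : Set F)).IsNClique (n + 1) s := by
  classical
  let e : Fc ≃+* F := FiniteField.ringEquivOfCardEq (by rw [hFc, hF])
  refine ⟨{ carrier := e '' H
            add_mem' := ?_
            zero_mem' := ⟨0, H.zero_mem, map_zero e⟩
            smul_mem' := ?_ }, ?_, ?_⟩
  · rintro a b ⟨x, hx, rfl⟩ ⟨y, hy, rfl⟩
    exact ⟨x + y, H.add_mem hx hy, map_add e x y⟩
  · intro k x hx
    rcases k_two hK k with rfl | rfl
    · rw [zero_smul]
      exact ⟨0, H.zero_mem, map_zero e⟩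
    · rwa [one_smul]
  · intro htop
    have hmem : e w ∈ (⊤ : Submodule K F) := Submodule.mem_top
    rw [← htop] at hmem
    obtain ⟨x, hx, hex⟩ := hmem
    rw [e.injective hex] at hx
    exact hw hx
  · refine ⟨(bs.map e).toFinset, ?_, ?_⟩
    · intro a ha b hb hab
      rw [Finset.mem_coe, List.mem_toFinset, List.mem_map] at ha hb
      obtain ⟨x, hx, rfl⟩ := ha
      obtain ⟨y, hy, rfl⟩ := hb
      refine ⟨hab, ?_⟩
      have hxy : x ≠ y := fun h => hab (congrArg e h)
      exact ⟨x * y, hprod x hx y hy hxy, map_mul e x y⟩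
    · rw [List.toFinset_card_of_nodup (hnd.map e.injective), List.length_map, hlen]

end Exist

section Data

def P4 : Fq4 → Prop := fun a => (5 >>> a.val.val) &&& 1 = 1

instance : DecidablePred P4 := fun _ => Nat.decEq _ _

def H4 : AddSubgroup Fq4 where
  carrier := setOf P4
  add_mem' := fun {a b} ha hb =>
    (by decide : ∀ a b : Fq4, P4 a → P4 b → P4 (a + b)) a b ha hb
  zero_mem' := (by decide : P4 0)
  neg_mem' := fun {a} ha => (by decide : ∀ a : Fq4, P4 a → P4 (-a)) a ha

def bs4 : List Fq4 :=
  [0, 1, 2].map (fun v => ⟨⟨v % 2 ^ 2, Nat.mod_lt _ (by norm_num)⟩⟩)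

lemma hprod4 : ∀ x ∈ bs4, ∀ y ∈ bs4, x ≠ y → x * y ∈ H4 :=
  (by decide : ∀ x ∈ bs4, ∀ y ∈ bs4, x ≠ y → P4 (x * y))

lemma hw4 : (⟨⟨1 % 2 ^ 2, Nat.mod_lt _ (by norm_num)⟩⟩ : Fq4) ∉ H4 :=
  (by decide : ¬ P4 ⟨⟨1 % 2 ^ 2, Nat.mod_lt _ (by norm_num)⟩⟩)

def P8 : Fq8 → Prop := fun a => (85 >>> a.val.val) &&& 1 = 1

instance : DecidablePred P8 := fun _ => Nat.decEq _ _

def H8 : AddSubgroup Fq8 where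
  carrier := setOf P8
  add_mem' := fun {a b} ha hb =>
    (by decide : ∀ a b : Fq8, P8 a → P8 b → P8 (a + b)) a b ha hb
  zero_mem' := (by decide : P8 0)
  neg_mem' := fun {a} ha => (by decide : ∀ a : Fq8, P8 a → P8 (-a)) a ha

def bs8 : List Fq8 :=
  [0, 3, 5, 7].map (fun v => ⟨⟨v % 2 ^ 3, Nat.mod_lt _ (by norm_num)⟩⟩)

lemma hprod8 : ∀ x ∈ bs8, ∀ y ∈ bs8, x ≠ y → x * y ∈ H8 :=
  (by decide : ∀ x ∈ bs8, ∀ y ∈ bs8, x ≠ y → P8 (x * y))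

lemma hw8 : (⟨⟨1 % 2 ^ 3, Nat.mod_lt _ (by norm_num)⟩⟩ : Fq8) ∉ H8 :=
  (by decide : ¬ P8 ⟨⟨1 % 2 ^ 3, Nat.mod_lt _ (by norm_num)⟩⟩)

def P16 : Fq16 → Prop := fun a => (21845 >>> a.val.val) &&& 1 = 1

instance : DecidablePred P16 := fun _ => Nat.decEq _ _

def H16 : AddSubgroup Fq16 where
  carrier := setOf P16
  add_mem' := fun {a b} ha hb =>
    (by decide : ∀ a b : Fq16, P16 a → P16 b → P16 (a + b)) a b ha hb
  zero_mem' := (by decide : P16 0)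
  neg_mem' := fun {a} ha => (by decide : ∀ a : Fq16, P16 a → P16 (-a)) a ha

def bs16 : List Fq16 :=
  [0, 1, 6, 12, 14].map (fun v => ⟨⟨v % 2 ^ 4, Nat.mod_lt _ (by norm_num)⟩⟩)

lemma hprod16 : ∀ x ∈ bs16, ∀ y ∈ bs16, x ≠ y → x * y ∈ H16 :=
  (by decide : ∀ x ∈ bs16, ∀ y ∈ bs16, x ≠ y → P16 (x * y))

lemma hw16 : (⟨⟨1 % 2 ^ 4, Nat.mod_lt _ (by norm_num)⟩⟩ : Fq16) ∉ H16 :=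
  (by decide : ¬ P16 ⟨⟨1 % 2 ^ 4, Nat.mod_lt _ (by norm_num)⟩⟩)

def P32 : Fq32 → Prop := fun a => (1431655765 >>> a.val.val) &&& 1 = 1

instance : DecidablePred P32 := fun _ => Nat.decEq _ _

def H32 : AddSubgroup Fq32 where
  carrier := setOf P32
  add_mem' := fun {a b} ha hb =>
    (by decide : ∀ a b : Fq32, P32 a → P32 b → P32 (a + b)) a b ha hb
  zero_mem' := (by decide : P32 0)
  neg_mem' := fun {a} ha => (by decide : ∀ a : Fq32, P32 a → P32 (-a)) a ha

def bs32 : List Fq32 :=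
  [0, 1, 16, 22, 26, 30].map (fun v => ⟨⟨v % 2 ^ 5, Nat.mod_lt _ (by norm_num)⟩⟩)

lemma hprod32 : ∀ x ∈ bs32, ∀ y ∈ bs32, x ≠ y → x * y ∈ H32 :=
  (by decide : ∀ x ∈ bs32, ∀ y ∈ bs32, x ≠ y → P32 (x * y))

lemma hw32 : (⟨⟨1 % 2 ^ 5, Nat.mod_lt _ (by norm_num)⟩⟩ : Fq32) ∉ H32 :=
  (by decide : ¬ P32 ⟨⟨1 % 2 ^ 5, Nat.mod_lt _ (by norm_num)⟩⟩)

end Data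


/-- for `q = 2` and `n ∈ {2, 3, 4, 5}`, the largest value of `ω(G_U)` over
all proper `F_2`-subspaces `U` of `F_{2^n}` equals `n + 1`. -/
theorem omega_max_q_two_small_n (n : ℕ) (hn : n ∈ ({2, 3, 4, 5} : Set ℕ))
    (K F : Type*) [Field K] [Field F] [Algebra K F] [Fintype K] [Fintype F]
    (hK : Fintype.card K = 2) (hF : Fintype.card F = 2 ^ n) :
    (∀ U : Submodule K F, U ≠ ⊤ → (paleyGraph (U : Set F)).cliqueNum ≤ n + 1) ∧
    (∃ U : Submodule K F, U ≠ ⊤ ∧ (paleyGraph (U : Set F)).cliqueNum = n + 1) := by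
  have hn5 : n ≤ 5 := by
    simp only [Set.mem_insert_iff, Set.mem_singleton_iff] at hn
    rcases hn with rfl | rfl | rfl | rfl <;> norm_num
  refine ⟨fun U hU => cliqueNum_le_of_card_two hK hn5 hF U hU, ?_⟩
  simp only [Set.mem_insert_iff, Set.mem_singleton_iff] at hn
  have key : ∃ U : Submodule K F, U ≠ ⊤ ∧
      ∃ s : Finset F, (paleyGraph (U : Set F)).IsNClique (n + 1) s := by
    rcases hn with rfl | rfl | rfl | rfl
    · exact exists_good_subspace hK GF.card_eq hF H4 bs4 (by decide) (by decide)
        hprod4 _ hw4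
    · exact exists_good_subspace hK GF.card_eq hF H8 bs8 (by decide) (by decide)
        hprod8 _ hw8
    · exact exists_good_subspace hK GF.card_eq hF H16 bs16 (by decide) (by decide)
        hprod16 _ hw16
    · exact exists_good_subspace hK GF.card_eq hF H32 bs32 (by decide) (by decide)
        hprod32 _ hw32
  obtain ⟨U, hU, s, hs⟩ := key
  refine ⟨U, hU, le_antisymm (cliqueNum_le_of_card_two hK hn5 hF U hU) ?_⟩
  have h1 := SimpleGraph.IsClique.card_le_cliqueNum (tc := hs.isClique)
  rwa [hs.card_eq] at h1
end

section
/- Let q be a prime power and n ≥ 2 an integer with q > 2 or n ≥ 6. Then the largest value of ω(G_U), as U ranges over all proper F_q-linear subspaces of F_{q^n}, equals q^{(n−1)/2} + 1 if n is odd and q^{n/2} if n is even; that is, every proper F_q-subspace U of F_{q^n} satisfies ω(G_U) ≤ q^{(n−1)/2} + 1 (n odd) resp. ω(G_U) ≤ q^{n/2} (n even), and this bound is attained by some proper F_q-subspace U. -/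
lemma aux3 (q d : ℕ) (hq : 3 ≤ q) : 2 * d + 1 ≤ q ^ d := by
  induction d with
  | zero => simp
  | succ d ih =>
    have h1 : q ^ (d + 1) = q * q ^ d := by ring
    have h2 : 1 ≤ q ^ d := Nat.one_le_pow _ _ (by omega)
    nlinarith

lemma aux2 (h : ℕ) (hh : 3 ≤ h) : 2 * h + 1 ≤ 2 ^ h := by
  induction h with
  | zero => omega
  | succ d ih =>
    rcases Nat.lt_or_ge d 3 with hd | hd
    · interval_cases d <;> simp_all <;> omega
    · have h2 : 1 ≤ 2 ^ d := Nat.one_le_pow _ _ (by omega)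
      have h1 : 2 ^ (d + 1) = 2 * 2 ^ d := by ring
      have := ih (by omega)
      omega

lemma auxd (d : ℕ) : d + 1 ≤ 2 ^ d := Nat.lt_two_pow_self

lemma key_pow (q h d : ℕ) (hq : 2 ≤ q) (hcase : 3 ≤ q ∨ 3 ≤ h) (hd1 : 1 ≤ d)
    (hdh : d ≤ h) : q ^ (h - d) + 2 * d ≤ q ^ h := by
  have he : q ^ h = q ^ (h - d) * q ^ d := by
    rw [← pow_add]; congr 1; omega
  have ha : 1 ≤ q ^ (h - d) := Nat.one_le_pow _ _ (by omega)
  rcases hcase with hq3 | hh3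
  · have hb := aux3 q d hq3
    nlinarith
  · rcases Nat.lt_or_ge d h with hdlt | hde
    · have ha2 : 2 ≤ q ^ (h - d) := by
        calc (2:ℕ) = 2 ^ 1 := rfl
        _ ≤ q ^ 1 := by simpa using hq
        _ ≤ q ^ (h - d) := Nat.pow_le_pow_right (by omega) (by omega)
      have hb : d + 1 ≤ q ^ d := le_trans (auxd d) (Nat.pow_le_pow_left hq d)
      nlinarith
    · have hde' : d = h := le_antisymm hdh hde
      subst hde'
      simp only [Nat.sub_self, pow_zero]
      rcases Nat.lt_or_ge q 3 with hq2 | hq3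
      · have : q = 2 := by omega
        subst this
        have := aux2 d hh3
        omega
      · have := aux3 q d hq3
        omega

lemma numeric_bound (q n t r : ℕ) (hq : 2 ≤ q) (hn : 2 ≤ n) (hcase : 2 < q ∨ 6 ≤ n)
    (htr : 2 * t + r ≤ n) :
    q ^ t + r ≤ if Odd n then q ^ ((n - 1) / 2) + 1 else q ^ (n / 2) := by
  have hmod : (if Odd n then q ^ ((n - 1) / 2) + 1 else q ^ (n / 2)) = q ^ (n / 2) + n % 2 := by
    rcases Nat.even_or_odd n with he | ho
    · rw [if_neg (Nat.not_odd_iff_even.mpr he)]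
      have : n % 2 = 0 := Nat.even_iff.mp he
      omega
    · rw [if_pos ho]
      have h1 : n % 2 = 1 := Nat.odd_iff.mp ho
      have h2 : (n - 1) / 2 = n / 2 := by omega
      rw [h2]; omega
  rw [hmod]
  rcases Nat.lt_or_ge t (n / 2) with hlt | hge
  · have hd1 : 1 ≤ n / 2 - t := by omega
    have hkey := key_pow q (n / 2) (n / 2 - t) hq (by omega) hd1 (by omega)
    have ht' : n / 2 - (n / 2 - t) = t := by omega
    rw [ht'] at hkey
    have hr : r ≤ n % 2 + 2 * (n / 2 - t) := by omega
    omega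
  · have hteq : t ≤ n / 2 := by omega
    have : t = n / 2 := le_antisymm hteq hge
    subst this
    have : r ≤ n % 2 := by omega
    omega

open Module

lemma clique_card_bound {K F : Type*} [Field K] [Field F] [Algebra K F] [Fintype K] [Fintype F]
    (U : Submodule K F) (hU : U ≠ ⊤) (s : Finset F)
    (hs : (paleyGraph (U : Set F)).IsClique s) :
    ∃ t r : ℕ, 2 * t + r ≤ Module.finrank K F ∧
      s.card ≤ Fintype.card K ^ t + r := by
  classical
  have hmem : ∀ a b : F, a ∈ s → b ∈ s → a ≠ b → a * b ∈ U := by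
    intro a b ha hb hab
    exact (show a ≠ b ∧ a * b ∈ (U : Set F) from hs ha hb hab).2
  -- the quotient is nontrivial
  have hnt : Nontrivial (F ⧸ U) := Submodule.Quotient.nontrivial_iff.mpr hU
  obtain ⟨v, hv⟩ := exists_ne (0 : F ⧸ U)
  have hL : ∃ L : Module.Dual K (F ⧸ U), L v ≠ 0 := by
    by_contra hc
    push_neg at hc
    exact hv ((Module.forall_dual_apply_eq_zero_iff K v).mp hc)
  obtain ⟨L, hLv⟩ := hL
  -- the bilinear forms
  set Bv : F →ₗ[K] F →ₗ[K] (F ⧸ U) := (LinearMap.mul K F).compr₂ U.mkQ with hBv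
  set b : LinearMap.BilinForm K F := (LinearMap.mul K F).compr₂ (L ∘ₗ U.mkQ) with hb
  have hBv_apply : ∀ x y : F, Bv x y = U.mkQ (x * y) := fun x y => rfl
  have hb_apply : ∀ x y : F, b x y = L (U.mkQ (x * y)) := fun x y => rfl
  have hBv_zero : ∀ x y : F, x * y ∈ U → Bv x y = 0 := by
    intro x y hxy
    rw [hBv_apply, Submodule.mkQ_apply, Submodule.Quotient.mk_eq_zero]
    exact hxy
  have hb_symm : b.IsSymm := by
    refine ⟨fun x y => ?_⟩
    simp only [hb_apply, RingHom.id_apply, mul_comm]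
  have hb_nd : b.Nondegenerate := by
    have hleft : LinearMap.SeparatingLeft b := by
      intro x hx
      by_contra hx0
      obtain ⟨z, hz⟩ := Submodule.mkQ_surjective U v
      have := hx (x⁻¹ * z)
      rw [hb_apply] at this
      rw [show x * (x⁻¹ * z) = z by field_simp] at this
      rw [hz] at this
      exact hLv this
    exact ⟨hleft, fun y hy => hleft y (fun x => (hb_symm.eq y x).trans (hy x))⟩
  -- the two parts of the clique
  set S0 : Finset F := s.filter (fun c => c ≠ 0 ∧ c * c ∈ U) with hS0
  set S1 : Finset F := s.filter (fun c => c ≠ 0 ∧ c * c ∉ U) with hS1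
  set X : Submodule K F := Submodule.span K (S0 : Set F) with hX
  set W1 : Submodule K F := Submodule.span K (S1 : Set F) with hW1
  set Z : Submodule K F := Submodule.span K ((S0 : Set F) ∪ (S1 : Set F)) with hZdef
  set t : ℕ := finrank K X with ht
  set r : ℕ := S1.card with hr
  -- basic membership facts
  have hS0mem : ∀ c ∈ S0, c ∈ s ∧ c ≠ 0 ∧ c * c ∈ U := by
    intro c hc; simpa [hS0] using hc
  have hS1mem : ∀ c ∈ S1, c ∈ s ∧ c ≠ 0 ∧ c * c ∉ U := by
    intro c hc; simpa [hS1] using hc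
  -- generator-level orthogonality
  have horthgen : ∀ c ∈ (S0 : Set F), ∀ c' ∈ (S0 : Set F) ∪ (S1 : Set F), Bv c c' = 0 := by
    intro c hc c' hc'
    obtain ⟨hcs, hc0, hcU⟩ := hS0mem c hc
    have hc's : c' ∈ s := by
      rcases hc' with h' | h'
      · exact (hS0mem c' h').1
      · exact (hS1mem c' h').1
    rcases eq_or_ne c c' with rfl | hne
    · exact hBv_zero _ _ hcU
    · exact hBv_zero _ _ (hmem c c' hcs hc's hne)
  -- full orthogonality : X ⊥ Z
  have horthX : ∀ x ∈ X, ∀ z ∈ Z, Bv x z = 0 := by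
    intro x hx
    have hgenx : ∀ c ∈ (S0 : Set F), ∀ z ∈ Z, Bv c z = 0 := by
      intro c hc z hz
      refine Submodule.span_induction ?_ ?_ ?_ ?_ hz
      · intro z' hz'
        exact horthgen c hc z' hz'
      · simp
      · intro a bb _ _ h1 h2
        rw [map_add, h1, h2, add_zero]
      · intro k a _ h1
        rw [map_smul, h1, smul_zero]
    intro z hz
    refine Submodule.span_induction ?_ ?_ ?_ ?_ hx
    · intro c hc
      exact hgenx c hc z hz
    · simp
    · intro a bb _ _ h1 h2
      rw [map_add, LinearMap.add_apply, h1, h2, add_zero]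
    · intro k a _ h1
      rw [map_smul, LinearMap.smul_apply, h1, smul_zero]
  -- diag values on S1 are nonzero
  have hdiag : ∀ c ∈ S1, Bv c c ≠ 0 := by
    intro c hc
    obtain ⟨_, _, hcU⟩ := hS1mem c hc
    rw [hBv_apply, Submodule.mkQ_apply]
    simpa [Submodule.Quotient.mk_eq_zero] using hcU
  have hoffdiag : ∀ c ∈ S1, ∀ c' ∈ S1, c ≠ c' → Bv c c' = 0 := by
    intro c hc c' hc' hne
    exact hBv_zero _ _ (hmem c c' (hS1mem c hc).1 (hS1mem c' hc').1 hne)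
  -- S1 is linearly independent
  have hindep : LinearIndependent K ((↑) : ↥(S1 : Set F) → F) := by
    rw [Fintype.linearIndependent_iff]
    intro g hg i
    have happ := congrArg (Bv.flip (i : F)) hg
    rw [map_sum, map_zero] at happ
    rw [Finset.sum_eq_single i] at happ
    · simp only [map_smul, LinearMap.flip_apply] at happ
      rcases smul_eq_zero.mp happ with h | h
      · exact h
      · exact absurd h (hdiag _ i.2)
    · intro j _ hj
      simp only [map_smul, LinearMap.flip_apply]
      rw [hoffdiag _ j.2 _ i.2 (fun hh => hj (Subtype.ext hh)), smul_zero]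
    · intro hi
      exact absurd (Finset.mem_univ i) hi
  have hrankW1 : finrank K W1 = r := by
    rw [hW1, finrank_span_set_eq_card hindep]
    simp [hr]
  -- X ⊓ W1 = ⊥
  have hXW1 : X ⊓ W1 = ⊥ := by
    rw [eq_bot_iff]
    intro x hx
    rw [Submodule.mem_inf] at hx
    obtain ⟨hxX, hxW1⟩ := hx
    rw [Submodule.mem_bot]
    rw [hW1, Submodule.mem_span_finset] at hxW1
    obtain ⟨f, -, hf⟩ := hxW1
    have hcoef : ∀ c ∈ S1, f c = 0 := by
      intro c hc
      have hcZ : (c : F) ∈ Z := Submodule.subset_span (Set.mem_union_right _ hc)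
      have h0 : Bv x c = 0 := horthX x hxX c hcZ
      have h1 := congrArg (Bv.flip (c : F)) hf
      rw [map_sum] at h1
      rw [Finset.sum_eq_single c] at h1
      · simp only [map_smul, LinearMap.flip_apply] at h1
        rw [h0] at h1
        rcases smul_eq_zero.mp h1 with h | h
        · exact h
        · exact absurd h (hdiag _ hc)
      · intro j hj hjc
        simp only [map_smul, LinearMap.flip_apply]
        rw [hoffdiag _ hj _ hc hjc, smul_zero]
      · intro hc'
        exact absurd hc hc'
    rw [← hf]
    apply Finset.sum_eq_zero
    intro c hc
    rw [hcoef c hc, zero_smul]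
  -- rank of Z
  have hZ : Z = X ⊔ W1 := by
    rw [hZdef, Submodule.span_union, hX, hW1]
  have hrankZ : finrank K Z = t + r := by
    have h2 := Submodule.finrank_sup_add_finrank_inf_eq X W1
    rw [hXW1] at h2
    simp only [finrank_bot, add_zero] at h2
    rw [hZ, h2, hrankW1]
  -- X is inside the orthogonal complement of Z
  have horthle : X ≤ b.orthogonal Z := by
    intro x hx
    rw [LinearMap.BilinForm.mem_orthogonal_iff]
    intro z hz
    have h0 : Bv x z = 0 := horthX x hx z hz
    have hbxz : b x z = 0 := by
      have hLB : b x z = L (Bv x z) := rfl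
      rw [hLB, h0, map_zero]
    have hsym : b z x = b x z := by
      have := hb_symm.eq x z
      simpa using this.symm
    rw [hsym, hbxz]
  -- finrank inequality
  haveI : FiniteDimensional K F := Module.Finite.of_finite
  have horthtop : Z ⊓ b.orthogonal ⊤ = ⊥ := by
    rw [eq_bot_iff]
    intro x hx
    rw [Submodule.mem_inf] at hx
    obtain ⟨_, hx2⟩ := hx
    rw [Submodule.mem_bot]
    apply hb_nd.1
    intro y
    have := hx2 y Submodule.mem_top
    have hsym : b x y = b y x := by
      have := hb_symm.eq y x
      simpa using this.symm
    rw [hsym, this]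
  have hsum := LinearMap.BilinForm.finrank_add_finrank_orthogonal hb_symm.isRefl Z
  rw [show Z ⊓ LinearMap.BilinForm.orthogonal b ⊤ = ⊥ from horthtop] at hsum
  simp only [finrank_bot, add_zero] at hsum
  have ht_le : t ≤ finrank K (b.orthogonal Z) := Submodule.finrank_mono horthle
  have hineq : 2 * t + r ≤ finrank K F := by
    rw [hrankZ] at hsum
    omega
  -- counting
  refine ⟨t, r, hineq, ?_⟩
  have hsub : s ⊆ S0 ∪ S1 ∪ {0} := by
    intro c hc
    simp only [Finset.mem_union, Finset.mem_singleton, hS0, hS1, Finset.mem_filter]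
    rcases eq_or_ne c 0 with rfl | hc0
    · tauto
    · by_cases hcU : c * c ∈ U
      · tauto
      · tauto
  have hcard1 : s.card ≤ S0.card + S1.card + 1 := by
    calc s.card ≤ (S0 ∪ S1 ∪ {0}).card := Finset.card_le_card hsub
    _ ≤ (S0 ∪ S1).card + ({0} : Finset F).card := Finset.card_union_le _ _
    _ ≤ S0.card + S1.card + 1 := by
        have := Finset.card_union_le S0 S1
        simp only [Finset.card_singleton]
        omega
  have hS0card : S0.card + 1 ≤ Fintype.card K ^ t := by
    have hins : insert (0 : F) S0 ⊆ Set.toFinset (X : Set F) := by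
      intro c hc
      rw [Set.mem_toFinset]
      rcases Finset.mem_insert.mp hc with rfl | hc
      · exact X.zero_mem
      · exact Submodule.subset_span hc
    have h0 : (0 : F) ∉ S0 := by
      intro h0
      exact (hS0mem 0 h0).2.1 rfl
    have hcardins : (insert (0 : F) S0).card = S0.card + 1 := Finset.card_insert_of_notMem h0
    have hXcard : (Set.toFinset (X : Set F)).card = Fintype.card K ^ t := by
      rw [Set.toFinset_card]
      have : Fintype.card (X : Set F) = Fintype.card X := by
        apply Fintype.card_congr
        exact Equiv.refl _
      rw [this, card_eq_pow_finrank (K := K) (V := X)]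
    calc S0.card + 1 = (insert (0 : F) S0).card := hcardins.symm
    _ ≤ (Set.toFinset (X : Set F)).card := Finset.card_le_card hins
    _ = Fintype.card K ^ t := hXcard
  omega

lemma exists_clique {K F : Type*} [Field K] [Field F] [Algebra K F] [Fintype K] [Fintype F]
    (n : ℕ) (hn : 2 ≤ n) (hfr : Module.finrank K F = n) :
    ∃ U : Submodule K F, U ≠ ⊤ ∧ ∃ s : Finset F,
      (paleyGraph (U : Set F)).IsNClique
        (if Odd n then Fintype.card K ^ ((n - 1) / 2) + 1 else Fintype.card K ^ (n / 2)) s := by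
  classical
  haveI : FiniteDimensional K F := Module.Finite.of_finite
  obtain ⟨α, hα⟩ := Field.exists_primitive_element_of_finite_top K F
  have hint : IsIntegral K α := IsIntegral.of_finite K α
  have hdeg : (minpoly K α).natDegree = n := by
    have h1 := IntermediateField.adjoin.finrank hint
    rw [hα, IntermediateField.finrank_top'] at h1
    rw [← h1, hfr]
  have hLI : LinearIndependent K (fun i : Fin n => α ^ (i : ℕ)) := by
    have := linearIndependent_pow (K := K) α
    rwa [hdeg] at this
  set P : ℕ → F := fun i => α ^ i with hP
  -- image sets
  have himg : ∀ m : ℕ, m ≤ n →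
      (((Finset.range m).image P : Finset F) : Set F)
        = (fun i : Fin n => α ^ (i : ℕ)) '' {i : Fin n | (i : ℕ) < m} := by
    intro m hm
    ext x
    simp only [Finset.coe_image, Finset.coe_range, Set.mem_image, Set.mem_Iio,
      Set.mem_setOf_eq, hP]
    constructor
    · rintro ⟨i, hi, rfl⟩
      exact ⟨⟨i, lt_of_lt_of_le hi hm⟩, hi, rfl⟩
    · rintro ⟨i, hi, rfl⟩
      exact ⟨(i : ℕ), hi, rfl⟩
  have hnotmem : ∀ m : ℕ, m < n → α ^ m ∉ Submodule.span K
      (((Finset.range m).image P : Finset F) : Set F) := by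
    intro m hmn
    rw [himg m (le_of_lt hmn)]
    have := hLI.notMem_span_image (s := {i : Fin n | (i : ℕ) < m}) (x := ⟨m, hmn⟩)
      (by simp)
    simpa using this
  set U : Submodule K F := Submodule.span K (((Finset.range (n-1)).image P : Finset F) : Set F)
    with hU
  have hUne : U ≠ ⊤ := by
    intro htop
    have := hnotmem (n-1) (by omega)
    rw [← hU, htop] at this
    exact this Submodule.mem_top
  set k : ℕ := n / 2 with hk
  have hk1 : 1 ≤ k := by omega
  have h2k : 2 * k ≤ n := by omega
  set W : Submodule K F := Submodule.span K (((Finset.range k).image P : Finset F) : Set F)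
    with hW
  -- products of W lie in U
  have hWU : ∀ a ∈ W, ∀ c ∈ W, a * c ∈ U := by
    have hle : W * W ≤ U := by
      rw [hW, Submodule.span_mul_span]
      apply Submodule.span_le.mpr
      intro x hx
      rw [Set.mem_mul] at hx
      obtain ⟨a, ha, c, hc, rfl⟩ := hx
      simp only [Finset.coe_image, Finset.coe_range, Set.mem_image, Set.mem_Iio, hP] at ha hc
      obtain ⟨i, hi, rfl⟩ := ha
      obtain ⟨j, hj, rfl⟩ := hc
      apply Submodule.subset_span
      simp only [Finset.coe_image, Finset.coe_range, Set.mem_image, Set.mem_Iio, hP]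
      exact ⟨i + j, by omega, by rw [pow_add]⟩
    intro a ha c hc
    exact hle (Submodule.mul_mem_mul ha hc)
  -- cardinality of W
  have hWsubLI : LinearIndependent K ((↑) : ↥((((Finset.range k).image P : Finset F)) : Set F) → F) := by
    rw [himg k (by omega)]
    exact (hLI.linearIndepOn _).id_image
  have hPinj : ∀ i < n, ∀ j < n, P i = P j → i = j := by
    intro i hi j hj hij
    have h1 : (⟨i, hi⟩ : Fin n) = ⟨j, hj⟩ := hLI.injective (by simpa [hP] using hij)
    simpa using congrArg Fin.val h1
  have hrankW : finrank K W = k := by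
    rw [hW, finrank_span_set_eq_card hWsubLI]
    rw [Finset.toFinset_coe]
    rw [Finset.card_image_of_injOn, Finset.card_range]
    intro i hi j hj hij
    simp only [Finset.coe_range, Set.mem_Iio] at hi hj
    exact hPinj i (by omega) j (by omega) hij
  have hcardW : (Set.toFinset (W : Set F)).card = Fintype.card K ^ k := by
    rw [Set.toFinset_card]
    have h1 : Fintype.card (W : Set F) = Fintype.card W := Fintype.card_congr (Equiv.refl _)
    rw [h1, card_eq_pow_finrank (K := K) (V := W), hrankW]
  rcases Nat.even_or_odd n with he | ho
  · -- even case
    refine ⟨U, hUne, Set.toFinset (W : Set F), ?_⟩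
    rw [if_neg (by simpa using (Nat.not_odd_iff_even.mpr he))]
    constructor
    · intro a ha c hc hac
      simp only [Finset.mem_coe, Set.mem_toFinset] at ha hc
      exact (⟨hac, hWU a ha c hc⟩ : a ≠ c ∧ a * c ∈ (U : Set F))
    · rw [hcardW]
  · -- odd case
    have hkodd : (n - 1) / 2 = k := by
      have := Nat.odd_iff.mp ho
      omega
    have hαk : (α ^ k : F) ∉ W := by
      have h1 := hnotmem k (by omega)
      rw [← hW] at h1
      exact h1
    have hmul2 : ∀ c ∈ W, α ^ k * c ∈ U := by
      intro c hc
      have hle : Submodule.span K {α ^ k} * W ≤ U := by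
        rw [hW, Submodule.span_mul_span]
        apply Submodule.span_le.mpr
        intro x hx
        rw [Set.mem_mul] at hx
        obtain ⟨a, ha, cc, hcc, rfl⟩ := hx
        rw [Set.mem_singleton_iff] at ha
        subst ha
        simp only [Finset.coe_image, Finset.coe_range, Set.mem_image, Set.mem_Iio, hP] at hcc
        obtain ⟨j, hj, rfl⟩ := hcc
        apply Submodule.subset_span
        simp only [Finset.coe_image, Finset.coe_range, Set.mem_image, Set.mem_Iio, hP]
        have hodd1 := Nat.odd_iff.mp ho
        exact ⟨k + j, by omega, by rw [pow_add]⟩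
      exact hle (Submodule.mul_mem_mul (Submodule.mem_span_singleton_self _) hc)
    refine ⟨U, hUne, insert (α ^ k) (Set.toFinset (W : Set F)), ?_⟩
    rw [if_pos ho, hkodd]
    constructor
    · intro a ha c hc hac
      simp only [Finset.coe_insert, Set.mem_insert_iff, Finset.mem_coe,
        Set.mem_toFinset] at ha hc
      refine (⟨hac, ?_⟩ : a ≠ c ∧ a * c ∈ (U : Set F))
      rcases ha with rfl | ha
      · rcases hc with rfl | hc
        · exact absurd rfl hac
        · exact hmul2 c hc
      · rcases hc with rfl | hc
        · rw [mul_comm]; exact hmul2 a ha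
        · exact hWU a ha c hc
    · rw [Finset.card_insert_of_notMem (by rw [Set.mem_toFinset]; exact hαk), hcardW]

/-- for `q > 2` or `n ≥ 6`, the largest value of `ω(G_U)` over all proper
`F_q`-subspaces `U` of `F_{q^n}` equals `q^((n-1)/2) + 1` if `n` is odd and `q^(n/2)`
if `n` is even. -/
theorem omega_max_general (q n : ℕ) (hq : IsPrimePow q) (hn : 2 ≤ n)
    (h : 2 < q ∨ 6 ≤ n)
    (K F : Type*) [Field K] [Field F] [Algebra K F] [Fintype K] [Fintype F]
    (hK : Fintype.card K = q) (hF : Fintype.card F = q ^ n) :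
    (∀ U : Submodule K F, U ≠ ⊤ →
      (paleyGraph (U : Set F)).cliqueNum ≤
        if Odd n then q ^ ((n - 1) / 2) + 1 else q ^ (n / 2)) ∧
    (∃ U : Submodule K F, U ≠ ⊤ ∧
      (paleyGraph (U : Set F)).cliqueNum =
        if Odd n then q ^ ((n - 1) / 2) + 1 else q ^ (n / 2)) := by
  have hq2 : 2 ≤ q := hq.two_le
  have hfr : Module.finrank K F = n := by
    have h1 : Fintype.card F = Fintype.card K ^ Module.finrank K F :=
      card_eq_pow_finrank (K := K) (V := F)
    rw [hK, hF] at h1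
    exact Nat.pow_right_injective hq2 h1.symm
  have hupper : ∀ U : Submodule K F, U ≠ ⊤ →
      (paleyGraph (U : Set F)).cliqueNum ≤
        if Odd n then q ^ ((n - 1) / 2) + 1 else q ^ (n / 2) := by
    intro U hU
    obtain ⟨s, hsN⟩ := SimpleGraph.exists_isNClique_cliqueNum (G := paleyGraph (U : Set F))
    obtain ⟨t, r, htr, hcard⟩ := clique_card_bound U hU s hsN.isClique
    rw [hfr] at htr
    rw [hK] at hcard
    calc (paleyGraph (U : Set F)).cliqueNum = s.card := hsN.card_eq.symm
    _ ≤ q ^ t + r := hcard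
    _ ≤ _ := numeric_bound q n t r hq2 hn h htr
  refine ⟨hupper, ?_⟩
  obtain ⟨U, hUne, s, hclique⟩ := exists_clique n hn hfr
  rw [hK] at hclique
  refine ⟨U, hUne, le_antisymm (hupper U hUne) ?_⟩
  have h1 := hclique.isClique.card_le_cliqueNum
  rwa [hclique.card_eq] at h1
end

section
/- Let q be a prime power, n ≥ 2, and let U ⊊ F_{q^n} be an F_q-linear subspace of dimension d_U ≥ 1. If U contains no nonzero square of F_{q^n} (i.e., there is no b ∈ F_{q^n} with b ≠ 0 and b² ∈ U), then ω(G_U) ≤ d_U + 2. -/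
/-- if the proper `F_q`-subspace `U ⊊ F_{q^n}` of dimension `d_U ≥ 1` contains
no nonzero square of `F_{q^n}`, then `ω(G_U) ≤ d_U + 2`. -/
theorem omega_le_of_no_nonzero_square (q n : ℕ) (hq : IsPrimePow q) (hn : 2 ≤ n)
    (K F : Type*) [Field K] [Field F] [Algebra K F] [Fintype K] [Fintype F]
    (hK : Fintype.card K = q) (hF : Fintype.card F = q ^ n)
    (U : Submodule K F) (hU : U ≠ ⊤) (hd : 1 ≤ Module.finrank K U)
    (hsq : ∀ b : F, b ≠ 0 → b ^ 2 ∉ U) :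
    (paleyGraph (U : Set F)).cliqueNum ≤ Module.finrank K U + 2 := by
  classical
  obtain ⟨s, hs⟩ := (paleyGraph (U : Set F)).exists_isNClique_cliqueNum
  rw [← hs.card_eq]
  by_cases h0 : (s.erase 0).Nonempty
  · obtain ⟨a, ha⟩ := h0
    set t : Finset F := (s.erase 0).erase a with ht
    have ha0 : a ≠ 0 := Finset.ne_of_mem_erase ha
    have has : a ∈ s := Finset.mem_of_mem_erase ha
    have htsub : ∀ i ∈ t, i ∈ s ∧ i ≠ 0 ∧ i ≠ a := by
      intro i hi
      exact ⟨Finset.mem_of_mem_erase (Finset.mem_of_mem_erase hi),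
        Finset.ne_of_mem_erase (Finset.mem_of_mem_erase hi), Finset.ne_of_mem_erase hi⟩
    have hadj : ∀ x ∈ s, ∀ y ∈ s, x ≠ y → x * y ∈ U := by
      intro x hx y hy hxy
      exact (hs.isClique hx hy hxy).2
    have hmem : ∀ i ∈ t, a * i ∈ U := by
      intro i hi
      exact hadj a has i (htsub i hi).1 (Ne.symm (htsub i hi).2.2)
    -- the family i ↦ a * i, valued in U, is linearly independent
    have li : LinearIndependent K (fun i : t => (⟨a * (i : F), hmem i i.2⟩ : U)) := by
      rw [Fintype.linearIndependent_iff]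
      intro g hg j
      have hg' : (∑ i : t, g i • (a * (i : F))) = 0 := by
        have := congrArg (Subtype.val : U → F) hg
        simpa using this
      have hsum : (∑ i : t, g i • (i : F)) = 0 := by
        have : a * (∑ i : t, g i • (i : F)) = 0 := by
          rw [Finset.mul_sum]
          rw [← hg']
          exact Finset.sum_congr rfl fun i _ => (mul_smul_comm _ _ _)
        rcases mul_eq_zero.mp this with h | h
        · exact absurd h ha0
        · exact h
      by_contra hgj
      -- multiply the relation by j and isolate the j-term
      have hmul : (∑ i : t, g i • ((i : F) * (j : F))) = 0 := by
        have : (∑ i : t, g i • (i : F)) * (j : F) = 0 := by rw [hsum, zero_mul]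
        rw [← this, Finset.sum_mul]
        exact Finset.sum_congr rfl fun i _ => (smul_mul_assoc _ _ _).symm
      have hsplit : g j • ((j : F) * (j : F))
          + ∑ i ∈ Finset.univ.erase j, g i • ((i : F) * (j : F)) = 0 := by
        rw [Finset.add_sum_erase Finset.univ (fun i : t => g i • ((i : F) * (j : F)))
          (Finset.mem_univ j)]
        exact hmul
      have hrest : (∑ i ∈ Finset.univ.erase j, g i • ((i : F) * (j : F))) ∈ U := by
        refine Submodule.sum_mem U ?_
        intro i hi
        refine Submodule.smul_mem U _ ?_
        have hij : (i : F) ≠ (j : F) := by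
          intro h
          exact (Finset.ne_of_mem_erase hi) (Subtype.ext h)
        exact hadj i (htsub i i.2).1 j (htsub j j.2).1 hij
      have hjj : g j • ((j : F) * (j : F)) ∈ U := by
        have : g j • ((j : F) * (j : F))
            = -(∑ i ∈ Finset.univ.erase j, g i • ((i : F) * (j : F))) :=
          eq_neg_of_add_eq_zero_left hsplit
        rw [this]
        exact Submodule.neg_mem U hrest
      have hsq' : ((j : F) * (j : F)) ∈ U := by
        have := Submodule.smul_mem U (g j)⁻¹ hjj
        rwa [inv_smul_smul₀ hgj] at this
      exact hsq (j : F) (htsub j j.2).2.1 (by rwa [sq])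
      -- done
    have hcard : t.card ≤ Module.finrank K U := by
      have := li.fintype_card_le_finrank
      simpa [Fintype.card_coe] using this
    have hsub : s ⊆ insert 0 (insert a t) := by
      intro x hx
      by_cases hx0 : x = 0
      · simp [hx0]
      · by_cases hxa : x = a
        · simp [hxa]
        · exact Finset.mem_insert_of_mem (Finset.mem_insert_of_mem
            (Finset.mem_erase.mpr ⟨hxa, Finset.mem_erase.mpr ⟨hx0, hx⟩⟩))
    calc s.card ≤ (insert 0 (insert a t)).card := Finset.card_le_card hsub
      _ ≤ (insert a t).card + 1 := Finset.card_insert_le _ _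
      _ ≤ t.card + 1 + 1 := by
          exact Nat.add_le_add_right (Finset.card_insert_le _ _) 1
      _ ≤ Module.finrank K U + 2 := by omega
  · have : s ⊆ {0} := by
      intro x hx
      by_contra hx0
      exact h0 ⟨x, Finset.mem_erase.mpr ⟨by simpa using hx0, hx⟩⟩
    have := Finset.card_le_card this
    simp at this
    omega
end

section
/- Let q be a prime power, n ≥ 2, and let U ⊊ F_{q^n} be an F_q-linear subspace of dimension d_U ≥ 1 with ω(G_U) > d_U + 2. Let D_U be the greatest divisor d of n with 1 ≤ d ≤ d_U such that a²·F_{q^d} ⊆ U for some a ∈ F_{q^n}, a ≠ 0, where F_{q^d} denotes the subfield of F_{q^n} with q^d elements (such a d exists, namely d = 1). Then ω(G_U) = q^t + r for some integers t, r ≥ 0 with r + t ≤ d_U and 1 ≤ t ≤ κ_U := max{D_U, (7/8)·d_U + 7/(32·log₂ q)}. In particular, q^{D_U} ≤ ω(G_U) ≤ q^{κ_U} + d_U. -/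
open Module

section Aux
variable {K F : Type*} [Field K] [Field F] [Algebra K F]

noncomputable def mulLeftEquiv (a : F) (ha : a ≠ 0) : F ≃ₗ[K] F :=
  LinearEquiv.ofLinear (LinearMap.mulLeft K a) (LinearMap.mulLeft K a⁻¹)
    (by ext x; simp [LinearMap.mulLeft_apply]; field_simp)
    (by ext x; simp [LinearMap.mulLeft_apply]; field_simp)

lemma finrank_map_mulLeft (a : F) (ha : a ≠ 0) (W : Submodule K F) :
    finrank K (W.map (LinearMap.mulLeft K a)) = finrank K W := by
  have : (LinearMap.mulLeft K a) = ((mulLeftEquiv (K := K) a ha : F ≃ₗ[K] F) : F →ₗ[K] F) := rfl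
  rw [this]
  exact LinearEquiv.finrank_map_eq _ _

lemma mem_map_mulLeft {a : F} {W : Submodule K F} {x : F} :
    x ∈ W.map (LinearMap.mulLeft K a) ↔ ∃ u ∈ W, a * u = x := by
  simp [Submodule.mem_map, LinearMap.mulLeft_apply]

lemma finrank_add_le_inf [FiniteDimensional K F] (A B C : Submodule K F) (hA : A ≤ C) (hB : B ≤ C) :
    finrank K A + finrank K B ≤ finrank K (A ⊓ B : Submodule K F) + finrank K C := by
  have h1 := Submodule.finrank_sup_add_finrank_inf_eq A B
  have h2 : finrank K (A ⊔ B : Submodule K F) ≤ finrank K C :=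
    Submodule.finrank_mono (sup_le hA hB)
  omega

lemma exists_ne_zero_of_finrank_pos {W : Submodule K F} (h : 1 ≤ finrank K W) :
    ∃ x, x ∈ W ∧ x ≠ 0 := by
  have hW : W ≠ ⊥ := by
    intro hb
    rw [hb, finrank_bot] at h
    omega
  exact Submodule.exists_mem_ne_zero_of_ne_bot hW

end Aux

section Aux2
variable {K F : Type*} [Field K] [Field F] [Algebra K F] [Fintype K] [Fintype F]

lemma card_submodule_toFinset (P : Submodule K F) :
    (P : Set F).toFinite.toFinset.card = Fintype.card K ^ finrank K P := by
  classical
  haveI : Fintype ↥(P : Set F) := Fintype.ofFinite _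
  rw [Set.Finite.card_toFinset]
  rw [Fintype.card_congr' (α := ↥(P : Set F)) (β := ↥P) rfl]
  exact card_eq_pow_finrank

lemma card_frobFixed_ge (q d n : ℕ) (hq2 : 2 ≤ q) (hd1 : 1 ≤ d) (hdn : d ∣ n)
    (hF : Fintype.card F = q ^ n) :
    q ^ d ≤ ({x : F | x ^ q ^ d = x}).toFinite.toFinset.card := by
  classical
  have hq1d : 1 ≤ q ^ d := Nat.one_le_pow _ _ (by omega)
  have hq1n : 1 ≤ q ^ n := Nat.one_le_pow _ _ (by omega)
  obtain ⟨c, rfl⟩ := hdn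
  have hdvd : q ^ d - 1 ∣ q ^ (d * c) - 1 := by
    have := Nat.sub_dvd_pow_sub_pow (q ^ d) 1 c
    simpa [← pow_mul] using this
  have hcardu : Fintype.card Fˣ = q ^ (d * c) - 1 := by
    rw [Fintype.card_units, hF]
  obtain ⟨g, hg⟩ := IsCyclic.exists_generator (α := Fˣ)
  have hgord : orderOf g = q ^ (d * c) - 1 := by
    rw [orderOf_eq_card_of_forall_mem_zpowers hg, Nat.card_eq_fintype_card, hcardu]
  have hgord0 : orderOf g ≠ 0 := by
    rw [hgord, ← hcardu]
    exact Fintype.card_ne_zero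
  set u := g ^ (orderOf g / (q ^ d - 1)) with hu
  have hord : orderOf u = q ^ d - 1 := by
    apply orderOf_pow_orderOf_div hgord0
    rw [hgord]; exact hdvd
  have hsol : ∀ y : ↥(Subgroup.zpowers u), ((y : Fˣ) : F) ^ q ^ d = ((y : Fˣ) : F) := by
    intro y
    have h1 : y ^ Fintype.card ↥(Subgroup.zpowers u) = 1 := pow_card_eq_one
    have h2 : Fintype.card ↥(Subgroup.zpowers u) = q ^ d - 1 := by
      rw [Fintype.card_zpowers, hord]
    rw [h2] at h1
    have h3 : ((y : Fˣ) : F) ^ (q ^ d - 1) = 1 := by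
      have := congrArg (fun z : ↥(Subgroup.zpowers u) => ((z : Fˣ) : F)) h1
      simpa using this
    calc ((y : Fˣ) : F) ^ q ^ d = ((y : Fˣ) : F) ^ (q ^ d - 1) * ((y : Fˣ) : F) := by
          rw [← pow_succ]
          congr 1
          omega
    _ = ((y : Fˣ) : F) := by rw [h3, one_mul]
  haveI : Fintype ↥({x : F | x ^ q ^ d = x}) := Fintype.ofFinite _
  set S := ({x : F | x ^ q ^ d = x}) with hS
  let φ : Option ↥(Subgroup.zpowers u) → ↥S := fun o =>
    match o with
    | none => ⟨0, by
        have hqd0 : q ^ d ≠ 0 := by omega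
        show (0 : F) ^ q ^ d = 0
        exact zero_pow hqd0⟩
    | some y => ⟨((y : Fˣ) : F), hsol y⟩
  have hinj : Function.Injective φ := by
    intro a b hab
    match a, b with
    | none, none => rfl
    | none, some y =>
      exfalso
      have : ((y : Fˣ) : F) = 0 := by
        have := congrArg Subtype.val hab
        simpa [φ] using this.symm
      exact Units.ne_zero _ this
    | some y, none =>
      exfalso
      have : ((y : Fˣ) : F) = 0 := by
        have := congrArg Subtype.val hab
        simpa [φ] using this
      exact Units.ne_zero _ this
    | some y, some z =>
      have := congrArg Subtype.val hab
      simp only [φ] at this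
      congr 1
      exact Subtype.ext (Units.ext this)
  have hcard := Fintype.card_le_of_injective φ hinj
  have hcardOpt : Fintype.card (Option ↥(Subgroup.zpowers u)) = q ^ d := by
    rw [Fintype.card_option, Fintype.card_zpowers, hord]
    omega
  rw [Set.Finite.card_toFinset]
  rw [Fintype.card_congr' (α := ↥S) (β := ↥S) rfl]
  omega

lemma card_frobFixed_le (Q : ℕ) (hQ : 2 ≤ Q) :
    ({x : F | x ^ Q = x}).toFinite.toFinset.card ≤ Q := by
  classical
  have hsub : ({x : F | x ^ Q = x}).toFinite.toFinset ⊆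
      insert (0 : F) (Polynomial.nthRoots (Q - 1) (1 : F)).toFinset := by
    intro x hx
    rw [Set.Finite.mem_toFinset] at hx
    rcases eq_or_ne x 0 with rfl | hx0
    · exact Finset.mem_insert_self _ _
    · apply Finset.mem_insert_of_mem
      rw [Multiset.mem_toFinset, Polynomial.mem_nthRoots (by omega : 0 < Q - 1)]
      have h : x ^ (Q - 1) * x = 1 * x := by
        rw [← pow_succ, (show Q - 1 + 1 = Q by omega), one_mul]
        exact hx
      exact mul_right_cancel₀ hx0 h
  calc ({x : F | x ^ Q = x}).toFinite.toFinset.card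
      ≤ (insert (0 : F) (Polynomial.nthRoots (Q - 1) (1 : F)).toFinset).card :=
        Finset.card_le_card hsub
    _ ≤ (Polynomial.nthRoots (Q - 1) (1 : F)).toFinset.card + 1 := Finset.card_insert_le _ _
    _ ≤ (Q - 1) + 1 := by
        have h1 := Multiset.toFinset_card_le (Polynomial.nthRoots (Q - 1) (1 : F))
        have h2 := Polynomial.card_nthRoots (Q - 1) (1 : F)
        omega
    _ = Q := by omega

end Aux2

lemma arith_counting {q s u k h : ℕ} (hq : 2 ≤ q) (hs2 : 2 ≤ s) (hsu : s ≤ u)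
    (hu2s : u + 2 ≤ 2 * s) (hk : k + u = 2 * s) (huh : u ≤ h)
    (hcnt : (q ^ h - 1) * (q ^ k - 1) ≤ (q ^ s - 1) ^ 2) : h = u := by
  by_contra hne
  have hh : u + 1 ≤ h := by omega
  have h1 : (q ^ (u + 1) - 1) * (q ^ k - 1) ≤ (q ^ s - 1) ^ 2 :=
    le_trans (Nat.mul_le_mul_right _
      (Nat.sub_le_sub_right (Nat.pow_le_pow_right (by omega) hh) 1)) hcnt
  have e1 : 1 ≤ q ^ (u + 1) := Nat.one_le_pow _ _ (by omega)
  have e2 : 1 ≤ q ^ k := Nat.one_le_pow _ _ (by omega)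
  have e3 : 1 ≤ q ^ s := Nat.one_le_pow _ _ (by omega)
  zify [e1, e2, e3] at h1
  set X : ℤ := (q : ℤ) with hXdef
  have hX : 2 ≤ X := by rw [hXdef]; exact_mod_cast hq
  have p1 : X ^ (u + 1) * X ^ k = X ^ (2 * s + 1) := by rw [← pow_add]; congr 1; omega
  have p2 : X ^ s * X ^ s = X ^ (2 * s) := by rw [← pow_add]; congr 1; omega
  have key : X ^ (2 * s + 1) + 2 * X ^ s ≤ X ^ (2 * s) + X ^ (u + 1) + X ^ k := by
    nlinarith [h1, p1, p2]
  have b1 : X ^ (u + 1) ≤ X ^ (2 * s - 1) := pow_le_pow_right₀ (by omega) (by omega)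
  have b2 : X ^ k ≤ X ^ (2 * s - 1) := pow_le_pow_right₀ (by omega) (by omega)
  have hpos : (0 : ℤ) < X ^ (2 * s - 1) := by positivity
  have hpos2 : (0 : ℤ) < X ^ (2 * s) := by positivity
  have hposs : (0 : ℤ) < X ^ s := by positivity
  have b3 : X ^ (2 * s - 1) * X = X ^ (2 * s) := by rw [← pow_succ]; congr 1; omega
  have b4 : X ^ (2 * s) * X = X ^ (2 * s + 1) := by rw [← pow_succ]
  have c2 : 2 * X ^ (2 * s - 1) ≤ X ^ (2 * s) := by nlinarith
  have c3 : 2 * X ^ (2 * s) ≤ X ^ (2 * s + 1) := by nlinarith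
  linarith

lemma ratioField {K F : Type*} [Field K] [Field F] [Algebra K F] [FiniteDimensional K F]
    (W : Submodule K F) (w₀ : F) (hw₀W : w₀ ∈ W) (hw₀0 : w₀ ≠ 0)
    (s u' : ℕ) (hsW : Module.finrank K W = s) (h3s : 2 * u' + 1 ≤ 3 * s)
    (hdim : ∀ x : F, x ≠ 0 → (∃ w, w ∈ W ∧ w ≠ 0 ∧ x * w ∈ W) →
      2 * s ≤ Module.finrank K (W ⊓ W.map (LinearMap.mulLeft K x) : Submodule K F) + u') :
    ∃ H : IntermediateField K F, (H : Set F) = {x : F | ∃ w, w ∈ W ∧ w ≠ 0 ∧ x * w ∈ W} := by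
  set Hcar : Set F := {x : F | ∃ w, w ∈ W ∧ w ≠ 0 ∧ x * w ∈ W} with hHcar
  have h0H : (0 : F) ∈ Hcar := ⟨w₀, hw₀W, hw₀0, by rw [zero_mul]; exact W.zero_mem⟩
  have hmemH : ∀ x ∈ Hcar, x ≠ 0 →
      2 * s ≤ Module.finrank K (W ⊓ W.map (LinearMap.mulLeft K x) : Submodule K F) + u' :=
    fun x hx hx0 => hdim x hx0 hx
  have hinvH : ∀ x ∈ Hcar, x⁻¹ ∈ Hcar := by
    intro x hx
    rcases eq_or_ne x 0 with rfl | hx0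
    · rw [inv_zero]; exact h0H
    · obtain ⟨w, hwW, hw0, hxwW⟩ := hx
      refine ⟨x * w, hxwW, mul_ne_zero hx0 hw0, ?_⟩
      rw [show x⁻¹ * (x * w) = w by field_simp]
      exact hwW
  have hmulH : ∀ x ∈ Hcar, ∀ y ∈ Hcar, x * y ∈ Hcar := by
    intro x hx y hy
    rcases eq_or_ne x 0 with rfl | hx0
    · rw [zero_mul]; exact h0H
    rcases eq_or_ne y 0 with rfl | hy0
    · rw [mul_zero]; exact h0H
    set A₁ : Submodule K F := W ⊓ W.map (LinearMap.mulLeft K x) with hA₁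
    set A₂ : Submodule K F :=
      (W ⊓ W.map (LinearMap.mulLeft K y)).map (LinearMap.mulLeft K x) with hA₂
    have hd₁ : 2 * s ≤ Module.finrank K A₁ + u' := hmemH x hx hx0
    have hd₂ : 2 * s ≤ Module.finrank K A₂ + u' := by
      rw [hA₂, finrank_map_mulLeft (K := K) x hx0]
      exact hmemH y hy hy0
    have hsub₁ : A₁ ≤ W.map (LinearMap.mulLeft K x) := inf_le_right
    have hsub₂ : A₂ ≤ W.map (LinearMap.mulLeft K x) := by
      rw [hA₂]
      exact Submodule.map_mono inf_le_left
    have hfr := finrank_add_le_inf A₁ A₂ _ hsub₁ hsub₂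
    rw [finrank_map_mulLeft (K := K) x hx0 W, hsW] at hfr
    have hpos : 1 ≤ Module.finrank K (A₁ ⊓ A₂ : Submodule K F) := by omega
    obtain ⟨z, hz, hz0⟩ := exists_ne_zero_of_finrank_pos hpos
    obtain ⟨hz₁, hz₂⟩ := Submodule.mem_inf.1 hz
    have hzW : z ∈ W := (Submodule.mem_inf.1 hz₁).1
    rw [hA₂, mem_map_mulLeft] at hz₂
    obtain ⟨u₂, hu₂, hxu₂⟩ := hz₂
    obtain ⟨hu₂W, hu₂y⟩ := Submodule.mem_inf.1 hu₂
    rw [mem_map_mulLeft] at hu₂y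
    obtain ⟨u₃, hu₃, hyu₃⟩ := hu₂y
    have hu₃0 : u₃ ≠ 0 := by
      intro h
      apply hz0
      rw [← hxu₂, ← hyu₃, h, mul_zero, mul_zero]
    refine ⟨u₃, hu₃, hu₃0, ?_⟩
    rw [show x * y * u₃ = x * (y * u₃) by ring, hyu₃, hxu₂]
    exact hzW
  have haddH : ∀ x ∈ Hcar, ∀ y ∈ Hcar, x + y ∈ Hcar := by
    intro x hx y hy
    rcases eq_or_ne x 0 with rfl | hx0
    · rw [zero_add]; exact hy
    rcases eq_or_ne y 0 with rfl | hy0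
    · rw [add_zero]; exact hx
    have hx' := hinvH x hx
    have hy' := hinvH y hy
    set A₁ : Submodule K F := W ⊓ W.map (LinearMap.mulLeft K x⁻¹) with hA₁
    set A₂ : Submodule K F := W ⊓ W.map (LinearMap.mulLeft K y⁻¹) with hA₂
    have hd₁ : 2 * s ≤ Module.finrank K A₁ + u' := hmemH x⁻¹ hx' (inv_ne_zero hx0)
    have hd₂ : 2 * s ≤ Module.finrank K A₂ + u' := hmemH y⁻¹ hy' (inv_ne_zero hy0)
    have hfr := finrank_add_le_inf A₁ A₂ W inf_le_left inf_le_left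
    rw [hsW] at hfr
    have hpos : 1 ≤ Module.finrank K (A₁ ⊓ A₂ : Submodule K F) := by omega
    obtain ⟨z, hz, hz0⟩ := exists_ne_zero_of_finrank_pos hpos
    obtain ⟨hz₁, hz₂⟩ := Submodule.mem_inf.1 hz
    have hzW : z ∈ W := (Submodule.mem_inf.1 hz₁).1
    have hxz : x * z ∈ W := by
      have h6 := (Submodule.mem_inf.1 hz₁).2
      rw [mem_map_mulLeft] at h6
      obtain ⟨u₁, hu₁, he₁⟩ := h6
      rw [show x * z = u₁ by rw [← he₁]; field_simp]
      exact hu₁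
    have hyz : y * z ∈ W := by
      have h6 := (Submodule.mem_inf.1 hz₂).2
      rw [mem_map_mulLeft] at h6
      obtain ⟨u₁, hu₁, he₁⟩ := h6
      rw [show y * z = u₁ by rw [← he₁]; field_simp]
      exact hu₁
    refine ⟨z, hzW, hz0, ?_⟩
    rw [add_mul]
    exact W.add_mem hxz hyz
  have halgH : ∀ c : K, algebraMap K F c ∈ Hcar := by
    intro c
    refine ⟨w₀, hw₀W, hw₀0, ?_⟩
    rw [← Algebra.smul_def]
    exact W.smul_mem c hw₀W
  refine ⟨{ carrier := Hcar
            mul_mem' := fun {a b} ha hb => hmulH a ha b hb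
            add_mem' := fun {a b} ha hb => haddH a ha b hb
            algebraMap_mem' := halgH
            inv_mem' := hinvH
            one_mem' := ⟨w₀, hw₀W, hw₀0, by rw [one_mul]; exact hw₀W⟩
            zero_mem' := h0H }, rfl⟩



set_option maxHeartbeats 1600000 in
/-- if `ω(G_U) > d_U + 2` and `D_U` is the greatest divisor `d` of `n` with
`1 ≤ d ≤ d_U` such that `a² · F_{q^d} ⊆ U` for some `a ≠ 0` (the subfield `F_{q^d}` being
`{x | x^(q^d) = x}`), then `ω(G_U) = q^t + r` with `r + t ≤ d_U` and
`1 ≤ t ≤ κ_U = max {D_U, (7/8)d_U + 7/(32 log₂ q)}`; in particular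
`q^{D_U} ≤ ω(G_U) ≤ q^{κ_U} + d_U`. -/
theorem omega_bounds_of_large (q n : ℕ) (hq : IsPrimePow q) (hn : 2 ≤ n)
    (K F : Type*) [Field K] [Field F] [Algebra K F] [Fintype K] [Fintype F]
    (hK : Fintype.card K = q) (hF : Fintype.card F = q ^ n)
    (U : Submodule K F) (hU : U ≠ ⊤) (hd : 1 ≤ Module.finrank K U)
    (hbig : Module.finrank K U + 2 < (paleyGraph (U : Set F)).cliqueNum)
    (D : ℕ)
    (hD : IsGreatest {d : ℕ | d ∣ n ∧ 1 ≤ d ∧ d ≤ Module.finrank K U ∧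
      ∃ a : F, a ≠ 0 ∧ ∀ x : F, x ^ q ^ d = x → a ^ 2 * x ∈ U} D) :
    ∃ t r : ℕ,
      (paleyGraph (U : Set F)).cliqueNum = q ^ t + r ∧
      r + t ≤ Module.finrank K U ∧
      1 ≤ t ∧
      (t : ℝ) ≤ max (D : ℝ)
        (7 / 8 * (Module.finrank K U : ℝ) + 7 / (32 * Real.logb 2 q)) ∧
      q ^ D ≤ (paleyGraph (U : Set F)).cliqueNum ∧
      ((paleyGraph (U : Set F)).cliqueNum : ℝ) ≤
        (q : ℝ) ^ (max (D : ℝ)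
          (7 / 8 * (Module.finrank K U : ℝ) + 7 / (32 * Real.logb 2 q)))
        + Module.finrank K U := by
  classical
  haveI : FiniteDimensional K F := Module.Finite.of_finite
  have hq2 : 2 ≤ q := hq.two_le
  set dU := Module.finrank K U with hdU
  -- the maximum clique
  obtain ⟨Cs, hCs⟩ := (paleyGraph (U : Set F)).exists_isNClique_cliqueNum
  have hcard : Cs.card = (paleyGraph (U : Set F)).cliqueNum := hCs.2
  have hadj : ∀ a ∈ Cs, ∀ b ∈ Cs, a ≠ b → a * b ∈ U := by
    intro a ha b hb hne
    exact (show a ≠ b ∧ a * b ∈ (U : Set F) from hCs.1 (Finset.mem_coe.2 ha) (Finset.mem_coe.2 hb) hne).2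
  have hmax : ∀ S : Finset F, (∀ a ∈ S, ∀ b ∈ S, a ≠ b → a * b ∈ U) → S.card ≤ Cs.card := by
    intro S hS
    rw [hcard]
    have hc : (paleyGraph (U : Set F)).IsClique ↑S := by
      intro a ha b hb hne
      exact show a ≠ b ∧ a * b ∈ (U : Set F) from ⟨hne, hS a (Finset.mem_coe.1 ha) b (Finset.mem_coe.1 hb) hne⟩
    exact @SimpleGraph.IsClique.card_le_cliqueNum _ _ _ S hc
  have hbig' : dU + 2 < Cs.card := by rw [hcard]; exact hbig
  -- 0 is in the clique
  have h0C : (0 : F) ∈ Cs := by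
    by_contra h0
    have hcl : ∀ a ∈ insert (0:F) Cs, ∀ b ∈ insert (0:F) Cs, a ≠ b → a * b ∈ U := by
      intro a ha b hb hne
      rcases Finset.mem_insert.1 ha with rfl | ha'
      · rw [zero_mul]; exact U.zero_mem
      · rcases Finset.mem_insert.1 hb with rfl | hb'
        · rw [mul_zero]; exact U.zero_mem
        · exact hadj a ha' b hb' hne
    have := hmax _ hcl
    rw [Finset.card_insert_of_notMem h0] at this
    omega
  -- the span of the clique and the subspace part W
  set V : Submodule K F := Submodule.span K (Cs : Set F) with hV
  set W : Submodule K F := V ⊓ ⨅ c ∈ Cs, U.comap (LinearMap.mulRight K c) with hW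
  have hmemW : ∀ x : F, x ∈ W ↔ x ∈ V ∧ ∀ c ∈ Cs, x * c ∈ U := by
    intro x
    simp [hW, Submodule.mem_inf, Submodule.mem_iInf, LinearMap.mulRight_apply]
  have hWleV : W ≤ V := inf_le_left
  have hWmulV : ∀ w ∈ W, ∀ x ∈ V, w * x ∈ U := by
    intro w hw x hx
    have hle : V ≤ U.comap (LinearMap.mulLeft K w) := by
      rw [hV, Submodule.span_le]
      intro c hc
      simp only [Submodule.mem_comap, LinearMap.mulLeft_apply, SetLike.mem_coe]
      exact ((hmemW w).1 hw).2 c hc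
    simpa using hle hx
  have hWfinite : (W : Set F).Finite := (W : Set F).toFinite
  set Wfin : Finset F := hWfinite.toFinset with hWfin
  -- W is contained in the clique
  have hWC : ∀ x ∈ W, x ∈ Cs := by
    have hclq : ∀ a ∈ Cs ∪ Wfin, ∀ b ∈ Cs ∪ Wfin, a ≠ b → a * b ∈ U := by
      intro a ha b hb hne
      rcases Finset.mem_union.1 ha with ha' | ha' <;> rcases Finset.mem_union.1 hb with hb' | hb'
      · exact hadj a ha' b hb' hne
      · rw [mul_comm]
        exact hWmulV b (hWfinite.mem_toFinset.1 hb') a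
          (Submodule.subset_span (Finset.mem_coe.2 ha'))
      · exact hWmulV a (hWfinite.mem_toFinset.1 ha') b
          (Submodule.subset_span (Finset.mem_coe.2 hb'))
      · exact hWmulV a (hWfinite.mem_toFinset.1 ha') b (hWleV (hWfinite.mem_toFinset.1 hb'))
    have hun := hmax _ hclq
    have heq : Cs = Cs ∪ Wfin :=
      Finset.eq_of_subset_of_card_le Finset.subset_union_left hun
    intro x hx
    have hx' : x ∈ Cs ∪ Wfin := Finset.mem_union_right _ (hWfinite.mem_toFinset.2 hx)
    rw [← heq] at hx'
    exact hx'
  -- membership in W for clique elements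
  have hWiff : ∀ c ∈ Cs, (c ∈ W ↔ c * c ∈ U) := by
    intro c hc
    constructor
    · intro hcW
      exact hWmulV c hcW c (Submodule.subset_span (Finset.mem_coe.2 hc))
    · intro hcc
      rw [hmemW]
      refine ⟨Submodule.subset_span (Finset.mem_coe.2 hc), ?_⟩
      intro c' hc'
      by_cases h : c = c'
      · rw [← h]; exact hcc
      · exact hadj c hc c' hc' h
  set R : Finset F := Cs.filter (fun c => c ∉ W) with hR
  set s := finrank K W with hs
  set r := R.card with hr
  set v := finrank K V with hv
  have hcardWfin : Wfin.card = q ^ s := by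
    rw [hWfin]
    rw [show (hWfinite.toFinset) = (W : Set F).toFinite.toFinset from rfl]
    rw [card_submodule_toFinset W, hK]
  -- cardinality decomposition
  have hmqsr : Cs.card = q ^ s + r := by
    have hsplit := Finset.card_filter_add_card_filter_not
      (s := Cs) (p := fun c => c ∈ W)
    have hfeq : Cs.filter (fun c => c ∈ W) = Wfin := by
      ext x
      rw [Finset.mem_filter, hWfin, hWfinite.mem_toFinset]
      exact ⟨fun h => h.2, fun h => ⟨hWC x h, h⟩⟩
    rw [← hsplit, hfeq, hcardWfin]
  -- linear independence of R modulo W, giving r + s ≤ v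
  have hrsv : r + s ≤ v := by
    have hfam : LinearIndependent K (fun c : {x // x ∈ R} => W.mkQ (c : F)) := by
      apply Fintype.linearIndependent_iff.2
      intro g hg i₀
      by_contra hgi
      set wsum : F := ∑ i : {x // x ∈ R}, g i • (i : F) with hwsum
      have hsumW : wsum ∈ W := by
        have h1 : W.mkQ wsum = 0 := by
          rw [hwsum, map_sum]
          simp only [map_smul]
          exact hg
        rwa [Submodule.mkQ_apply, Submodule.Quotient.mk_eq_zero] at h1
      set c₀ : F := (i₀ : F) with hc₀
      have hc₀R : c₀ ∈ R := i₀.2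
      have hc₀Cs : c₀ ∈ Cs := (Finset.mem_filter.1 hc₀R).1
      have hc₀nW : c₀ ∉ W := (Finset.mem_filter.1 hc₀R).2
      have hprod : wsum * c₀ ∈ U :=
        hWmulV _ hsumW c₀ (Submodule.subset_span (Finset.mem_coe.2 hc₀Cs))
      have hexp : wsum * c₀ = ∑ i : {x // x ∈ R}, g i • ((i : F) * c₀) := by
        rw [hwsum, Finset.sum_mul]
        exact Finset.sum_congr rfl (fun i _ => smul_mul_assoc (g i) (i : F) c₀)
      have hrest : ∀ i ∈ Finset.univ.erase i₀, g i • ((i : F) * c₀) ∈ U := by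
        intro i hi
        have hiCs : (i : F) ∈ Cs := (Finset.mem_filter.1 i.2).1
        have hne : (i : F) ≠ c₀ := by
          intro h
          exact (Finset.mem_erase.1 hi).1 (Subtype.ext h)
        exact U.smul_mem _ (hadj _ hiCs _ hc₀Cs hne)
      have hsum_rest : (∑ i ∈ Finset.univ.erase i₀, g i • ((i : F) * c₀)) ∈ U :=
        U.sum_mem hrest
      have hsplit : wsum * c₀ =
          (∑ i ∈ Finset.univ.erase i₀, g i • ((i : F) * c₀)) + g i₀ • (c₀ * c₀) := by
        rw [hexp, ← Finset.sum_erase_add _ _ (Finset.mem_univ i₀)]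
      have hlast : g i₀ • (c₀ * c₀) ∈ U := by
        have h2 := U.sub_mem hprod hsum_rest
        rwa [hsplit, add_sub_cancel_left] at h2
      have hcc : c₀ * c₀ ∈ U := by
        have h3 := U.smul_mem (g i₀)⁻¹ hlast
        rwa [inv_smul_smul₀ hgi] at h3
      exact hc₀nW ((hWiff c₀ hc₀Cs).2 hcc)
    have hrle : r ≤ finrank K (V.map W.mkQ) := by
      have hspan := finrank_span_eq_card hfam
      have hle : Submodule.span K (Set.range (fun c : {x // x ∈ R} => W.mkQ (c : F)))
          ≤ V.map W.mkQ := by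
        rw [Submodule.span_le]
        rintro _ ⟨i, rfl⟩
        exact Submodule.mem_map_of_mem
          (Submodule.subset_span (Finset.mem_coe.2 (Finset.mem_filter.1 i.2).1))
      have hmono := Submodule.finrank_mono hle
      rw [hspan, Fintype.card_coe] at hmono
      exact hmono
    have hrank : finrank K (V.map W.mkQ) + s = v := by
      have hrn := LinearMap.finrank_range_add_finrank_ker (W.mkQ.comp V.subtype)
      have h1 : LinearMap.range (W.mkQ.comp V.subtype) = V.map W.mkQ := by
        rw [LinearMap.range_comp, Submodule.range_subtype]
      have h2 : LinearMap.ker (W.mkQ.comp V.subtype) = W.comap V.subtype := by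
        rw [LinearMap.ker_comp, Submodule.ker_mkQ]
      have h3 : finrank K (W.comap V.subtype) = s :=
        LinearEquiv.finrank_eq (Submodule.comapSubtypeEquivOfLe hWleV)
      rw [h1, h2, h3] at hrn
      exact hrn
    omega
  -- s ≥ 1
  have hs1 : 1 ≤ s := by
    by_contra hs0
    have hW0 : W = ⊥ := by
      have h0 : finrank K W = 0 := by omega
      exact Submodule.finrank_eq_zero.1 h0
    have hrcard : r = Cs.card - 1 := by
      have hReq : R = Cs.erase 0 := by
        ext x
        rw [hR, Finset.mem_filter, Finset.mem_erase, hW0]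
        simp only [Submodule.mem_bot]
        tauto
      rw [hr, hReq, Finset.card_erase_of_mem h0C]
    have hrpos : 0 < r := by omega
    obtain ⟨c₁, hc₁R⟩ := Finset.card_pos.1 hrpos
    have hc₁Cs : c₁ ∈ Cs := (Finset.mem_filter.1 hc₁R).1
    have hc₁nW : c₁ ∉ W := (Finset.mem_filter.1 hc₁R).2
    have hc₁0 : c₁ ≠ 0 := by
      intro h
      apply hc₁nW
      rw [h]
      exact W.zero_mem
    set U₁ : Submodule K F := U ⊔ Submodule.span K {c₁ * c₁} with hU₁
    have hmap : V.map (LinearMap.mulLeft K c₁) ≤ U₁ := by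
      rw [Submodule.map_le_iff_le_comap, hV, Submodule.span_le]
      intro c hc
      simp only [Submodule.mem_comap, LinearMap.mulLeft_apply, SetLike.mem_coe]
      by_cases h : c = c₁
      · rw [h]
        exact le_sup_right (α := Submodule K F)
          (Submodule.subset_span (Set.mem_singleton _))
      · exact le_sup_left (α := Submodule K F)
          (hadj c₁ hc₁Cs c (Finset.mem_coe.1 hc) (fun hcc => h hcc.symm))
    have hvle : v ≤ finrank K U₁ := by
      have := Submodule.finrank_mono hmap
      rwa [finrank_map_mulLeft (K := K) c₁ hc₁0 V] at this
    have hU₁le : finrank K U₁ ≤ dU + 1 := by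
      have h1 := Submodule.finrank_sup_add_finrank_inf_eq U (Submodule.span K {c₁ * c₁})
      have h2 : finrank K (Submodule.span K ({c₁ * c₁} : Set F)) ≤ 1 := by
        simpa using finrank_span_le_card ({c₁ * c₁} : Set F)
      rw [hU₁]
      omega
    omega
  obtain ⟨w₀, hw₀W, hw₀0⟩ := exists_ne_zero_of_finrank_pos hs1
  -- v ≤ dU
  have hvU : v ≤ dU := by
    have hle : V.map (LinearMap.mulLeft K w₀) ≤ U := by
      rw [Submodule.map_le_iff_le_comap, hV, Submodule.span_le]
      intro c hc
      simp only [Submodule.mem_comap, LinearMap.mulLeft_apply, SetLike.mem_coe]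
      exact ((hmemW w₀).1 hw₀W).2 c hc
    have := Submodule.finrank_mono hle
    rw [finrank_map_mulLeft (K := K) w₀ hw₀0 V] at this
    exact this
  have hrs : r + s ≤ dU := le_trans hrsv hvU
  have hsdU : s ≤ dU := by omega
  -- goal 5 : q ^ D ≤ cliqueNum
  have hqD : q ^ D ≤ Cs.card := by
    obtain ⟨hDn, hD1, hDdU, a, ha0, haU⟩ := hD.1
    have hcardS := card_frobFixed_ge (F := F) q D n hq2 hD1 hDn hF
    set Sfin := ({x : F | x ^ q ^ D = x}).toFinite.toFinset with hSfin
    have hclq : ∀ x ∈ Sfin.image (fun z => a * z), ∀ y ∈ Sfin.image (fun z => a * z),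
        x ≠ y → x * y ∈ U := by
      intro x hx y hy hne
      obtain ⟨x₀, hx₀, rfl⟩ := Finset.mem_image.1 hx
      obtain ⟨y₀, hy₀, rfl⟩ := Finset.mem_image.1 hy
      have hx₀' : x₀ ^ q ^ D = x₀ := by
        rw [hSfin, Set.Finite.mem_toFinset] at hx₀
        exact hx₀
      have hy₀' : y₀ ^ q ^ D = y₀ := by
        rw [hSfin, Set.Finite.mem_toFinset] at hy₀
        exact hy₀
      have hxy : (x₀ * y₀) ^ q ^ D = x₀ * y₀ := by rw [mul_pow, hx₀', hy₀']
      have hmem := haU (x₀ * y₀) hxy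
      have heq : (a * x₀) * (a * y₀) = a ^ 2 * (x₀ * y₀) := by ring
      rwa [heq]
    calc q ^ D ≤ Sfin.card := hcardS
      _ = (Sfin.image (fun z => a * z)).card :=
          (Finset.card_image_of_injective _ (mul_right_injective₀ ha0)).symm
      _ ≤ Cs.card := hmax _ hclq
  -- main case analysis : s <= D in case A
  have hcaseA : 2 * dU + 2 ≤ 3 * s → s ≤ D := by
    intro hA3
    set U' : Submodule K F := W * W with hU'
    have hU'leU : U' ≤ U := by
      rw [hU', Submodule.mul_le]
      intro a ha b hb
      exact hWmulV a ha b (hWleV hb)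
    set u' := finrank K U' with hu'
    have hu'dU : u' ≤ dU := Submodule.finrank_mono hU'leU
    have hsu' : s ≤ u' := by
      have hle : W.map (LinearMap.mulLeft K w₀) ≤ U' := by
        rw [Submodule.map_le_iff_le_comap]
        intro x hx
        simp only [Submodule.mem_comap, LinearMap.mulLeft_apply]
        exact Submodule.mul_mem_mul hw₀W hx
      have h5 := Submodule.finrank_mono hle
      rwa [finrank_map_mulLeft (K := K) w₀ hw₀0 W] at h5
    have hs2 : 2 ≤ s := by omega
    have hu'2 : u' + 2 ≤ 2 * s := by omega
    have hint : ∀ x : F, x ≠ 0 → (∃ w, w ∈ W ∧ w ≠ 0 ∧ x * w ∈ W) →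
        2 * s ≤ finrank K (W ⊓ W.map (LinearMap.mulLeft K x) : Submodule K F) + u' := by
      rintro x hx0 ⟨w, hwW, hw0, hxwW⟩
      have hw'0 : x * w ≠ 0 := mul_ne_zero hx0 hw0
      have hA : W.map (LinearMap.mulLeft K w) ≤ U' := by
        rw [Submodule.map_le_iff_le_comap]
        intro z hz
        simp only [Submodule.mem_comap, LinearMap.mulLeft_apply]
        exact Submodule.mul_mem_mul hwW hz
      have hB : W.map (LinearMap.mulLeft K (x * w)) ≤ U' := by
        rw [Submodule.map_le_iff_le_comap]
        intro z hz
        simp only [Submodule.mem_comap, LinearMap.mulLeft_apply]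
        exact Submodule.mul_mem_mul hxwW hz
      have hfr := finrank_add_le_inf (W.map (LinearMap.mulLeft K w))
        (W.map (LinearMap.mulLeft K (x * w))) U' hA hB
      rw [finrank_map_mulLeft (K := K) w hw0 W,
        finrank_map_mulLeft (K := K) (x * w) hw'0 W] at hfr
      have hmapinf : ((W.map (LinearMap.mulLeft K w)) ⊓
          (W.map (LinearMap.mulLeft K (x * w)))).map (LinearMap.mulLeft K w⁻¹)
          ≤ W ⊓ W.map (LinearMap.mulLeft K x) := by
        intro z hz
        rw [mem_map_mulLeft] at hz
        obtain ⟨y, hy, rfl⟩ := hz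
        obtain ⟨hy1, hy2⟩ := Submodule.mem_inf.1 hy
        rw [mem_map_mulLeft] at hy1 hy2
        obtain ⟨u₁, hu₁, rfl⟩ := hy1
        obtain ⟨u₂, hu₂, he⟩ := hy2
        rw [Submodule.mem_inf]
        constructor
        · rw [show w⁻¹ * (w * u₁) = u₁ by field_simp]
          exact hu₁
        · rw [mem_map_mulLeft]
          refine ⟨u₂, hu₂, ?_⟩
          rw [← he]
          field_simp
      have hfr2 := Submodule.finrank_mono hmapinf
      rw [finrank_map_mulLeft (K := K) w⁻¹ (inv_ne_zero hw0)] at hfr2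
      omega
    -- the ratio field H
    obtain ⟨H, hHset⟩ := ratioField W w₀ hw₀W hw₀0 s u' rfl (by omega) hint
    have hHmem : ∀ x : F, x ∈ H ↔ (∃ w, w ∈ W ∧ w ≠ 0 ∧ x * w ∈ W) := by
      intro x
      rw [← SetLike.mem_coe, hHset]
      rfl
    have hmulH : ∀ x, x ∈ H → ∀ y, y ∈ H → x * y ∈ H := fun x hx y hy => H.mul_mem hx hy
    set HM : Submodule K F := Subalgebra.toSubmodule H.toSubalgebra with hHM
    have hHMmem : ∀ x : F, x ∈ HM ↔ x ∈ H := by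
      intro x
      rw [hHM, Subalgebra.mem_toSubmodule, IntermediateField.mem_toSubalgebra]
    set h : ℕ := finrank K HM with hh
    have h0H : (0 : F) ∈ H := H.zero_mem
    have hU'map : U' ≤ HM.map (LinearMap.mulLeft K (w₀ * w₀)) := by
      rw [hU', Submodule.mul_le]
      intro a ha b hb
      rw [mem_map_mulLeft]
      refine ⟨(w₀⁻¹ * a) * (w₀⁻¹ * b), ?_, by field_simp; try ring⟩
      have h1 : w₀⁻¹ * a ∈ H := by
        rw [hHmem]
        refine ⟨w₀, hw₀W, hw₀0, ?_⟩
        rw [show w₀⁻¹ * a * w₀ = a by field_simp]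
        exact ha
      have h2 : w₀⁻¹ * b ∈ H := by
        rw [hHmem]
        refine ⟨w₀, hw₀W, hw₀0, ?_⟩
        rw [show w₀⁻¹ * b * w₀ = b by field_simp]
        exact hb
      exact (hHMmem _).2 (hmulH _ h1 _ h2)
    have hu'h : u' ≤ h := by
      have h7 := Submodule.finrank_mono hU'map
      rwa [finrank_map_mulLeft (K := K) (w₀ * w₀) (mul_ne_zero hw₀0 hw₀0) HM] at h7
    have hHfinite : ((H : Set F)).Finite := Set.toFinite _
    set Hfin : Finset F := hHfinite.toFinset with hHfin
    have hmemHfin : ∀ x : F, x ∈ Hfin ↔ x ∈ H := fun x => hHfinite.mem_toFinset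
    have hcardHfin : Hfin.card = q ^ h := by
      have he : Hfin = ((HM : Set F).toFinite).toFinset := by
        ext x
        constructor
        · intro hx
          exact (Set.Finite.mem_toFinset _).2 ((hHMmem x).2 ((hmemHfin x).1 hx))
        · intro hx
          exact (hmemHfin x).2 ((hHMmem x).1 ((Set.Finite.mem_toFinset _).1 hx))
      rw [he, card_submodule_toFinset HM, hK]
    set Sfin : Finset F := Wfin.erase 0 with hSfin2
    have h0Wfin : (0 : F) ∈ Wfin := hWfinite.mem_toFinset.2 W.zero_mem
    have hcardSfin : Sfin.card = q ^ s - 1 := by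
      rw [hSfin2, Finset.card_erase_of_mem h0Wfin, hcardWfin]
    set Hfin' : Finset F := Hfin.erase 0 with hHfin'
    have hcardHfin' : Hfin'.card = q ^ h - 1 := by
      rw [hHfin', Finset.card_erase_of_mem ((hmemHfin 0).2 h0H), hcardHfin]
    have hmemSfin : ∀ x : F, x ∈ Sfin ↔ (x ∈ W ∧ x ≠ 0) := by
      intro x
      rw [hSfin2, Finset.mem_erase, hWfin, Set.Finite.mem_toFinset]
      tauto
    have hmemHfin' : ∀ x : F, x ∈ Hfin' ↔ (x ∈ H ∧ x ≠ 0) := by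
      intro x
      rw [hHfin', Finset.mem_erase, hmemHfin x]
      tauto
    set T : Finset (F × F) := (Hfin' ×ˢ Sfin).filter (fun p => p.1 * p.2 ∈ W) with hT
    have hmemT : ∀ p : F × F,
        p ∈ T ↔ (p.1 ∈ H ∧ p.1 ≠ 0 ∧ p.2 ∈ W ∧ p.2 ≠ 0 ∧ p.1 * p.2 ∈ W) := by
      intro p
      rw [hT, Finset.mem_filter, Finset.mem_product, hmemSfin, hmemHfin']
      tauto
    have hTcard : T.card = Sfin.card * Sfin.card := by
      rw [← Finset.card_product]
      apply Finset.card_bij' (fun p (_ : p ∈ T) => (p.1 * p.2, p.2))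
        (fun p (_ : p ∈ Sfin ×ˢ Sfin) => (p.1 * p.2⁻¹, p.2))
      · intro p hp
        rw [hmemT] at hp
        obtain ⟨h1, h2, h3, h4, h5⟩ := hp
        rw [Finset.mem_product, hmemSfin, hmemSfin]
        exact ⟨⟨h5, mul_ne_zero h2 h4⟩, h3, h4⟩
      · intro p hp
        rw [Finset.mem_product, hmemSfin, hmemSfin] at hp
        obtain ⟨⟨h1, h2⟩, h3, h4⟩ := hp
        rw [hmemT]
        have hre : p.1 * p.2⁻¹ * p.2 = p.1 := by field_simp
        refine ⟨?_, ?_, h3, h4, ?_⟩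
        · rw [hHmem]
          exact ⟨p.2, h3, h4, by rw [hre]; exact h1⟩
        · exact mul_ne_zero h2 (inv_ne_zero h4)
        · rw [hre]; exact h1
      · intro p hp
        rw [hmemT] at hp
        have hre : p.1 * p.2 * p.2⁻¹ = p.1 := by
          rw [mul_assoc, mul_inv_cancel₀ hp.2.2.2.1, mul_one]
        simp [hre]
      · intro p hp
        rw [Finset.mem_product, hmemSfin, hmemSfin] at hp
        have hre : p.1 * p.2⁻¹ * p.2 = p.1 := by
          rw [mul_assoc, inv_mul_cancel₀ hp.2.2, mul_one]
        simp [hre]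
    have hk2s : u' ≤ 2 * s := by omega
    set k : ℕ := 2 * s - u' with hkdef
    have hkk : k + u' = 2 * s := by omega
    have hfib : ∀ x ∈ Hfin', (q ^ k - 1 : ℕ) ≤ (Sfin.filter (fun w => x * w ∈ W)).card := by
      intro x hxm
      rw [hmemHfin'] at hxm
      obtain ⟨hxH, hx0⟩ := hxm
      have h9 := hint x⁻¹ (inv_ne_zero hx0) (by
        have h14 := H.inv_mem hxH
        rwa [hHmem] at h14)
      set P : Submodule K F := W ⊓ W.map (LinearMap.mulLeft K x⁻¹) with hP
      have hdimP : k ≤ finrank K P := by omega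
      have hPfinite : ((P : Set F)).Finite := Set.toFinite _
      have hsubP : (hPfinite.toFinset).erase 0 ⊆ Sfin.filter (fun w => x * w ∈ W) := by
        intro z hz
        rw [Finset.mem_erase, Set.Finite.mem_toFinset] at hz
        obtain ⟨hz0, hzP⟩ := hz
        obtain ⟨hzW, hzmap⟩ := Submodule.mem_inf.1 hzP
        rw [Finset.mem_filter, hmemSfin]
        refine ⟨⟨hzW, hz0⟩, ?_⟩
        rw [mem_map_mulLeft] at hzmap
        obtain ⟨u₁, hu₁, he₁⟩ := hzmap
        rw [show x * z = u₁ by rw [← he₁]; field_simp]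
        exact hu₁
      have hcardP : ((hPfinite.toFinset).erase 0).card = q ^ finrank K P - 1 := by
        rw [Finset.card_erase_of_mem (hPfinite.mem_toFinset.2 P.zero_mem)]
        rw [show hPfinite.toFinset = ((P : Set F).toFinite).toFinset from rfl]
        rw [card_submodule_toFinset P, hK]
      calc (q ^ k - 1 : ℕ) ≤ q ^ finrank K P - 1 := by
            have h15 := Nat.pow_le_pow_right (show 1 ≤ q by omega) hdimP
            omega
        _ = ((hPfinite.toFinset).erase 0).card := hcardP.symm
        _ ≤ _ := Finset.card_le_card hsubP
    have hfibsum : T.card = ∑ x ∈ Hfin', (T.filter (fun p => p.1 = x)).card := by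
      apply Finset.card_eq_sum_card_fiberwise (f := Prod.fst)
      intro p hp
      rw [Finset.mem_coe, hmemT] at hp
      rw [Finset.mem_coe, hmemHfin']
      exact ⟨hp.1, hp.2.1⟩
    have hfibeq : ∀ x ∈ Hfin',
        (T.filter (fun p => p.1 = x)).card = (Sfin.filter (fun w => x * w ∈ W)).card := by
      intro x hxm
      apply Finset.card_bij' (fun p (_ : p ∈ T.filter (fun p => p.1 = x)) => p.2)
        (fun w (_ : w ∈ Sfin.filter (fun w => x * w ∈ W)) => (x, w))
      · intro p hp
        rw [Finset.mem_filter, hmemT] at hp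
        rw [Finset.mem_filter, hmemSfin]
        obtain ⟨⟨h1, h2, h3, h4, h5⟩, h6⟩ := hp
        refine ⟨⟨h3, h4⟩, ?_⟩
        rw [← h6]
        exact h5
      · intro w hw
        rw [Finset.mem_filter, hmemSfin] at hw
        rw [Finset.mem_filter, hmemT]
        rw [hmemHfin'] at hxm
        exact ⟨⟨hxm.1, hxm.2, hw.1.1, hw.1.2, hw.2⟩, rfl⟩
      · intro p hp
        rw [Finset.mem_filter] at hp
        rw [← hp.2]
      · intro w hw
        rfl
    have hcnt : (q ^ h - 1) * (q ^ k - 1) ≤ (q ^ s - 1) ^ 2 := by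
      have hlow : Hfin'.card * (q ^ k - 1) ≤ T.card := by
        rw [hfibsum]
        have h10 := Finset.card_nsmul_le_sum Hfin'
          (fun x => (T.filter (fun p => p.1 = x)).card) (q ^ k - 1)
          (fun x hx => by
            have h16 := hfib x hx
            rw [← hfibeq x hx] at h16
            exact h16)
        simpa [smul_eq_mul] using h10
      rw [hcardHfin'] at hlow
      rw [hTcard, hcardSfin] at hlow
      calc (q ^ h - 1) * (q ^ k - 1) ≤ (q ^ s - 1) * (q ^ s - 1) := hlow
        _ = (q ^ s - 1) ^ 2 := (sq _).symm
    have hhu : h = u' := arith_counting hq2 hs2 hsu' hu'2 hkk hu'h hcnt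
    have hU'eq : U' = HM.map (LinearMap.mulLeft K (w₀ * w₀)) := by
      apply Submodule.eq_of_le_of_finrank_le hU'map
      rw [finrank_map_mulLeft (K := K) (w₀ * w₀) (mul_ne_zero hw₀0 hw₀0) HM]
      omega
    have hu's : u' = s := by
      by_contra hne
      have hs1u : s + 1 ≤ u' := by omega
      have hclq : ∀ a ∈ Hfin.image (fun z => w₀ * z), ∀ b ∈ Hfin.image (fun z => w₀ * z),
          a ≠ b → a * b ∈ U := by
        intro a ha b hb hne'
        obtain ⟨x₀, hx₀, rfl⟩ := Finset.mem_image.1 ha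
        obtain ⟨y₀, hy₀, rfl⟩ := Finset.mem_image.1 hb
        rw [hmemHfin] at hx₀ hy₀
        have hxyH : x₀ * y₀ ∈ H := hmulH x₀ hx₀ y₀ hy₀
        have hmem : (w₀ * w₀) * (x₀ * y₀) ∈ U' := by
          rw [hU'eq, mem_map_mulLeft]
          exact ⟨x₀ * y₀, (hHMmem _).2 hxyH, rfl⟩
        have heq : (w₀ * x₀) * (w₀ * y₀) = (w₀ * w₀) * (x₀ * y₀) := by ring
        rw [heq]
        exact hU'leU hmem
      have hcardim : (Hfin.image (fun z => w₀ * z)).card = q ^ h := by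
        rw [Finset.card_image_of_injective _ (mul_right_injective₀ hw₀0), hcardHfin]
      have hle := hmax _ hclq
      rw [hcardim, hmqsr, hhu] at hle
      have h2qs : 2 * q ^ s ≤ q ^ u' := by
        calc 2 * q ^ s ≤ q * q ^ s := Nat.mul_le_mul_right _ hq2
          _ = q ^ (s + 1) := by rw [pow_succ, Nat.mul_comm]
          _ ≤ q ^ u' := Nat.pow_le_pow_right (by omega) hs1u
      have hsq : s < 2 ^ s := Nat.lt_two_pow_self
      have hsqs : 2 ^ s ≤ q ^ s := Nat.pow_le_pow_left hq2 s
      omega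
    have hhs : h = s := by omega
    haveI : Fintype ↥H := Fintype.ofFinite _
    have hcardHtype : Fintype.card ↥H = q ^ s := by
      have h8 : Fintype.card ↥H = Hfin.card := by
        rw [hHfin, Set.Finite.card_toFinset]
        exact Fintype.card_congr' rfl
      rw [h8, hcardHfin, hhs]
    have hnF : finrank K F = n := by
      have hc := card_eq_pow_finrank (K := K) (V := F)
      rw [hK, hF] at hc
      exact (Nat.pow_right_injective hq2 hc.symm)
    have hfinH : finrank K ↥H = s := by
      have hc := card_eq_pow_finrank (K := K) (V := ↥H)
      rw [hK, hcardHtype] at hc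
      exact (Nat.pow_right_injective hq2 hc.symm)
    have hsn : s ∣ n := by
      refine ⟨finrank ↥H F, ?_⟩
      rw [← hnF, ← hfinH]
      exact (Module.finrank_mul_finrank K ↥H F).symm
    have hSsubH : ∀ x : F, x ^ q ^ s = x → x ∈ H := by
      have hq2s : 2 ≤ q ^ s := by
        calc 2 ≤ q := hq2
        _ = q ^ 1 := (pow_one q).symm
        _ ≤ q ^ s := Nat.pow_le_pow_right (by omega) hs1
      have hcardle := card_frobFixed_le (F := F) (q ^ s) hq2s
      have hsub : Hfin ⊆ ({x : F | x ^ q ^ s = x}).toFinite.toFinset := by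
        intro x hx
        rw [hmemHfin] at hx
        rw [Set.Finite.mem_toFinset]
        have hx' : (⟨x, hx⟩ : ↥H) ^ (q ^ s) = ⟨x, hx⟩ := by
          rw [← hcardHtype]
          exact FiniteField.pow_card _
        have h11 := congrArg (Subtype.val) hx'
        rw [SubmonoidClass.coe_pow] at h11
        exact h11
      have heq : ({x : F | x ^ q ^ s = x}).toFinite.toFinset = Hfin := by
        refine (Finset.eq_of_subset_of_card_le hsub ?_).symm
        rw [hcardHfin, hhs]
        exact hcardle
      intro x hx
      have h12 : x ∈ ({x : F | x ^ q ^ s = x}).toFinite.toFinset :=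
        (Set.Finite.mem_toFinset _).2 hx
      rw [heq, hmemHfin] at h12
      exact h12
    have hmemset : s ∈ {d : ℕ | d ∣ n ∧ 1 ≤ d ∧ d ≤ dU ∧
        ∃ a : F, a ≠ 0 ∧ ∀ x : F, x ^ q ^ d = x → a ^ 2 * x ∈ U} := by
      refine ⟨hsn, hs1, hsdU, w₀, hw₀0, ?_⟩
      intro x hx
      have hxH := hSsubH x hx
      have h13 : (w₀ * w₀) * x ∈ U' := by
        rw [hU'eq, mem_map_mulLeft]
        exact ⟨x, (hHMmem _).2 hxH, rfl⟩
      have h9 := hU'leU h13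
      rwa [show w₀ ^ 2 * x = (w₀ * w₀) * x by ring]
    exact hD.2 hmemset
  -- assemble
  have hsmax : (s : ℝ) ≤ max (D : ℝ) (7 / 8 * (dU : ℝ) + 7 / (32 * Real.logb 2 q)) := by
    by_cases hsD : s ≤ D
    · exact le_trans (by exact_mod_cast hsD) (le_max_left _ _)
    · have hD1 : 1 ≤ D := hD.1.2.1
      have hs2 : 2 ≤ s := by omega
      have hnotA : ¬ (2 * dU + 2 ≤ 3 * s) := fun h => hsD (hcaseA h)
      have h3s : 3 * s ≤ 2 * dU + 1 := by omega
      have h8s : 8 * s ≤ 7 * dU := by omega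
      have hlogpos : 0 < Real.logb 2 q := by
        apply Real.logb_pos (by norm_num)
        exact_mod_cast (by omega : 1 < q)
      have hc : (0:ℝ) ≤ 7 / (32 * Real.logb 2 q) := by positivity
      apply le_trans _ (le_max_right _ _)
      have : (s : ℝ) ≤ 7 / 8 * (dU : ℝ) := by
        rw [div_mul_eq_mul_div, le_div_iff₀ (by norm_num : (0:ℝ) < 8)]
        exact_mod_cast (by omega : s * 8 ≤ 7 * dU)
      linarith
  refine ⟨s, r, ?_, ?_, hs1, hsmax, ?_, ?_⟩
  · rw [← hcard]; exact hmqsr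
  · exact hrs
  · rw [← hcard]; exact hqD
  · rw [← hcard, hmqsr]
    push_cast
    have hq1 : (1:ℝ) ≤ (q:ℝ) := by exact_mod_cast (by omega : 1 ≤ q)
    have h1 : ((q:ℝ)) ^ (s:ℕ) ≤ (q:ℝ) ^ (max (D : ℝ) (7 / 8 * (dU : ℝ) + 7 / (32 * Real.logb 2 q))) := by
      rw [← Real.rpow_natCast (q:ℝ) s]
      exact Real.rpow_le_rpow_of_exponent_le hq1 hsmax
    have hrdU : (r : ℝ) ≤ (dU : ℝ) := by exact_mod_cast (by omega : r ≤ dU)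
    linarith
end

section
/- Let q be a prime power, n ≥ 2, and let U ⊊ F_{q^n} be an F_q-linear subspace of dimension d_U ≥ 2. Then ω(G_U) ≤ q^{d_U}, with equality if and only if either (i) q = 2 and d_U = 2, or (ii) U = a²·F_{q^{d_U}} for some a ∈ F_{q^n}, a ≠ 0, where d_U < n divides n and F_{q^{d_U}} is the subfield of F_{q^n} with q^{d_U} elements. -/
open Finset Polynomial

section Aux

variable {F : Type*} [Field F] [DecidableEq F]

private lemma paley_sub {Uf C : Finset F} (h0 : (0:F) ∉ C)
    (hP : ∀ x ∈ C, ∀ y ∈ C, x ≠ y → x * y ∈ Uf) {a : F} (ha : a ∈ C) :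
    (C.erase a).image (a * ·) ⊆ Uf.erase 0 := by
  have hane : a ≠ 0 := fun h => h0 (h ▸ ha)
  intro x hx
  rcases Finset.mem_image.mp hx with ⟨c, hc, rfl⟩
  have hcC := Finset.mem_of_mem_erase hc
  have hca : c ≠ a := Finset.ne_of_mem_erase hc
  have hcne : c ≠ 0 := fun h => h0 (h ▸ hcC)
  exact Finset.mem_erase.mpr ⟨mul_ne_zero hane hcne, hP a ha c hcC (fun h => hca h.symm)⟩

private lemma paley_cardA {Uf C : Finset F} (h0U : (0:F) ∈ Uf) (h0 : (0:F) ∉ C)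
    (hP : ∀ x ∈ C, ∀ y ∈ C, x ≠ y → x * y ∈ Uf) : C.card ≤ Uf.card := by
  rcases C.eq_empty_or_nonempty with rfl | ⟨a, ha⟩
  · simp
  have hane : a ≠ 0 := fun h => h0 (h ▸ ha)
  have hinj : Function.Injective (a * ·) := mul_right_injective₀ hane
  have h1 : ((C.erase a).image (a * ·)).card = C.card - 1 := by
    rw [Finset.card_image_of_injective _ hinj, Finset.card_erase_of_mem ha]
  have h2 := Finset.card_le_card (paley_sub h0 hP ha)
  rw [h1, Finset.card_erase_of_mem h0U] at h2
  have h4 : 1 ≤ C.card := Finset.card_pos.mpr ⟨a, ha⟩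
  have h5 : 1 ≤ Uf.card := Finset.card_pos.mpr ⟨0, h0U⟩
  omega

private lemma paley_sum_erase_zero {Uf : Finset F} (h0U : (0:F) ∈ Uf)
    (hsum : ∑ x ∈ Uf, x = 0) : ∑ x ∈ Uf.erase 0, x = 0 := by
  rw [Finset.sum_erase_eq_sub (f := fun x => x) h0U, hsum]
  simp

private lemma paley_cardB {Uf C : Finset F} (h0U : (0:F) ∈ Uf)
    (hsum : ∑ x ∈ Uf, x = 0) (hU2 : 2 ≤ Uf.card) (h0 : (0:F) ∉ C)
    (hP : ∀ x ∈ C, ∀ y ∈ C, x ≠ y → x * y ∈ Uf) : C.card ≠ Uf.card := by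
  intro hcard
  have key : ∀ a ∈ C, a = ∑ x ∈ C, x := by
    intro a ha
    have hane : a ≠ 0 := fun h => h0 (h ▸ ha)
    have hinj : Function.Injective (a * ·) := mul_right_injective₀ hane
    have hcards : (Uf.erase 0).card ≤ ((C.erase a).image (a * ·)).card := by
      rw [Finset.card_image_of_injective _ hinj, Finset.card_erase_of_mem ha,
        Finset.card_erase_of_mem h0U, hcard]
    have heqset := Finset.eq_of_subset_of_card_le (paley_sub h0 hP ha) hcards
    have himg : ∑ x ∈ (C.erase a).image (a * ·), x = a * ((∑ x ∈ C, x) - a) := by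
      rw [Finset.sum_image (fun x _ y _ h => hinj h), ← Finset.mul_sum,
        Finset.sum_erase_eq_sub (f := fun x => x) ha]
    have hz : a * ((∑ x ∈ C, x) - a) = 0 := by
      rw [← himg, heqset, paley_sum_erase_zero h0U hsum]
    rcases mul_eq_zero.mp hz with h | h
    · exact absurd h hane
    · exact (sub_eq_zero.mp h).symm
  have h2C : 1 < C.card := by omega
  obtain ⟨a, ha, b, hb, hab⟩ := Finset.one_lt_card.mp h2C
  exact hab ((key a ha).trans (key b hb).symm)

private lemma paley_miss {Uf C : Finset F} (h0U : (0:F) ∈ Uf)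
    (hsum : ∑ x ∈ Uf, x = 0) (hcard : C.card + 1 = Uf.card) (h0 : (0:F) ∉ C)
    (hP : ∀ x ∈ C, ∀ y ∈ C, x ≠ y → x * y ∈ Uf) {b : F} (hb : b ∈ C) :
    Uf.erase 0 \ ((C.erase b).image (b * ·)) = {b * b - b * ∑ x ∈ C, x} := by
  have hbne : b ≠ 0 := fun h => h0 (h ▸ hb)
  have hinj : Function.Injective (b * ·) := mul_right_injective₀ hbne
  have hsub := paley_sub h0 hP hb
  have hCpos : 1 ≤ C.card := Finset.card_pos.mpr ⟨b, hb⟩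
  have hc1 : (Uf.erase 0 \ ((C.erase b).image (b * ·))).card = 1 := by
    rw [Finset.card_sdiff_of_subset hsub, Finset.card_image_of_injective _ hinj,
      Finset.card_erase_of_mem hb, Finset.card_erase_of_mem h0U]
    omega
  obtain ⟨m, hm⟩ := Finset.card_eq_one.mp hc1
  have himg : ∑ x ∈ (C.erase b).image (b * ·), x = b * ((∑ x ∈ C, x) - b) := by
    rw [Finset.sum_image (fun x _ y _ h => hinj h), ← Finset.mul_sum,
      Finset.sum_erase_eq_sub (f := fun x => x) hb]
  have hsplit := Finset.sum_sdiff (f := fun x => x) hsub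
  rw [hm, Finset.sum_singleton, himg, paley_sum_erase_zero h0U hsum] at hsplit
  have hmval : m = b * b - b * ∑ x ∈ C, x := by linear_combination hsplit
  rw [hm, hmval]

private lemma paley_full {Uf C : Finset F} (h0U : (0:F) ∈ Uf)
    (hcard : C.card + 1 = Uf.card) (h0 : (0:F) ∉ C)
    (hP : ∀ x ∈ C, ∀ y ∈ C, x ≠ y → x * y ∈ Uf) {b : F} (hb : b ∈ C)
    (hb2 : b * b ∈ Uf) : C.image (b * ·) = Uf.erase 0 := by
  have hbne : b ≠ 0 := fun h => h0 (h ▸ hb)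
  have hinj : Function.Injective (b * ·) := mul_right_injective₀ hbne
  have hsub : C.image (b * ·) ⊆ Uf.erase 0 := by
    intro x hx
    rcases Finset.mem_image.mp hx with ⟨c, hc, rfl⟩
    have hcne : c ≠ 0 := fun h => h0 (h ▸ hc)
    refine Finset.mem_erase.mpr ⟨mul_ne_zero hbne hcne, ?_⟩
    rcases eq_or_ne c b with rfl | hne
    · exact hb2
    · exact hP b hb c hc (fun h => hne h.symm)
  refine Finset.eq_of_subset_of_card_le hsub ?_
  rw [Finset.card_image_of_injective _ hinj, Finset.card_erase_of_mem h0U]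
  omega

private lemma paley_squares {Uf C : Finset F} (h0U : (0:F) ∈ Uf)
    (hsum : ∑ x ∈ Uf, x = 0) (hcard : C.card + 1 = Uf.card) (h0 : (0:F) ∉ C)
    (hP : ∀ x ∈ C, ∀ y ∈ C, x ≠ y → x * y ∈ Uf) (hN : 8 ≤ Uf.card) :
    (∀ b ∈ C, b * b ∈ Uf) ∧ ∑ x ∈ C, x = 0 := by
  classical
  set s := ∑ x ∈ C, x with hs_def
  have hs : s = 0 := by
    by_cases hex : ∃ a ∈ C, a * a ∈ Uf
    · obtain ⟨a, ha, ha2⟩ := hex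
      have hane : a ≠ 0 := fun h => h0 (h ▸ ha)
      have hinj : Function.Injective (a * ·) := mul_right_injective₀ hane
      have himg := paley_full h0U hcard h0 hP ha ha2
      have h1 : ∑ x ∈ C.image (a * ·), x = a * s := by
        rw [Finset.sum_image (fun x _ y _ h => hinj h), ← Finset.mul_sum]
      have hz : a * s = 0 := by
        rw [← h1, himg, paley_sum_erase_zero h0U hsum]
      exact (mul_eq_zero.mp hz).resolve_left hane
    · push_neg at hex
      have key : ∀ k : ℕ, ∀ a ∈ C,
          ∑ x ∈ Uf.erase 0, x ^ k
            = a ^ k * ((∑ x ∈ C, x ^ k) - a ^ k) + (a * a - a * s) ^ k := by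
        intro k a ha
        have hane : a ≠ 0 := fun h => h0 (h ▸ ha)
        have hinj : Function.Injective (a * ·) := mul_right_injective₀ hane
        have hmiss := paley_miss h0U hsum hcard h0 hP ha
        have hsub := paley_sub h0 hP ha
        have hsplit := Finset.sum_sdiff (f := fun x => x ^ k) hsub
        rw [hmiss, Finset.sum_singleton] at hsplit
        have himg : ∑ x ∈ (C.erase a).image (a * ·), x ^ k
            = a ^ k * ((∑ x ∈ C, x ^ k) - a ^ k) := by
          rw [Finset.sum_image (fun x _ y _ h => hinj h)]
          simp_rw [mul_pow]
          rw [← Finset.mul_sum, Finset.sum_erase_eq_sub (f := fun x => x ^ k) ha]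
        rw [himg] at hsplit
        linear_combination -hsplit
      have h7 : 7 ≤ C.card := by omega
      set σ₂ := ∑ x ∈ C, x ^ 2 with hσ₂
      set P₂ := ∑ x ∈ Uf.erase 0, x ^ 2 with hP₂
      set σ₃ := ∑ x ∈ C, x ^ 3 with hσ₃
      set P₃ := ∑ x ∈ Uf.erase 0, x ^ 3 with hP₃
      set p2 : F[X] := Polynomial.C (σ₂ + s ^ 2) * X ^ 2 - Polynomial.C (2 * s) * X ^ 3
          - Polynomial.C P₂ with hp2_def
      have hdeg2 : p2.natDegree ≤ 3 := by
        rw [hp2_def]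
        compute_degree
      have heval2 : ∀ a ∈ C, p2.eval a = 0 := by
        intro a ha
        have h := key 2 a ha
        rw [hp2_def]
        simp only [eval_sub, eval_mul, eval_pow, eval_C, eval_X]
        linear_combination -h
      have hp2z : p2 = 0 :=
        Polynomial.eq_zero_of_natDegree_lt_card_of_eval_eq_zero' p2 C heval2 (by omega)
      have h2s : 2 * s = 0 := by
        have hc0 : p2.coeff 3 = 0 := by rw [hp2z]; simp
        have hc3 : p2.coeff 3 = -(2 * s) := by
          rw [hp2_def]
          simp only [Polynomial.coeff_sub, Polynomial.coeff_add, Polynomial.coeff_C_mul,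
            Polynomial.coeff_X_pow, Polynomial.coeff_C]
          norm_num
        rw [hc3] at hc0
        exact neg_eq_zero.mp hc0
      set p3 : F[X] := Polynomial.C (σ₃ - s ^ 3) * X ^ 3 + Polynomial.C (3 * s ^ 2) * X ^ 4
          - Polynomial.C (3 * s) * X ^ 5 - Polynomial.C P₃ with hp3_def
      have hdeg3 : p3.natDegree ≤ 5 := by
        rw [hp3_def]
        compute_degree
      have heval3 : ∀ a ∈ C, p3.eval a = 0 := by
        intro a ha
        have h := key 3 a ha
        rw [hp3_def]
        simp only [eval_sub, eval_add, eval_mul, eval_pow, eval_C, eval_X]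
        linear_combination -h
      have hp3z : p3 = 0 :=
        Polynomial.eq_zero_of_natDegree_lt_card_of_eval_eq_zero' p3 C heval3 (by omega)
      have h3s : 3 * s = 0 := by
        have hc0 : p3.coeff 5 = 0 := by rw [hp3z]; simp
        have hc5 : p3.coeff 5 = -(3 * s) := by
          rw [hp3_def]
          simp only [Polynomial.coeff_sub, Polynomial.coeff_add, Polynomial.coeff_C_mul,
            Polynomial.coeff_X_pow, Polynomial.coeff_C]
          norm_num
        rw [hc5] at hc0
        exact neg_eq_zero.mp hc0
      linear_combination h3s - h2s
  refine ⟨?_, hs⟩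
  intro b hb
  by_contra hb2
  have hmiss := paley_miss h0U hsum hcard h0 hP hb
  have hmem : b * b - b * s ∈ Uf.erase 0 \ ((C.erase b).image (b * ·)) := by
    rw [hmiss]
    exact Finset.mem_singleton_self _
  have hmem2 := Finset.mem_of_mem_erase (Finset.mem_sdiff.mp hmem).1
  rw [hs, mul_zero, sub_zero] at hmem2
  exact hb2 hmem2

end Aux

private lemma card_pow_eq_le {F : Type*} [Field F] [Fintype F] [DecidableEq F]
    {m : ℕ} (hm : 2 ≤ m) :
    (Finset.univ.filter fun x : F => x ^ m = x).card ≤ m := by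
  have hdeg : ((X : F[X]) ^ m - X).degree = (m : WithBot ℕ) := by
    have hlt : (X : F[X]).degree < ((X : F[X]) ^ m).degree := by
      rw [Polynomial.degree_X, Polynomial.degree_X_pow]
      exact_mod_cast (by omega : (1:ℕ) < m)
    rw [Polynomial.degree_sub_eq_left_of_degree_lt hlt, Polynomial.degree_X_pow]
  have hne : (X : F[X]) ^ m - X ≠ 0 := by
    intro h
    rw [h, Polynomial.degree_zero] at hdeg
    exact (by simp : ((⊥ : WithBot ℕ) ≠ (m : WithBot ℕ))) hdeg
  have hnat : ((X : F[X]) ^ m - X).natDegree = m :=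
    Polynomial.natDegree_eq_of_degree_eq_some hdeg
  have hsub : (Finset.univ.filter fun x : F => x ^ m = x)
      ⊆ ((X : F[X]) ^ m - X).roots.toFinset := by
    intro x hx
    rw [Multiset.mem_toFinset, Polynomial.mem_roots hne]
    have hx2 := (Finset.mem_filter.mp hx).2
    simp [Polynomial.IsRoot, sub_eq_zero, hx2]
  calc (Finset.univ.filter fun x : F => x ^ m = x).card
      ≤ ((X : F[X]) ^ m - X).roots.toFinset.card := Finset.card_le_card hsub
    _ ≤ Multiset.card ((X : F[X]) ^ m - X).roots := Multiset.toFinset_card_le _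
    _ ≤ ((X : F[X]) ^ m - X).natDegree := Polynomial.card_roots' _
    _ = m := hnat

private lemma sum_subspace_eq_zero {K F : Type*} [Field K] [Field F] [Algebra K F]
    [Fintype K] [Fintype F] (U : Submodule K F) (hd : 2 ≤ Module.finrank K U)
    (Uf : Finset F) (hUf : ∀ x : F, x ∈ Uf ↔ x ∈ U) : ∑ x ∈ Uf, x = 0 := by
  classical
  haveI : Fintype ↥U := Fintype.ofFinite _
  have hK0 : (Fintype.card K : K) = 0 := FiniteField.cast_card_eq_zero K
  set d := Module.finrank K ↥U with hd_def
  let e : ↥U ≃ₗ[K] (Fin d → K) := (Module.finBasis K ↥U).equivFun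
  have hsub : ∑ x ∈ Uf, x = ∑ x : ↥U, (x : F) :=
    Finset.sum_subtype Uf hUf (fun x => x)
  have h1 : ∑ x : ↥U, (x : F) = ∑ v : Fin d → K, ((e.symm v : ↥U) : F) :=
    Fintype.sum_equiv e.toEquiv _ _ (fun x => by simp)
  have hzero : (∑ v : Fin d → K, v) = 0 := by
    funext i
    rw [Finset.sum_apply]
    have hsplit : ∑ v : Fin d → K, v i = ∑ p : K × ({j : Fin d // j ≠ i} → K), p.1 :=
      Fintype.sum_equiv (Equiv.piSplitAt i (fun _ : Fin d => K)) _ _ (fun v => rfl)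
    have hcardsub : Fintype.card {j : Fin d // j ≠ i} = d - 1 := by
      rw [Fintype.card_subtype_compl]
      simp [Fintype.card_subtype_eq]
    have hcW : ((Fintype.card ({j : Fin d // j ≠ i} → K) : ℕ) : K) = 0 := by
      rw [Fintype.card_fun, hcardsub, Nat.cast_pow, hK0, zero_pow (by omega)]
    rw [hsplit, Fintype.sum_prod_type]
    show ∑ x : K, ∑ _y : {j : Fin d // j ≠ i} → K, x = (0 : Fin d → K) i
    calc ∑ x : K, ∑ _y : {j : Fin d // j ≠ i} → K, x
        = ∑ x : K, (Fintype.card ({j : Fin d // j ≠ i} → K)) • x := by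
          simp [Finset.sum_const, Finset.card_univ]
      _ = ∑ x : K, ((Fintype.card ({j : Fin d // j ≠ i} → K) : ℕ) : K) * x := by
          simp_rw [nsmul_eq_mul]
      _ = 0 := by rw [hcW]; simp
      _ = (0 : Fin d → K) i := rfl
  have h2 : ∑ v : Fin d → K, ((e.symm v : ↥U) : F) = 0 := by
    have hA : ∀ v : Fin d → K,
        ((e.symm v : ↥U) : F) = (U.subtype.comp e.symm.toLinearMap) v := fun v => rfl
    simp_rw [hA]
    rw [← map_sum, hzero, map_zero]
  rw [hsub, h1, h2]

private lemma clique_bound {F : Type*} [Field F] [DecidableEq F] {Uf : Finset F}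
    {S : Set F} (hUfS : ∀ x, x ∈ Uf ↔ x ∈ S) (h0U : (0:F) ∈ Uf)
    (hsum : ∑ x ∈ Uf, x = 0) (hU4 : 4 ≤ Uf.card) (t : Finset F)
    (ht : (paleyGraph S).IsClique ↑t) : t.card ≤ Uf.card := by
  have h0C : (0:F) ∉ t.erase 0 := Finset.notMem_erase _ _
  have hPC : ∀ x ∈ t.erase 0, ∀ y ∈ t.erase 0, x ≠ y → x * y ∈ Uf := by
    intro x hx y hy hxy
    exact (hUfS _).mpr (And.right (ht (Finset.mem_coe.mpr (Finset.mem_of_mem_erase hx))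
      (Finset.mem_coe.mpr (Finset.mem_of_mem_erase hy)) hxy))
  have hA := paley_cardA h0U h0C hPC
  have hB := paley_cardB h0U hsum (by omega) h0C hPC
  by_cases h0t : (0:F) ∈ t
  · have h1 : 1 ≤ t.card := Finset.card_pos.mpr ⟨0, h0t⟩
    have h2 : (t.erase 0).card = t.card - 1 := Finset.card_erase_of_mem h0t
    omega
  · rw [Finset.erase_eq_of_notMem h0t] at hA
    exact hA

private lemma subfield_step {q n : ℕ} (hq : IsPrimePow q) (hn : 2 ≤ n)
    {K F : Type*} [Field K] [Field F] [Algebra K F] [Fintype K] [Fintype F]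
    [DecidableEq F]
    (hK : Fintype.card K = q) (hF : Fintype.card F = q ^ n)
    (U : Submodule K F) (hU : U ≠ ⊤) (hd : 2 ≤ Module.finrank K U)
    (Uf : Finset F) (hUf : ∀ x : F, x ∈ Uf ↔ x ∈ U)
    (hUcard : Uf.card = q ^ Module.finrank K U)
    {C : Finset F} (h0 : (0:F) ∉ C)
    (hP : ∀ x ∈ C, ∀ y ∈ C, x ≠ y → x * y ∈ U)
    (hsq : ∀ x ∈ C, x * x ∈ U)
    {a : F} (ha : a ∈ C)
    (himg : C.image (a * ·) = Uf.erase 0) :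
    Module.finrank K U ∣ n ∧ Module.finrank K U < n ∧
      ∃ α : F, α ≠ 0 ∧ (U : Set F) =
        (fun x => α ^ 2 * x) '' {x : F | x ^ q ^ Module.finrank K U = x} := by
  classical
  set d := Module.finrank K U with hd_def
  have hq2 : 2 ≤ q := hq.two_le
  have hane : a ≠ 0 := fun h => h0 (h ▸ ha)
  have haa : a * a ≠ 0 := mul_ne_zero hane hane
  set W : Set F := (fun x => (a * a)⁻¹ * x) '' (U : Set F) with hW_def
  have hW : ∀ x : F, x ∈ W ↔ a * a * x ∈ U := by
    intro x
    constructor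
    · rintro ⟨u, hu, rfl⟩
      have h1 : a * a * ((a * a)⁻¹ * u) = u := by field_simp
      rw [h1]; exact hu
    · intro h
      exact ⟨a * a * x, h, by field_simp⟩
  have hCmem : ∀ u : F, u ∈ U → u ≠ 0 → ∃ c ∈ C, a * c = u := by
    intro u hu hune
    have h1 : u ∈ Uf.erase 0 := Finset.mem_erase.mpr ⟨hune, (hUf u).mpr hu⟩
    rw [← himg] at h1
    rcases Finset.mem_image.mp h1 with ⟨c, hc, hcu⟩
    exact ⟨c, hc, hcu⟩
  have hmulW : ∀ x y : F, x ∈ W → y ∈ W → x * y ∈ W := by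
    intro x y hx hy
    rw [hW] at hx hy ⊢
    rcases eq_or_ne x 0 with rfl | hx0
    · simpa using U.zero_mem
    rcases eq_or_ne y 0 with rfl | hy0
    · simpa using U.zero_mem
    obtain ⟨c, hc, hcx⟩ := hCmem _ hx (mul_ne_zero haa hx0)
    obtain ⟨c', hc', hcy⟩ := hCmem _ hy (mul_ne_zero haa hy0)
    have hcx' : c = a * x := by
      apply mul_left_cancel₀ hane
      rw [hcx]; ring
    have hcy' : c' = a * y := by
      apply mul_left_cancel₀ hane
      rw [hcy]; ring
    rcases eq_or_ne c c' with rfl | hne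
    · have hxy : x = y := by
        apply mul_left_cancel₀ hane
        rw [← hcx', ← hcy']
      have h2 : a * a * (x * y) = c * c := by rw [hcx', hxy]; ring
      rw [h2]
      exact hsq c hc
    · have h2 : a * a * (x * y) = c * c' := by rw [hcx', hcy']; ring
      rw [h2]
      exact hP c hc c' hc' hne
  have hzeroW : (0:F) ∈ W := (hW 0).mpr (by simpa using U.zero_mem)
  have honeW : (1:F) ∈ W := (hW 1).mpr (by simpa using hsq a ha)
  have hcardF : 4 ≤ Fintype.card F := by
    rw [hF]
    calc 4 = 2 ^ 2 := rfl
      _ ≤ q ^ 2 := Nat.pow_le_pow_left hq2 2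
      _ ≤ q ^ n := Nat.pow_le_pow_right (by omega) hn
  have hinvW : ∀ x : F, x ∈ W → x⁻¹ ∈ W := by
    intro x hx
    rcases eq_or_ne x 0 with rfl | hx0
    · simpa using hzeroW
    have hpow : ∀ k : ℕ, x ^ (k + 1) ∈ W := by
      intro k
      induction k with
      | zero => simpa using hx
      | succ k ih => rw [pow_succ]; exact hmulW _ _ ih hx
    have h1 : x * x ^ (Fintype.card F - 2) = 1 := by
      rw [← pow_succ']
      have h2 : Fintype.card F - 2 + 1 = Fintype.card F - 1 := by omega
      rw [h2]
      exact FiniteField.pow_card_sub_one_eq_one x hx0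
    have hxinv : x⁻¹ = x ^ (Fintype.card F - 2) := inv_eq_of_mul_eq_one_right h1
    rw [hxinv]
    have h3 : Fintype.card F - 2 = (Fintype.card F - 3) + 1 := by omega
    rw [h3]
    exact hpow _
  set E : Subfield F :=
    { carrier := W
      mul_mem' := fun {x y} hx hy => hmulW x y hx hy
      one_mem' := honeW
      add_mem' := fun {x y} hx hy => (hW _).mpr (by
        rw [mul_add]
        exact U.add_mem ((hW _).mp hx) ((hW _).mp hy))
      zero_mem' := hzeroW
      neg_mem' := fun {x} hx => (hW _).mpr (by
        rw [mul_neg]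
        exact U.neg_mem ((hW _).mp hx))
      inv_mem' := fun x hx => hinvW x hx } with hE_def
  have hEmem : ∀ x : F, x ∈ E ↔ x ∈ W := fun x => Iff.rfl
  set Wf : Finset F := Uf.image (fun u => (a * a)⁻¹ * u) with hWf_def
  have hWf : ∀ x, x ∈ Wf ↔ x ∈ W := by
    intro x
    rw [hWf_def, hW_def]
    simp only [Finset.mem_image, Set.mem_image]
    constructor
    · rintro ⟨u, hu, rfl⟩; exact ⟨u, (hUf u).mp hu, rfl⟩
    · rintro ⟨u, hu, rfl⟩; exact ⟨u, (hUf u).mpr hu, rfl⟩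
  have hWfcard : Wf.card = q ^ d := by
    rw [hWf_def, Finset.card_image_of_injective _ (mul_right_injective₀ (inv_ne_zero haa)),
      hUcard]
  have hcardE : Fintype.card E = q ^ d := by
    rw [← hWfcard]
    exact Fintype.card_of_subtype Wf (fun x => (hWf x).trans (hEmem x).symm)
  have hpowE : ∀ x : F, x ∈ W → x ^ q ^ d = x := by
    intro x hx
    have hx' : x ∈ E := hx
    have h1 := FiniteField.pow_card (⟨x, hx'⟩ : E)
    rw [hcardE] at h1
    have h2 := congrArg (fun y : E => (y : F)) h1
    simpa using h2
  set Sf : Finset F := Finset.univ.filter (fun x : F => x ^ q ^ d = x) with hSf_def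
  have hqd2 : 2 ≤ q ^ d := by
    calc 2 = 2 ^ 1 := rfl
      _ ≤ q ^ d := Nat.pow_le_pow_left hq2 1 |>.trans (Nat.pow_le_pow_right (by omega) (by omega))
  have hSfcard : Sf.card ≤ q ^ d := card_pow_eq_le hqd2
  have hWfSf : Wf ⊆ Sf := by
    intro x hx
    rw [hSf_def, Finset.mem_filter]
    exact ⟨Finset.mem_univ x, hpowE x ((hWf x).mp hx)⟩
  have hWfSf_eq : Wf = Sf := Finset.eq_of_subset_of_card_le hWfSf (by rw [hWfcard]; exact hSfcard)
  have hSW : {x : F | x ^ q ^ d = x} = W := by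
    ext x
    constructor
    · intro hx
      have h1 : x ∈ Sf := by
        rw [hSf_def, Finset.mem_filter]
        exact ⟨Finset.mem_univ x, hx⟩
      rw [← hWfSf_eq] at h1
      exact (hWf x).mp h1
    · intro hx
      exact hpowE x hx
  have hUimg : (U : Set F) = (fun x => a ^ 2 * x) '' {x : F | x ^ q ^ d = x} := by
    rw [hSW, hW_def]
    ext u
    simp only [Set.mem_image]
    constructor
    · intro hu
      refine ⟨(a * a)⁻¹ * u, ⟨u, hu, rfl⟩, ?_⟩
      rw [pow_two]
      field_simp
    · rintro ⟨x, ⟨u', hu', rfl⟩, rfl⟩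
      have h1 : a ^ 2 * ((a * a)⁻¹ * u') = u' := by
        rw [pow_two]; field_simp
      rw [h1]
      exact hu'
  have hcardF2 : Fintype.card F = Fintype.card E ^ Module.finrank E F :=
    Module.card_eq_pow_finrank
  rw [hcardE, hF, ← pow_mul] at hcardF2
  have hn_eq : n = d * Module.finrank E F := Nat.pow_right_injective hq2 hcardF2
  have hdvd : d ∣ n := ⟨_, hn_eq⟩
  have hnpos : 0 < n := by omega
  have hdn : d < n := by
    rcases lt_or_eq_of_le (Nat.le_of_dvd hnpos hdvd) with h | h
    · exact h
    · exfalso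
      have hfrF : Module.finrank K F = n := by
        have h1 : Fintype.card F = q ^ Module.finrank K F := by
          rw [← hK]; exact Module.card_eq_pow_finrank
        rw [hF] at h1
        exact Nat.pow_right_injective hq2 h1.symm
      have htop : U = ⊤ := Submodule.eq_top_of_finrank_eq (by rw [hfrF, ← hd_def, h])
      exact hU htop
  exact ⟨hdvd, hdn, a, hane, hUimg⟩

/-- for `d_U ≥ 2`, `ω(G_U) ≤ q^{d_U}`, with equality iff `q = 2 = d_U`, or
`U = a² · F_{q^{d_U}}` for some `a ≠ 0`, where `d_U < n` divides `n` and the subfield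
`F_{q^{d_U}}` is `{x | x^(q^{d_U}) = x}`. -/
theorem omega_le_q_pow_dim (q n : ℕ) (hq : IsPrimePow q) (hn : 2 ≤ n)
    (K F : Type*) [Field K] [Field F] [Algebra K F] [Fintype K] [Fintype F]
    (hK : Fintype.card K = q) (hF : Fintype.card F = q ^ n)
    (U : Submodule K F) (hU : U ≠ ⊤) (hd : 2 ≤ Module.finrank K U) :
    (paleyGraph (U : Set F)).cliqueNum ≤ q ^ Module.finrank K U ∧
    ((paleyGraph (U : Set F)).cliqueNum = q ^ Module.finrank K U ↔
      (q = 2 ∧ Module.finrank K U = 2) ∨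
      (Module.finrank K U ∣ n ∧ Module.finrank K U < n ∧
        ∃ a : F, a ≠ 0 ∧
          (U : Set F) =
            (fun x => a ^ 2 * x) '' {x : F | x ^ q ^ Module.finrank K U = x})) := by
  classical
  have hq2 : 2 ≤ q := hq.two_le
  set d := Module.finrank K U with hd_def
  set Uf : Finset F := Finset.univ.filter (fun x => x ∈ U) with hUf_def
  have hUf : ∀ x : F, x ∈ Uf ↔ x ∈ U := by
    intro x
    simp [hUf_def]
  have hUfS : ∀ x : F, x ∈ Uf ↔ x ∈ (U : Set F) := hUf
  have hUcard : Uf.card = q ^ d := by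
    have h1 : Fintype.card ↥U = Fintype.card K ^ d := Module.card_eq_pow_finrank
    have h2 : Fintype.card {x : F // x ∈ U} = Uf.card := Fintype.card_of_subtype Uf hUf
    rw [← h2, h1, hK]
  have hsumU : ∑ x ∈ Uf, x = 0 := sum_subspace_eq_zero U hd Uf hUf
  have h0U : (0:F) ∈ Uf := (hUf 0).mpr U.zero_mem
  have hU4 : 4 ≤ Uf.card := by
    rw [hUcard]
    calc 4 = 2 ^ 2 := rfl
      _ ≤ q ^ 2 := Nat.pow_le_pow_left hq2 2
      _ ≤ q ^ d := Nat.pow_le_pow_right (by omega) hd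
  have part1 : (paleyGraph (U : Set F)).cliqueNum ≤ q ^ d := by
    obtain ⟨t, ht⟩ := (paleyGraph (U : Set F)).exists_isNClique_cliqueNum
    rw [← ht.card_eq, ← hUcard]
    exact clique_bound hUfS h0U hsumU hU4 t ht.isClique
  refine ⟨part1, ?_, ?_⟩
  · -- forward direction
    intro heq
    by_cases hqd : q = 2 ∧ d = 2
    · exact Or.inl hqd
    right
    obtain ⟨t, ht⟩ := (paleyGraph (U : Set F)).exists_isNClique_cliqueNum
    rw [heq] at ht
    have h0C : (0:F) ∉ t.erase 0 := Finset.notMem_erase _ _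
    have hPC : ∀ x ∈ t.erase 0, ∀ y ∈ t.erase 0, x ≠ y → x * y ∈ Uf := by
      intro x hx y hy hxy
      exact (hUfS _).mpr (And.right (ht.isClique (Finset.mem_coe.mpr (Finset.mem_of_mem_erase hx))
        (Finset.mem_coe.mpr (Finset.mem_of_mem_erase hy)) hxy))
    have hB := paley_cardB h0U hsumU (by omega) h0C hPC
    have h0t : (0:F) ∈ t := by
      by_contra h0t
      rw [Finset.erase_eq_of_notMem h0t, ht.card_eq, ← hUcard] at hB
      exact hB rfl
    have htcard : t.card = q ^ d := ht.card_eq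
    have hCcard : (t.erase 0).card + 1 = Uf.card := by
      rw [Finset.card_erase_of_mem h0t, htcard, hUcard]
      have : 1 ≤ q ^ d := by omega
      omega
    have hN8 : 8 ≤ Uf.card := by
      rw [hUcard]
      rcases Nat.lt_or_ge q 3 with hq3 | hq3
      · have hq2' : q = 2 := by omega
        have hd3 : 3 ≤ d := by
          rcases Nat.lt_or_ge d 3 with h | h
          · exact absurd ⟨hq2', by omega⟩ hqd
          · exact h
        calc 8 = 2 ^ 3 := rfl
          _ ≤ 2 ^ d := Nat.pow_le_pow_right (by omega) hd3
          _ = q ^ d := by rw [hq2']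
      · calc 8 ≤ 3 ^ 2 := by omega
          _ ≤ q ^ 2 := Nat.pow_le_pow_left hq3 2
          _ ≤ q ^ d := Nat.pow_le_pow_right (by omega) hd
    obtain ⟨hsq, hs0⟩ := paley_squares h0U hsumU hCcard h0C hPC hN8
    have hCne : (t.erase 0).Nonempty := Finset.card_pos.mp (by omega)
    obtain ⟨a, ha⟩ := hCne
    have himg := paley_full h0U hCcard h0C hPC ha (hsq a ha)
    exact subfield_step hq hn hK hF U hU hd Uf hUf hUcard h0C
      (fun x hx y hy hxy => (hUf _).mp (hPC x hx y hy hxy))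
      (fun x hx => (hUf _).mp (hsq x hx)) ha himg
  · -- backward direction
    rintro (⟨hq2', hd2⟩ | ⟨hdvd, hdn, a, hane, hUS⟩)
    · -- q = 2, d = 2
      have hqd4 : q ^ d = 4 := by rw [hq2', hd2]; norm_num
      have hp2 : (2 : F) = 0 := by
        have h1 : ((Fintype.card F : ℕ) : F) = 0 := FiniteField.cast_card_eq_zero F
        rw [hF] at h1
        have hchar := ringChar.charP F
        have hprime : (ringChar F).Prime := CharP.char_is_prime F (ringChar F)
        have hdvd2 : ringChar F ∣ q ^ n := (CharP.cast_eq_zero_iff F (ringChar F) _).mp h1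
        have hdvdq : ringChar F ∣ q := hprime.dvd_of_dvd_pow hdvd2
        rw [hq2'] at hdvdq
        have hr2 : ringChar F = 2 :=
          (Nat.prime_dvd_prime_iff_eq hprime Nat.prime_two).mp hdvdq
        have h2 : ((2 : ℕ) : F) = 0 :=
          (CharP.cast_eq_zero_iff F (ringChar F) 2).mpr (by rw [hr2])
        exact_mod_cast h2
      obtain ⟨u, hu⟩ := Finset.card_pos.mp
        (show 0 < (Uf.erase 0).card by rw [Finset.card_erase_of_mem h0U]; omega)
      have hune : u ≠ 0 := (Finset.mem_erase.mp hu).1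
      have huU : u ∈ U := (hUf u).mp (Finset.mem_of_mem_erase hu)
      obtain ⟨v, hv⟩ := Finset.card_pos.mp
        (show 0 < ((Uf.erase 0).erase u).card by
          rw [Finset.card_erase_of_mem hu, Finset.card_erase_of_mem h0U]; omega)
      have hvu : v ≠ u := (Finset.mem_erase.mp hv).1
      have hvne : v ≠ 0 := (Finset.mem_erase.mp (Finset.mem_of_mem_erase hv)).1
      have hvU : v ∈ U := (hUf v).mp (Finset.mem_of_mem_erase (Finset.mem_of_mem_erase hv))
      have huv : u + v ≠ 0 := by
        intro h
        apply hvu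
        linear_combination h - u * hp2
      have hsqsurj : ∀ y : F, ∃ x : F, x * x = y := by
        have hinj : Function.Injective (fun x : F => x * x) := by
          intro x y hxy
          have hxy' : x * x = y * y := hxy
          have h1 : (x - y) * (x - y) = 0 := by
            linear_combination hxy' + (y * y - x * y) * hp2
          exact sub_eq_zero.mp (mul_self_eq_zero.mp h1)
        intro y
        obtain ⟨x, hx⟩ := (Finite.injective_iff_surjective.mp hinj) y
        exact ⟨x, hx⟩
      obtain ⟨a, ha2⟩ := hsqsurj (u * v * (u + v)⁻¹)
      have ht0 : u * v * (u + v)⁻¹ ≠ 0 :=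
        mul_ne_zero (mul_ne_zero hune hvne) (inv_ne_zero huv)
      have hane : a ≠ 0 := by
        intro h
        rw [h, zero_mul] at ha2
        exact ht0 ha2.symm
      have haau : a * a * (u + v) = u * v := by
        rw [ha2]
        field_simp
      have h1 : a ≠ u * a⁻¹ := by
        intro h
        have h2 : a * a = u := by
          calc a * a = a * (u * a⁻¹) := by rw [← h]
            _ = u := by field_simp
        rw [h2] at haau
        apply hune
        have h3 : u * u = 0 := by linear_combination haau
        exact mul_self_eq_zero.mp h3
      have h2 : a ≠ v * a⁻¹ := by
        intro h
        have h2 : a * a = v := by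
          calc a * a = a * (v * a⁻¹) := by rw [← h]
            _ = v := by field_simp
        rw [h2] at haau
        apply hvne
        have h3 : v * v = 0 := by linear_combination haau
        exact mul_self_eq_zero.mp h3
      have h3 : u * a⁻¹ ≠ v * a⁻¹ := by
        intro h
        exact hvu (mul_right_cancel₀ (inv_ne_zero hane) h).symm
      have h0a : (0:F) ≠ a := hane.symm
      have h0u : (0:F) ≠ u * a⁻¹ := (mul_ne_zero hune (inv_ne_zero hane)).symm
      have h0v : (0:F) ≠ v * a⁻¹ := (mul_ne_zero hvne (inv_ne_zero hane)).symm
      set t : Finset F := {0, a, u * a⁻¹, v * a⁻¹} with ht_def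
      have htcard : t.card = 4 := by
        rw [ht_def]
        rw [Finset.card_insert_of_notMem (by simp [h0a, h0u, h0v]),
          Finset.card_insert_of_notMem (by simp [h1, h2]),
          Finset.card_insert_of_notMem (by simp [h3]),
          Finset.card_singleton]
      have hm1 : a * (u * a⁻¹) ∈ (U : Set F) := by
        have h : a * (u * a⁻¹) = u := by field_simp
        rw [h]; exact huU
      have hm2 : a * (v * a⁻¹) ∈ (U : Set F) := by
        have h : a * (v * a⁻¹) = v := by field_simp
        rw [h]; exact hvU
      have hm3 : (u * a⁻¹) * (v * a⁻¹) ∈ (U : Set F) := by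
        have haane : a * a ≠ 0 := mul_ne_zero hane hane
        have h : (u * a⁻¹) * (v * a⁻¹) = u + v := by
          field_simp
          linear_combination -haau
        rw [h]
        exact U.add_mem huU hvU
      have hm1' : (u * a⁻¹) * a ∈ (U : Set F) := by rw [mul_comm]; exact hm1
      have hm2' : (v * a⁻¹) * a ∈ (U : Set F) := by rw [mul_comm]; exact hm2
      have hm3' : (v * a⁻¹) * (u * a⁻¹) ∈ (U : Set F) := by rw [mul_comm]; exact hm3
      have hclique : (paleyGraph (U : Set F)).IsClique ↑t := by
        intro x hx y hy hxy
        refine And.intro hxy ?_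
        rw [ht_def] at hx hy
        simp only [Finset.coe_insert, Set.mem_insert_iff, Finset.coe_singleton,
          Set.mem_singleton_iff] at hx hy
        rcases hx with rfl | rfl | rfl | rfl <;> rcases hy with rfl | rfl | rfl | rfl <;>
          first
          | exact absurd rfl hxy
          | (rw [zero_mul]; exact U.zero_mem)
          | (rw [mul_zero]; exact U.zero_mem)
          | exact hm1
          | exact hm2
          | exact hm3
          | exact hm1'
          | exact hm2'
          | exact hm3'
      refine le_antisymm part1 ?_
      calc q ^ d = t.card := by rw [htcard, hqd4]
        _ ≤ (paleyGraph (U : Set F)).cliqueNum :=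
            SimpleGraph.IsClique.card_le_cliqueNum (tc := hclique)
    · -- subfield case
      have hqd4 : 4 ≤ q ^ d := hUcard ▸ hU4
      set e := q ^ d - 1 with he_def
      have hene : e ≠ 0 := by omega
      have hdvdcard : e ∣ Fintype.card F - 1 := by
        rw [hF]
        obtain ⟨k, hk⟩ := hdvd
        rw [hk, pow_mul]
        have h1 := Nat.sub_dvd_pow_sub_pow (q ^ d) 1 k
        rw [one_pow] at h1
        exact h1
      obtain ⟨g, hg⟩ := IsCyclic.exists_ofOrder_eq_natCard (α := Fˣ)
      have hgord : orderOf g = Fintype.card F - 1 := by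
        rw [hg, Nat.card_eq_fintype_card, Fintype.card_units]
      have hcardF : 4 ≤ Fintype.card F := by
        rw [hF]
        calc 4 ≤ q ^ d := hqd4
          _ ≤ q ^ n := Nat.pow_le_pow_right (by omega) (le_of_lt hdn)
      have horder : orderOf (g ^ (orderOf g / e)) = e :=
        orderOf_pow_orderOf_div (by rw [hgord]; omega) (by rw [hgord]; exact hdvdcard)
      set ζu : Fˣ := g ^ (orderOf g / e) with hζu_def
      set ζ : F := (ζu : F) with hζ_def
      have hζord : orderOf ζ = e := by
        rw [hζ_def, orderOf_units]
        exact horder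
      have hζe : ζ ^ e = 1 := by
        rw [← hζord]
        exact pow_orderOf_eq_one ζ
      have hζne : ζ ≠ 0 := Units.ne_zero ζu
      set R : Finset F := (Finset.range e).image (ζ ^ ·) with hR_def
      have hRcard : R.card = e := by
        rw [hR_def, Finset.card_image_of_injOn, Finset.card_range]
        intro i hi j hj hij
        have hi' : i < orderOf ζ := by
          rw [hζord]; exact Finset.mem_range.mp (Finset.mem_coe.mp hi)
        have hj' : j < orderOf ζ := by
          rw [hζord]; exact Finset.mem_range.mp (Finset.mem_coe.mp hj)
        exact pow_injOn_Iio_orderOf (Set.mem_Iio.mpr hi') (Set.mem_Iio.mpr hj') hij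
      have hRone : ∀ x ∈ R, x ^ e = 1 := by
        intro x hx
        rcases Finset.mem_image.mp hx with ⟨i, _, rfl⟩
        rw [← pow_mul, mul_comm, pow_mul, hζe, one_pow]
      have hR0 : (0:F) ∉ R := by
        intro h
        rcases Finset.mem_image.mp h with ⟨i, _, hzero⟩
        exact (pow_ne_zero i hζne) hzero
      have hRS : ∀ x ∈ R, ∀ y ∈ R, x * y ∈ {z : F | z ^ q ^ d = z} := by
        intro x hx y hy
        have hxy : (x * y) ^ e = 1 := by
          rw [mul_pow, hRone x hx, hRone y hy, one_mul]
        show (x * y) ^ q ^ d = x * y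
        have h1 : q ^ d = e + 1 := by omega
        rw [h1, pow_succ, hxy, one_mul]
      set t : Finset F := insert 0 (R.image (fun x => a * x)) with ht_def
      have h0img : (0:F) ∉ R.image (fun x => a * x) := by
        intro h
        rcases Finset.mem_image.mp h with ⟨x, hx, h0⟩
        have hxne : x ≠ 0 := fun hh => hR0 (hh ▸ hx)
        exact (mul_ne_zero hane hxne) h0
      have htcard : t.card = q ^ d := by
        rw [ht_def, Finset.card_insert_of_notMem h0img,
          Finset.card_image_of_injective _ (mul_right_injective₀ hane), hRcard]
        omega
      have hclique : (paleyGraph (U : Set F)).IsClique ↑t := by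
        intro x hx y hy hxy
        refine And.intro hxy ?_
        rw [ht_def] at hx hy
        simp only [Finset.coe_insert, Set.mem_insert_iff, Finset.mem_coe] at hx hy
        rcases hx with rfl | hx
        · rw [zero_mul]; exact U.zero_mem
        rcases hy with rfl | hy
        · rw [mul_zero]; exact U.zero_mem
        rcases Finset.mem_image.mp hx with ⟨x', hx', rfl⟩
        rcases Finset.mem_image.mp hy with ⟨y', hy', rfl⟩
        rw [hUS]
        exact ⟨x' * y', hRS x' hx' y' hy', by ring⟩
      refine le_antisymm part1 ?_
      calc q ^ d = t.card := htcard.symm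
        _ ≤ (paleyGraph (U : Set F)).cliqueNum :=
            SimpleGraph.IsClique.card_le_cliqueNum (tc := hclique)
end

section
/- Let q be a prime power, n ≥ 2, let U ⊊ F_{q^n} be an F_q-linear subspace of dimension d_U ≥ 1, and let G be a maximal clique in G_U (a clique not properly contained in any other clique). Then the set V(G)₂ = {α ∈ V(G) : α² ∈ U} is an F_q-linear subspace of F_{q^n}: it contains 0 and is closed under addition and under multiplication by scalars from F_q. -/
/-- for a maximal clique `s` of `G_U`, the set
`V(G)₂ = {α ∈ s | α² ∈ U}` contains `0` and is closed under addition and under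
multiplication by scalars from `F_q`, i.e. it is an `F_q`-subspace of `F_{q^n}`. -/
theorem maximal_clique_square_part_subspace (q n : ℕ) (hq : IsPrimePow q) (hn : 2 ≤ n)
    (K F : Type*) [Field K] [Field F] [Algebra K F] [Fintype K] [Fintype F]
    (hK : Fintype.card K = q) (hF : Fintype.card F = q ^ n)
    (U : Submodule K F) (hU : U ≠ ⊤) (hd : 1 ≤ Module.finrank K U)
    (s : Set F) (hs : Maximal (paleyGraph (U : Set F)).IsClique s) :
    (0 : F) ∈ {α ∈ s | α ^ 2 ∈ U} ∧
    (∀ a ∈ {α ∈ s | α ^ 2 ∈ U}, ∀ b ∈ {α ∈ s | α ^ 2 ∈ U},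
      a + b ∈ {α ∈ s | α ^ 2 ∈ U}) ∧
    (∀ c : K, ∀ a ∈ {α ∈ s | α ^ 2 ∈ U}, c • a ∈ {α ∈ s | α ^ 2 ∈ U}) := by
  have hclique := hs.1
  -- membership criterion: anything adjacent-compatible with everything in `s` is in `s`
  have key : ∀ y : F, (∀ x ∈ s, x * y ∈ U) → y ∈ s := by
    intro y hy
    have hc : (paleyGraph (U : Set F)).IsClique (insert y s) := by
      intro u hu v hv huv
      rcases hu with rfl | hu
      · rcases hv with rfl | hv
        · exact absurd rfl huv
        · exact ⟨huv, by rw [mul_comm]; exact hy v hv⟩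
      · rcases hv with rfl | hv
        · exact ⟨huv, hy u hu⟩
        · exact hclique hu hv huv
    exact hs.2 hc (Set.subset_insert y s) (Set.mem_insert y s)
  have prodU : ∀ a ∈ s, a ^ 2 ∈ U → ∀ x ∈ s, x * a ∈ U := by
    intro a ha ha2 x hx
    by_cases hxa : x = a
    · subst hxa; simpa [sq] using ha2
    · exact (hclique hx ha hxa).2
  refine ⟨⟨key 0 (fun x hx => by simpa using U.zero_mem), by simpa using U.zero_mem⟩, ?_, ?_⟩
  · rintro a ⟨ha, ha2⟩ b ⟨hb, hb2⟩
    refine ⟨key (a + b) (fun x hx => ?_), ?_⟩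
    · have : x * (a + b) = x * a + x * b := by ring
      rw [this]
      exact U.add_mem (prodU a ha ha2 x hx) (prodU b hb hb2 x hx)
    · have : (a + b) ^ 2 = a ^ 2 + (a * b + (b * a + b ^ 2)) := by ring
      rw [this]
      exact U.add_mem ha2 (U.add_mem (prodU b hb hb2 a ha)
        (U.add_mem (prodU a ha ha2 b hb) hb2))
  · rintro c a ⟨ha, ha2⟩
    refine ⟨key (c • a) (fun x hx => ?_), ?_⟩
    · rw [mul_smul_comm]
      exact U.smul_mem c (prodU a ha ha2 x hx)
    · rw [smul_pow]
      exact U.smul_mem _ ha2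
end

section
/- Let q be a prime power, n ≥ 2, let U ⊊ F_{q^n} be an F_q-linear subspace of dimension d_U ≥ 1, and let G be a maximal clique in G_U. Then the elements of V(G)₁ = {α ∈ V(G) : α² ∉ U} are F_q-linearly independent. -/
/-- for a maximal clique `s` of `G_U`, the elements of
`V(G)₁ = {α ∈ s | α² ∉ U}` are `F_q`-linearly independent. -/
theorem maximal_clique_nonsquare_part_linearIndependent (q n : ℕ)
    (hq : IsPrimePow q) (hn : 2 ≤ n)
    (K F : Type*) [Field K] [Field F] [Algebra K F] [Fintype K] [Fintype F]
    (hK : Fintype.card K = q) (hF : Fintype.card F = q ^ n)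
    (U : Submodule K F) (hU : U ≠ ⊤) (hd : 1 ≤ Module.finrank K U)
    (s : Set F) (hs : Maximal (paleyGraph (U : Set F)).IsClique s) :
    LinearIndependent K (fun x : ({α ∈ s | α ^ 2 ∉ U} : Set F) => (x : F)) := by
  classical
  have hclique := hs.1
  rw [linearIndependent_iff']
  intro t g hsum i hi
  by_contra hgi
  -- multiply the linear relation by (i : F)
  have h0 : ∑ j ∈ t, g j • ((j : F) * (i : F)) = 0 := by
    have := congrArg (· * (i : F)) hsum
    simpa [Finset.sum_mul, smul_mul_assoc] using this
  have h1 : g i • ((i : F) * (i : F))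
      = - ∑ j ∈ t.erase i, g j • ((j : F) * (i : F)) := by
    rw [← Finset.add_sum_erase t _ hi] at h0
    exact eq_neg_of_add_eq_zero_left h0
  have hmem : g i • ((i : F) * (i : F)) ∈ U := by
    rw [h1]
    refine neg_mem (Submodule.sum_mem U fun j hj => Submodule.smul_mem U _ ?_)
    have hji : (j : F) ≠ (i : F) := by
      intro h
      exact (Finset.mem_erase.mp hj).1 (Subtype.ext h)
    exact (hclique j.2.1 i.2.1 hji).2
  have hsq : ((i : F)) ^ 2 ∈ U := by
    have := Submodule.smul_mem U (g i)⁻¹ hmem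
    rwa [smul_smul, inv_mul_cancel₀ hgi, one_smul, ← sq] at this
  exact i.2.2 hsq
end

section
/- Let q be a prime power, n ≥ 2, let U ⊊ F_{q^n} be an F_q-linear subspace of dimension d_U ≥ 1, and let G be a maximal clique in G_U. If V(G)₁ = {α ∈ V(G) : α² ∉ U} is nonempty and W is the F_q-linear span of V(G)₁, then W ∩ V(G)₂ = {0}, where V(G)₂ = {α ∈ V(G) : α² ∈ U}. -/
/-- for a maximal clique `s` of `G_U`, if `V(G)₁ = {α ∈ s | α² ∉ U}` is
nonempty and `W` is its `F_q`-linear span, then `W ∩ V(G)₂ = {0}`, where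
`V(G)₂ = {α ∈ s | α² ∈ U}`. -/
theorem maximal_clique_span_inter (q n : ℕ) (hq : IsPrimePow q) (hn : 2 ≤ n)
    (K F : Type*) [Field K] [Field F] [Algebra K F] [Fintype K] [Fintype F]
    (hK : Fintype.card K = q) (hF : Fintype.card F = q ^ n)
    (U : Submodule K F) (hU : U ≠ ⊤) (hd : 1 ≤ Module.finrank K U)
    (s : Set F) (hs : Maximal (paleyGraph (U : Set F)).IsClique s)
    (hne : ({α ∈ s | α ^ 2 ∉ U} : Set F).Nonempty) :
    (Submodule.span K ({α ∈ s | α ^ 2 ∉ U} : Set F) : Set F) ∩ {α ∈ s | α ^ 2 ∈ U}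
      = {0} := by
  classical
  have h0s : (0 : F) ∈ s := by
    have hclique : (paleyGraph (U : Set F)).IsClique (insert 0 s) := by
      intro a ha b hb hab
      rcases ha with rfl | ha
      · exact ⟨hab, by simp [U.zero_mem]⟩
      · rcases hb with rfl | hb
        · exact ⟨hab, by simp [U.zero_mem]⟩
        · exact hs.1 ha hb hab
    exact hs.2 hclique (Set.subset_insert 0 s) (Set.mem_insert 0 s)
  ext w
  simp only [Set.mem_inter_iff, Set.mem_singleton_iff, Set.mem_setOf_eq, SetLike.mem_coe]
  constructor
  · rintro ⟨hspan, hws, hw2⟩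
    rw [Submodule.mem_span_set] at hspan
    obtain ⟨c, hsupp, hsum⟩ := hspan
    have hc : ∀ β ∈ c.support, c β = 0 := by
      intro β hβ
      obtain ⟨hβs, hβ2⟩ : β ∈ s ∧ β ^ 2 ∉ U := hsupp hβ
      have hwβ : w ≠ β := fun h => hβ2 (h ▸ hw2)
      have hadj : w * β ∈ U := (hs.1 hws hβs hwβ).2
      have hsum2 : ∑ a ∈ c.support, c a • (a * β) = w * β := by
        rw [← hsum, Finsupp.sum, Finset.sum_mul]
        exact Finset.sum_congr rfl fun a _ => (smul_mul_assoc _ _ _).symm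
      have hrest : ∑ a ∈ c.support.erase β, c a • (a * β) ∈ U := by
        refine Submodule.sum_mem U fun a ha => Submodule.smul_mem U _ ?_
        obtain ⟨haβ, has⟩ := Finset.mem_erase.mp ha
        exact (hs.1 (hsupp has).1 hβs haβ).2
      have hkey : c β • (β * β) ∈ U := by
        have := Finset.add_sum_erase _ (fun a => c a • (a * β)) hβ
        have hmem : c β • (β * β) + ∑ a ∈ c.support.erase β, c a • (a * β) ∈ U := by
          rw [this, hsum2]; exact hadj
        have := U.sub_mem hmem hrest
        simpa using this
      by_contra hcβ
      apply hβ2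
      have : β ^ 2 = (c β)⁻¹ • (c β • (β * β)) := by
        rw [smul_smul, inv_mul_cancel₀ hcβ, one_smul, sq]
      rw [this]
      exact U.smul_mem _ hkey
    rw [← hsum, Finsupp.sum]
    exact Finset.sum_eq_zero fun a ha => by rw [hc a ha, zero_smul]
  · rintro rfl
    exact ⟨Submodule.zero_mem _, h0s, by simp [U.zero_mem]⟩
end

section
/- Let q be a prime power, n ≥ 2, and let U ⊊ F_{q^n} be an F_q-linear subspace of dimension d_U ≥ 1. Then ω(G_U) = q^t + r for some integers t, r ≥ 0 such that either t = 0 and r ≤ d_U + 1, or t ≥ 1 and r + t ≤ d_U. -/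
section Aux

variable {K F : Type*} [Field K] [Field F] [Algebra K F]

/-- If `x * s ∈ U` for all `s ∈ S`, then `x * w ∈ U` for all `w` in the span of `S`. -/
lemma mul_span_mem (U : Submodule K F) {x : F} {S : Set F}
    (h : ∀ s ∈ S, x * s ∈ U) : ∀ w ∈ Submodule.span K S, x * w ∈ U := by
  intro w hw
  induction hw using Submodule.span_induction with
  | mem s hs => exact h s hs
  | zero => simpa using U.zero_mem
  | add a b _ _ ha hb => rw [mul_add]; exact U.add_mem ha hb
  | smul k a _ ha => rw [mul_smul_comm]; exact U.smul_mem k ha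

/-- The submodule of elements `x` with `x * c ∈ U` for all `c ∈ S`. -/
def mulSubmodule (U : Submodule K F) (S : Finset F) : Submodule K F where
  carrier := {x | ∀ c ∈ S, x * c ∈ U}
  add_mem' := fun hx hy c hc => by
    rw [add_mul]; exact U.add_mem (hx c hc) (hy c hc)
  zero_mem' := fun c hc => by simpa using U.zero_mem
  smul_mem' := fun k x hx c hc => by
    rw [smul_mul_assoc]; exact U.smul_mem k (hx c hc)

lemma mem_mulSubmodule {U : Submodule K F} {S : Finset F} {x : F} :
    x ∈ mulSubmodule U S ↔ ∀ c ∈ S, x * c ∈ U := Iff.rfl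

end Aux

/-- `ω(G_U) = q^t + r` for some `t, r ≥ 0` such that either `t = 0` and
`r ≤ d_U + 1`, or `t ≥ 1` and `r + t ≤ d_U`. -/
theorem omega_eq_q_pow_add (q n : ℕ) (hq : IsPrimePow q) (hn : 2 ≤ n)
    (K F : Type*) [Field K] [Field F] [Algebra K F] [Fintype K] [Fintype F]
    (hK : Fintype.card K = q) (hF : Fintype.card F = q ^ n)
    (U : Submodule K F) (hU : U ≠ ⊤) (hd : 1 ≤ Module.finrank K U) :
    ∃ t r : ℕ, (paleyGraph (U : Set F)).cliqueNum = q ^ t + r ∧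
      ((t = 0 ∧ r ≤ Module.finrank K U + 1) ∨
        (1 ≤ t ∧ r + t ≤ Module.finrank K U)) := by
  classical
  have hq2 : 2 ≤ q := hq.two_le
  set G := paleyGraph (U : Set F) with hG
  have hAdj : ∀ a b : F, G.Adj a b ↔ a ≠ b ∧ a * b ∈ U := fun a b => Iff.rfl
  -- a maximum clique
  obtain ⟨C, hC⟩ := G.exists_isNClique_cliqueNum
  -- `0` is adjacent to everything, so WLOG `0 ∈ C`
  have h0 : (0 : F) ∈ C := by
    by_contra h0
    have hclique : G.IsClique (insert (0 : F) (C : Set F)) :=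
      hC.isClique.insert (fun b hb hne => ⟨hne, by simpa using U.zero_mem⟩)
    have hins : G.IsClique ((insert (0 : F) C : Finset F) : Set F) := by
      simpa using hclique
    have hle : (insert (0 : F) C).card ≤ G.cliqueNum :=
      SimpleGraph.IsClique.card_le_cliqueNum (tc := hins)
    rw [Finset.card_insert_of_notMem h0, hC.card_eq] at hle
    omega
  set Cs : Finset F := C.erase 0 with hCsdef
  have hCsC : Cs ⊆ C := Finset.erase_subset _ _
  have hCs0 : ∀ a ∈ Cs, a ≠ 0 := fun a ha => Finset.ne_of_mem_erase ha
  have hclq : ∀ a ∈ Cs, ∀ b ∈ Cs, a ≠ b → a * b ∈ U := fun a ha b hb hne =>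
    (hC.isClique (by exact_mod_cast hCsC ha) (by exact_mod_cast hCsC hb) hne).2
  set W : Submodule K F := Submodule.span K (Cs : Set F) with hWdef
  set X : Submodule K F := mulSubmodule U Cs with hXdef
  have hXmulW : ∀ x ∈ X, ∀ w ∈ W, x * w ∈ U := fun x hx =>
    mul_span_mem U (fun s hs => hx s hs)
  set Y : Submodule K F := X ⊓ W with hYdef
  set A : Finset F := Cs.filter (fun a => a ∉ X) with hAdef
  have hACs : A ⊆ Cs := Finset.filter_subset _ _
  have hAX : ∀ a ∈ A, a ∉ X := fun a ha => (Finset.mem_filter.mp ha).2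
  set t : ℕ := Module.finrank K Y with htdef
  set r : ℕ := A.card with hrdef
  set d : ℕ := Module.finrank K U with hddef
  -- key independence: elements of `A` are not in `X + span (Cs \ {a})`
  have hindep : ∀ a ∈ A, a ∉ X ⊔ Submodule.span K ((Cs.erase a : Finset F) : Set F) := by
    intro a haA hmem
    have haCs : a ∈ Cs := hACs haA
    obtain ⟨x, hx, s, hs, hxs⟩ := Submodule.mem_sup.mp hmem
    have hax : a * x ∈ U := by rw [mul_comm]; exact hx a haCs
    have has : a * s ∈ U := by
      refine mul_span_mem U (fun c hc => ?_) s hs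
      rcases Finset.mem_erase.mp (by exact_mod_cast hc) with ⟨hc1, hc2⟩
      exact hclq a haCs c hc2 (fun h => hc1 h.symm)
    have ha2 : a * a ∈ U := by
      have : a * (x + s) ∈ U := by rw [mul_add]; exact U.add_mem hax has
      rwa [hxs] at this
    refine hAX a haA (fun c hc => ?_)
    by_cases h : c = a
    · subst h; exact ha2
    · exact hclq a haCs c hc (fun h' => h h'.symm)
  -- coefficients of a combination of elements of `A` landing in `X` vanish
  have hcoef : ∀ s : Finset F, s ⊆ A → ∀ c : F → K,
      (∑ a ∈ s, c a • a) ∈ X → ∀ a ∈ s, c a = 0 := by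
    intro s hsA c hsum a has
    by_contra hca
    refine hindep a (hsA has) ?_
    have hsplit : c a • a + ∑ b ∈ s.erase a, c b • b = ∑ b ∈ s, c b • b :=
      Finset.add_sum_erase s (fun b => c b • b) has
    have hrest : (∑ b ∈ s.erase a, c b • b) ∈
        Submodule.span K ((Cs.erase a : Finset F) : Set F) := by
      refine Submodule.sum_smul_mem _ _ (fun b hb => ?_)
      rcases Finset.mem_erase.mp hb with ⟨hb1, hb2⟩
      exact Submodule.subset_span (by
        exact_mod_cast Finset.mem_erase.mpr ⟨hb1, hACs (hsA hb2)⟩)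
    have key : a = (c a)⁻¹ • ((∑ b ∈ s, c b • b) - ∑ b ∈ s.erase a, c b • b) := by
      rw [← hsplit, add_sub_cancel_right, smul_smul, inv_mul_cancel₀ hca, one_smul]
    have hmem2 : (c a)⁻¹ • ((∑ b ∈ s, c b • b) - ∑ b ∈ s.erase a, c b • b) ∈
        X ⊔ Submodule.span K ((Cs.erase a : Finset F) : Set F) := by
      refine Submodule.smul_mem _ _ (Submodule.sub_mem _ ?_ ?_)
      · exact Submodule.mem_sup_left hsum
      · exact Submodule.mem_sup_right hrest
    rwa [← key] at hmem2
  -- subtype version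
  have hcoef' : ∀ s : Finset F, s ⊆ A → ∀ c : {x // x ∈ s} → K,
      (∑ a : {x // x ∈ s}, c a • (a : F)) ∈ X → ∀ a, c a = 0 := by
    intro s hsA c hsum a
    set cf : F → K := fun x => if h : x ∈ s then c ⟨x, h⟩ else 0 with hcf
    have hs2 : ∑ b ∈ s, cf b • b = ∑ b : {x // x ∈ s}, c b • (b : F) := by
      rw [← Finset.sum_attach s (fun x => cf x • x), Finset.univ_eq_attach]
      exact Finset.sum_congr rfl (fun b _ => by simp [hcf, dif_pos b.2])
    have := hcoef s hsA cf (by rwa [hs2]) a a.2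
    simpa [hcf, dif_pos a.2] using this
  -- the finset corresponding to Y
  set YF : Finset F := Finset.univ.filter (fun x => x ∈ Y) with hYF
  have hYFmem : ∀ x : F, x ∈ YF ↔ x ∈ Y := by
    intro x; simp [hYF]
  have hYFcard : YF.card = q ^ t := by
    have h1 : Fintype.card Y = Fintype.card K ^ Module.finrank K Y :=
      Module.card_eq_pow_finrank
    have h2 : Fintype.card Y = YF.card := Fintype.card_subtype _
    rw [← h2, h1, hK]
  -- Y ∪ A is a clique
  have hYA_disj : Disjoint YF A := by
    rw [Finset.disjoint_left]
    intro x hx hxA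
    exact hAX x hxA ((hYFmem x).mp hx).1
  have hclique' : G.IsClique ((YF ∪ A : Finset F) : Set F) := by
    intro a ha b hb hne
    simp only [Finset.coe_union, Set.mem_union, Finset.mem_coe] at ha hb
    refine ⟨hne, ?_⟩
    rcases ha with ha | ha <;> rcases hb with hb | hb
    · exact hXmulW a ((hYFmem a).mp ha).1 b ((hYFmem b).mp hb).2
    · exact ((hYFmem a).mp ha).1 b (hACs hb)
    · rw [mul_comm]; exact ((hYFmem b).mp hb).1 a (hACs ha)
    · exact hclq a (hACs ha) b (hACs hb) hne
  have hlower : q ^ t + r ≤ G.cliqueNum := by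
    have := SimpleGraph.IsClique.card_le_cliqueNum (tc := hclique')
    rwa [Finset.card_union_of_disjoint hYA_disj, hYFcard] at this
  -- upper bound
  have hupper : G.cliqueNum ≤ q ^ t + r := by
    have hCcard : C.card = Cs.card + 1 := by
      rw [hCsdef, Finset.card_erase_of_mem h0]
      have : 1 ≤ C.card := Finset.card_pos.mpr ⟨0, h0⟩
      omega
    have hsplit : (Cs.filter (fun a => a ∈ X)).card + A.card = Cs.card := by
      rw [hAdef]
      exact Finset.card_filter_add_card_filter_not _
    have hsub : Cs.filter (fun a => a ∈ X) ⊆ YF.erase 0 := by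
      intro a ha
      rcases Finset.mem_filter.mp ha with ⟨haCs, haX⟩
      refine Finset.mem_erase.mpr ⟨hCs0 a haCs, (hYFmem a).mpr ?_⟩
      exact ⟨haX, Submodule.subset_span (by exact_mod_cast haCs)⟩
    have h0Y : (0 : F) ∈ YF := (hYFmem 0).mpr (Submodule.zero_mem Y)
    have hYFpos : 1 ≤ YF.card := Finset.card_pos.mpr ⟨0, h0Y⟩
    have hle : (Cs.filter (fun a => a ∈ X)).card ≤ YF.card - 1 := by
      have := Finset.card_le_card hsub
      rwa [Finset.card_erase_of_mem h0Y] at this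
    rw [← hC.card_eq, hCcard]
    rw [hYFcard] at hle hYFpos
    omega
  have homega : G.cliqueNum = q ^ t + r := le_antisymm hupper hlower
  refine ⟨t, r, homega, ?_⟩
  -- now the bounds on t and r
  haveI : Fintype U := Fintype.ofFinite _
  have hUcard : Fintype.card U = q ^ d := by
    rw [(Module.card_eq_pow_finrank : Fintype.card U = Fintype.card K ^ Module.finrank K U), hK]
  by_cases hY : Y = ⊥
  · -- t = 0, show r ≤ d + 1
    left
    have ht0 : t = 0 := by rw [htdef, hY]; exact finrank_bot K F
    refine ⟨ht0, ?_⟩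
    rcases Finset.eq_empty_or_nonempty A with hA | ⟨a₀, ha₀⟩
    · have : r = 0 := by rw [hrdef, hA, Finset.card_empty]
      omega
    · have ha₀0 : a₀ ≠ 0 := hCs0 a₀ (hACs ha₀)
      set s : Finset F := A.erase a₀ with hsdef
      have hsA : s ⊆ A := Finset.erase_subset _ _
      have hmem : ∀ c : {x // x ∈ s} → K,
          a₀ * (∑ a : {x // x ∈ s}, c a • (a : F)) ∈ U := by
        intro c
        rw [Finset.mul_sum]
        refine Submodule.sum_mem _ (fun a _ => ?_)
        rw [mul_smul_comm]
        refine Submodule.smul_mem _ _ ?_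
        have haA : (a : F) ∈ A := hsA a.2
        have hanea : a₀ ≠ (a : F) := fun h =>
          (Finset.mem_erase.mp a.2).1 h.symm
        exact hclq a₀ (hACs ha₀) a (hACs haA) hanea
      set g : ({x // x ∈ s} → K) → U := fun c =>
        ⟨a₀ * (∑ a : {x // x ∈ s}, c a • (a : F)), hmem c⟩ with hg
      have hginj : Function.Injective g := by
        intro c c' hcc
        have h1 : a₀ * (∑ a : {x // x ∈ s}, c a • (a : F)) =
            a₀ * (∑ a : {x // x ∈ s}, c' a • (a : F)) := congrArg Subtype.val hcc
        have h2 : (∑ a : {x // x ∈ s}, c a • (a : F)) =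
            ∑ a : {x // x ∈ s}, c' a • (a : F) := mul_left_cancel₀ ha₀0 h1
        have h3 : (∑ a : {x // x ∈ s}, (c a - c' a) • (a : F)) ∈ X := by
          have : (∑ a : {x // x ∈ s}, (c a - c' a) • (a : F)) = 0 := by
            simp only [sub_smul, Finset.sum_sub_distrib, h2, sub_self]
          rw [this]; exact Submodule.zero_mem X
        funext a
        have := hcoef' s hsA (fun a => c a - c' a) h3 a
        exact sub_eq_zero.mp this
      have hcard := Fintype.card_le_of_injective g hginj
      rw [Fintype.card_fun, hK, hUcard, Fintype.card_coe] at hcard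
      have hsc : s.card = r - 1 := by rw [hsdef, Finset.card_erase_of_mem ha₀]
      have hr1 : 1 ≤ r := Finset.card_pos.mpr ⟨a₀, ha₀⟩
      have := (Nat.pow_le_pow_iff_right (by omega : 1 < q)).mp hcard
      omega
  · -- t ≥ 1, show r + t ≤ d
    right
    haveI : Module.Finite K F := Module.Finite.of_finite
    have ht1 : 1 ≤ t := by
      rw [htdef]
      have : Nontrivial Y := Submodule.nontrivial_iff_ne_bot.mpr hY
      exact Module.finrank_pos_iff.mpr this
    refine ⟨ht1, ?_⟩
    obtain ⟨y₀, hy₀Y, hy₀0⟩ := (Submodule.ne_bot_iff Y).mp hY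
    have hy₀X : y₀ ∈ X := hy₀Y.1
    haveI : Fintype Y := Fintype.ofFinite _
    have hmem : ∀ (p : Y × ({x // x ∈ A} → K)),
        y₀ * ((p.1 : F) + ∑ a : {x // x ∈ A}, p.2 a • (a : F)) ∈ U := by
      intro p
      refine hXmulW y₀ hy₀X _ (W.add_mem p.1.2.2 ?_)
      refine Submodule.sum_mem _ (fun a _ => ?_)
      exact W.smul_mem _ (Submodule.subset_span (by exact_mod_cast hACs a.2))
    set g : Y × ({x // x ∈ A} → K) → U := fun p =>
      ⟨y₀ * ((p.1 : F) + ∑ a : {x // x ∈ A}, p.2 a • (a : F)), hmem p⟩ with hg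
    have hginj : Function.Injective g := by
      intro p p' hpp
      have h1 : y₀ * ((p.1 : F) + ∑ a : {x // x ∈ A}, p.2 a • (a : F)) =
          y₀ * ((p'.1 : F) + ∑ a : {x // x ∈ A}, p'.2 a • (a : F)) :=
        congrArg Subtype.val hpp
      have h2 : (p.1 : F) + ∑ a : {x // x ∈ A}, p.2 a • (a : F) =
          (p'.1 : F) + ∑ a : {x // x ∈ A}, p'.2 a • (a : F) :=
        mul_left_cancel₀ hy₀0 h1
      have h3 : (∑ a : {x // x ∈ A}, (p.2 a - p'.2 a) • (a : F)) =
          (p'.1 : F) - (p.1 : F) := by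
        simp only [sub_smul, Finset.sum_sub_distrib]
        exact sub_eq_sub_iff_add_eq_add.mpr (by rw [add_comm]; exact h2)
      have h4 : (∑ a : {x // x ∈ A}, (p.2 a - p'.2 a) • (a : F)) ∈ X := by
        rw [h3]; exact Submodule.sub_mem X p'.1.2.1 p.1.2.1
      have hc0 : ∀ a, p.2 a - p'.2 a = 0 :=
        hcoef' A (subset_refl A) (fun a => p.2 a - p'.2 a) h4
      have hc : p.2 = p'.2 := funext (fun a => sub_eq_zero.mp (hc0 a))
      have hsum_eq : (p.1 : F) = (p'.1 : F) := by
        rw [hc] at h2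
        exact add_right_cancel h2
      exact Prod.ext (Subtype.ext hsum_eq) hc
    have hcard := Fintype.card_le_of_injective g hginj
    rw [Fintype.card_prod, Fintype.card_fun, hK, hUcard, Fintype.card_coe] at hcard
    have hYcard : Fintype.card Y = q ^ t := by
      rw [(Module.card_eq_pow_finrank : Fintype.card Y = Fintype.card K ^ Module.finrank K Y), hK]
    rw [hYcard, ← pow_add] at hcard
    have := (Nat.pow_le_pow_iff_right (by omega : 1 < q)).mp hcard
    omega
end

section
/- Let q be a prime power, n ≥ 2, and let U ⊊ F_{q^n} be an F_q-linear subspace of dimension d_U ≥ 2. Then either ω(G_U) = q^{d_U} or ω(G_U) ≤ q^{d_U−1} + 1. -/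
section aux

variable {K F : Type*} [Field K] [Field F] [Algebra K F]

/-- Multiplication by a nonzero element of `F` as a `K`-linear equivalence. -/
private noncomputable def mulLE (K : Type*) {F : Type*} [Field K] [Field F] [Algebra K F]
    {a : F} (ha : a ≠ 0) : F ≃ₗ[K] F where
  toFun x := a * x
  map_add' := mul_add a
  map_smul' r x := by simp [mul_smul_comm]
  invFun x := a⁻¹ * x
  left_inv x := by field_simp
  right_inv x := by field_simp

private lemma aux_finrank_comap {a : F} (ha : a ≠ 0) (V : Submodule K F) :
    Module.finrank K (V.comap (LinearMap.mulLeft K a)) = Module.finrank K V := by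
  have h2 : (LinearMap.mulLeft K a) = ((mulLE K ha : F ≃ₗ[K] F) : F →ₗ[K] F) := by
    ext x; rfl
  rw [h2, Submodule.comap_equiv_eq_map_symm, LinearEquiv.finrank_map_eq]

private lemma aux_finrank_map {a : F} (ha : a ≠ 0) (V : Submodule K F) :
    Module.finrank K (V.map (LinearMap.mulLeft K a)) = Module.finrank K V := by
  have h2 : (LinearMap.mulLeft K a) = ((mulLE K ha : F ≃ₗ[K] F) : F →ₗ[K] F) := by
    ext x; rfl
  rw [h2, LinearEquiv.finrank_map_eq]

variable [Fintype K] [Fintype F]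

private lemma aux_ncard {q : ℕ} (hK : Fintype.card K = q) (V : Submodule K F) :
    ((V : Set F)).ncard = q ^ Module.finrank K V := by
  haveI : Fintype V := Fintype.ofFinite _
  have h : Nat.card V = q ^ Module.finrank K V := by
    rw [Nat.card_eq_fintype_card, Module.card_eq_pow_finrank (K := K), hK]
  rw [← Nat.card_coe_set_eq]
  exact h

private lemma aux_eq_of_big {q : ℕ} (hq2 : 2 ≤ q) (hK : Fintype.card K = q)
    {V T : Submodule K F} (hle : T ≤ V)
    (h : q ^ (Module.finrank K V - 1) < (T : Set F).ncard) : T = V := by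
  rw [aux_ncard hK] at h
  have hlt : Module.finrank K V - 1 < Module.finrank K T :=
    (Nat.pow_lt_pow_iff_right (by omega : 1 < q)).mp h
  exact Submodule.eq_of_le_of_finrank_le hle (by omega)

end aux

private lemma aux_num1 {q d : ℕ} (hq2 : 2 ≤ q) (hd : 2 ≤ d) : q ^ (d - 1) + 2 ≤ q ^ d := by
  have h1 : 2 ≤ q ^ (d - 1) := le_trans hq2 (Nat.le_self_pow (by omega) q)
  have h2 : q ^ d = q ^ (d - 1) * q := by
    rw [← pow_succ]; congr 1; omega
  have h3 : q ^ (d - 1) * 2 ≤ q ^ (d - 1) * q := Nat.mul_le_mul_left _ hq2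
  omega

private lemma aux_num2 {q d : ℕ} (hq2 : 2 ≤ q) (hd : 2 ≤ d)
    (hstrict : q ^ (d - 1) + 2 < q ^ d) : q ^ (d - 2) + 2 ≤ q ^ (d - 1) := by
  have h1 : 1 ≤ q ^ (d - 2) := Nat.one_le_pow _ _ (by omega)
  have h2 : q ^ (d - 1) = q ^ (d - 2) * q := by
    by_cases hd3 : 3 ≤ d
    · rw [← pow_succ]; congr 1; omega
    · have hdd : d = 2 := by omega
      subst hdd; simp
  by_cases hq3 : 3 ≤ q
  · have h3 : q ^ (d - 2) * 3 ≤ q ^ (d - 2) * q := Nat.mul_le_mul_left _ hq3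
    calc q ^ (d - 2) + 2 ≤ q ^ (d - 2) + 2 * q ^ (d - 2) := by omega
      _ = q ^ (d - 2) * 3 := by ring
      _ ≤ q ^ (d - 2) * q := h3
      _ = q ^ (d - 1) := h2.symm
  · have hqq : q = 2 := by omega
    subst hqq
    by_cases hd3 : 3 ≤ d
    · have h4 : 2 ≤ 2 ^ (d - 2) := Nat.le_self_pow (by omega) 2
      omega
    · exfalso
      have hdd : d = 2 := by omega
      subst hdd; norm_num at hstrict

/-- for `d_U ≥ 2`, either `ω(G_U) = q^{d_U}` or `ω(G_U) ≤ q^{d_U - 1} + 1`. -/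
theorem omega_dichotomy (q n : ℕ) (hq : IsPrimePow q) (hn : 2 ≤ n)
    (K F : Type*) [Field K] [Field F] [Algebra K F] [Fintype K] [Fintype F]
    (hK : Fintype.card K = q) (hF : Fintype.card F = q ^ n)
    (U : Submodule K F) (hU : U ≠ ⊤) (hd : 2 ≤ Module.finrank K U) :
    (paleyGraph (U : Set F)).cliqueNum = q ^ Module.finrank K U ∨
    (paleyGraph (U : Set F)).cliqueNum ≤ q ^ (Module.finrank K U - 1) + 1 := by
  classical
  by_cases hsmall :
      (paleyGraph (U : Set F)).cliqueNum ≤ q ^ (Module.finrank K U - 1) + 1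
  · exact Or.inr hsmall
  left
  set G := paleyGraph (U : Set F) with hGdef
  set d := Module.finrank K U with hddef
  have hq2 : 2 ≤ q := hq.two_le
  have hbig : q ^ (d - 1) + 2 ≤ G.cliqueNum := by
    push_neg at hsmall; omega
  -- the subspaces W_a
  set Wf : F → Submodule K F := fun a => U.comap (LinearMap.mulLeft K a) with hWfdef
  have hWmem : ∀ a x : F, x ∈ Wf a ↔ a * x ∈ U := fun a x => Iff.rfl
  have hWrank : ∀ a : F, a ≠ 0 → Module.finrank K (Wf a) = d :=
    fun a ha => aux_finrank_comap ha U
  have hadj : ∀ {s : Finset F}, G.IsClique ↑s → ∀ {x y : F},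
      x ∈ s → y ∈ s → x ≠ y → x * y ∈ U := by
    intro s hs x y hx hy hxy
    exact (hs (Finset.mem_coe.mpr hx) (Finset.mem_coe.mpr hy) hxy).2
  -- bound on the size of a clique with two "independent" nonzero elements
  have pairBound : ∀ s : Finset F, G.IsClique ↑s → ∀ a ∈ s, ∀ b ∈ s, a ≠ 0 → b ≠ 0 →
      a ≠ b → Wf a ≠ Wf b → s.card ≤ q ^ (d - 1) + 2 := by
    intro s hs a ha b hb ha0 hb0 hab hW
    have hsub : (↑((s.erase a).erase b) : Set F) ⊆ (↑(Wf a ⊓ Wf b) : Set F) := by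
      intro x hx
      rw [Finset.mem_coe, Finset.mem_erase, Finset.mem_erase] at hx
      obtain ⟨hxb, hxa, hxs⟩ := hx
      refine Submodule.mem_inf.mpr ⟨?_, ?_⟩
      · exact (hWmem a x).mpr (hadj hs ha hxs (fun h => hxa h.symm))
      · exact (hWmem b x).mpr (hadj hs hb hxs (fun h => hxb h.symm))
    have hlt : Wf a ⊓ Wf b < Wf a := by
      refine lt_of_le_of_ne inf_le_left (fun h => hW ?_)
      refine Submodule.eq_of_le_of_finrank_le (h ▸ inf_le_right) ?_
      rw [hWrank a ha0, hWrank b hb0]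
    have h1 : Module.finrank K ↥(Wf a ⊓ Wf b) < d := by
      have := Submodule.finrank_lt_finrank_of_lt hlt
      rwa [hWrank a ha0] at this
    have h2 : ((s.erase a).erase b).card ≤ q ^ (d - 1) := by
      calc ((s.erase a).erase b).card
          = ((↑((s.erase a).erase b) : Set F)).ncard := (Set.ncard_coe_finset _).symm
        _ ≤ ((↑(Wf a ⊓ Wf b) : Set F)).ncard := Set.ncard_le_ncard hsub (Set.toFinite _)
        _ = q ^ Module.finrank K ↥(Wf a ⊓ Wf b) := aux_ncard hK _
        _ ≤ q ^ (d - 1) := Nat.pow_le_pow_right (by omega) (by omega)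
    have hbmem : b ∈ s.erase a := Finset.mem_erase.mpr ⟨fun h => hab h.symm, hb⟩
    have h3 : ((s.erase a).erase b).card = s.card - 1 - 1 := by
      rw [Finset.card_erase_of_mem hbmem, Finset.card_erase_of_mem ha]
    have h4 : 1 ≤ s.card := Finset.card_pos.mpr ⟨a, ha⟩
    have h5 : 2 ≤ s.card := Finset.one_lt_card.mpr ⟨a, ha, b, hb, hab⟩
    omega
  -- every clique has size at most q^d
  have cliqueCard : ∀ s : Finset F, G.IsClique ↑s → s.card ≤ q ^ d := by
    intro s hs
    have hqd4 : 4 ≤ q ^ d := by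
      calc (4 : ℕ) = 2 ^ 2 := rfl
        _ ≤ q ^ 2 := Nat.pow_le_pow_left hq2 2
        _ ≤ q ^ d := Nat.pow_le_pow_right (by omega) hd
    by_cases hcs : s.card ≤ 2
    · omega
    · have h1 : 1 < (s.erase 0).card := by
        have := Finset.pred_card_le_card_erase (s := s) (a := 0)
        omega
      obtain ⟨a, haa, b, hbb, hab⟩ := Finset.one_lt_card.mp h1
      obtain ⟨ha0, has⟩ := Finset.mem_erase.mp haa
      obtain ⟨hb0, hbs⟩ := Finset.mem_erase.mp hbb
      by_cases hW : Wf a = Wf b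
      · have hsub : (↑s : Set F) ⊆ (↑(Wf a) : Set F) := by
          intro x hx
          rw [Finset.mem_coe] at hx
          by_cases hxa : x = a
          · subst hxa
            have : x ∈ Wf b := (hWmem b x).mpr (hadj hs hbs hx (fun h => hab h.symm))
            rwa [← hW] at this
          · exact (hWmem a x).mpr (hadj hs has hx (fun h => hxa h.symm))
        calc s.card = ((↑s : Set F)).ncard := (Set.ncard_coe_finset _).symm
          _ ≤ ((↑(Wf a) : Set F)).ncard := Set.ncard_le_ncard hsub (Set.toFinite _)
          _ = q ^ Module.finrank K (Wf a) := aux_ncard hK _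
          _ = q ^ d := by rw [hWrank a ha0]
      · exact le_trans (pairBound s hs a has b hbs ha0 hb0 hab hW) (aux_num1 hq2 hd)
  have upper : G.cliqueNum ≤ q ^ d := by
    obtain ⟨s, hs⟩ := G.exists_isNClique_cliqueNum
    rw [← hs.card_eq]
    exact cliqueCard s hs.isClique
  by_cases hedge : q ^ d ≤ q ^ (d - 1) + 2
  · exact le_antisymm upper (le_trans hedge hbig)
  have hstrict : q ^ (d - 1) + 2 < q ^ d := by omega
  have hkey : q ^ (d - 2) + 2 ≤ q ^ (d - 1) := aux_num2 hq2 hd hstrict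
  -- a maximum clique containing 0
  obtain ⟨s₀, hs₀⟩ := G.exists_isNClique_cliqueNum
  set s : Finset F := insert 0 s₀ with hs_def
  have hsclique : G.IsClique ↑s := by
    rw [hs_def, Finset.coe_insert]
    refine hs₀.isClique.insert (fun b hb hne => ?_)
    exact ⟨hne, by rw [zero_mul]; exact U.zero_mem⟩
  have hs0 : (0 : F) ∈ s := Finset.mem_insert_self 0 s₀
  have hscard : s.card = G.cliqueNum := by
    have h1 : s.card ≤ G.cliqueNum := SimpleGraph.IsClique.card_le_cliqueNum (tc := hsclique)
    have h2 : s₀.card ≤ s.card := Finset.card_le_card (Finset.subset_insert _ _)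
    have h3 := hs₀.card_eq
    omega
  have hscard2 : q ^ (d - 1) + 2 ≤ s.card := by omega
  have hpow2 : 2 ≤ q ^ (d - 1) := le_trans hq2 (Nat.le_self_pow (by omega) q)
  -- all the subspaces W_a, for nonzero a in the clique, coincide
  have allW : ∀ a ∈ s, a ≠ 0 → ∀ b ∈ s, b ≠ 0 → Wf a = Wf b := by
    intro a ha ha0 b hb hb0
    by_contra hW
    have hab : a ≠ b := fun h => hW (by rw [h])
    have hcard2 : s.card = q ^ (d - 1) + 2 :=
      le_antisymm (pairBound s hsclique a ha b hb ha0 hb0 hab hW) hscard2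
    set ee : Finset F := (s.erase a).erase b with hee_def
    have hbmem : b ∈ s.erase a := Finset.mem_erase.mpr ⟨fun h => hab h.symm, hb⟩
    have heecard : ee.card = q ^ (d - 1) := by
      rw [hee_def, Finset.card_erase_of_mem hbmem, Finset.card_erase_of_mem ha, hcard2]
      omega
    set J : Submodule K F := Wf a ⊓ Wf b with hJ_def
    have hsub : (↑ee : Set F) ⊆ (↑J : Set F) := by
      intro x hx
      rw [Finset.mem_coe, hee_def, Finset.mem_erase, Finset.mem_erase] at hx
      obtain ⟨hxb, hxa, hxs⟩ := hx
      refine Submodule.mem_inf.mpr ⟨?_, ?_⟩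
      · exact (hWmem a x).mpr (hadj hsclique ha hxs (fun h => hxa h.symm))
      · exact (hWmem b x).mpr (hadj hsclique hb hxs (fun h => hxb h.symm))
    have hlt : J < Wf a := by
      refine lt_of_le_of_ne inf_le_left (fun h => hW ?_)
      refine Submodule.eq_of_le_of_finrank_le (h ▸ inf_le_right) ?_
      rw [hWrank a ha0, hWrank b hb0]
    have hfJlt : Module.finrank K J < d := by
      have := Submodule.finrank_lt_finrank_of_lt hlt
      rwa [hWrank a ha0] at this
    have hJcard : ((↑J : Set F)).ncard = q ^ Module.finrank K J := aux_ncard hK J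
    have hJle : ((↑J : Set F)).ncard ≤ q ^ (d - 1) := by
      rw [hJcard]
      exact Nat.pow_le_pow_right (by omega) (by omega)
    have hJset : (↑ee : Set F) = (↑J : Set F) := by
      refine Set.eq_of_subset_of_ncard_le hsub ?_ (Set.toFinite _)
      rw [Set.ncard_coe_finset, heecard]
      exact hJle
    have hfJ : Module.finrank K J = d - 1 := by
      have h6 : q ^ Module.finrank K J = q ^ (d - 1) := by
        rw [← hJcard, ← hJset, Set.ncard_coe_finset, heecard]
      exact Nat.pow_right_injective hq2 h6
    have hJbot : J ≠ ⊥ := by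
      intro h
      rw [h, finrank_bot] at hfJ
      omega
    obtain ⟨c, hcJ, hc0⟩ := Submodule.exists_mem_ne_zero_of_ne_bot hJbot
    have hc_ee : c ∈ ee := by
      have : c ∈ (↑ee : Set F) := by rw [hJset]; exact hcJ
      exact Finset.mem_coe.mp this
    obtain ⟨hcb, hca, hcs⟩ : c ≠ b ∧ c ≠ a ∧ c ∈ s := by
      have h7 := Finset.mem_erase.mp hc_ee
      have h8 := Finset.mem_erase.mp h7.2
      exact ⟨h7.1, h8.1, h8.2⟩
    have ha_nJ : a ∉ J := by
      intro h
      have : a ∈ (↑ee : Set F) := by rw [hJset]; exact h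
      have := Finset.mem_erase.mp (Finset.mem_erase.mp (Finset.mem_coe.mp this)).2
      exact this.1 rfl
    have hb_nJ : b ∉ J := by
      intro h
      have : b ∈ (↑ee : Set F) := by rw [hJset]; exact h
      have := Finset.mem_erase.mp (Finset.mem_coe.mp this)
      exact this.1 rfl
    -- J is contained in W_c
    have hJWc : J ≤ Wf c := by
      set cJ : Submodule K F := J.map (LinearMap.mulLeft K c) with hcJ_def
      have hrank_cJ : Module.finrank K cJ = d - 1 := by
        rw [hcJ_def, aux_finrank_map hc0, hfJ]
      have hsub2 : (↑((ee.erase c).image (c * ·)) : Set F) ⊆ (↑(U ⊓ cJ) : Set F) := by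
        intro y hy
        rw [Finset.mem_coe, Finset.mem_image] at hy
        obtain ⟨x, hx, rfl⟩ := hy
        obtain ⟨hxc, hxee⟩ := Finset.mem_erase.mp hx
        have hxs : x ∈ s := by
          have h9 := Finset.mem_erase.mp hxee
          exact (Finset.mem_erase.mp h9.2).2
        have hxJ : x ∈ J := by
          have : x ∈ (↑ee : Set F) := Finset.mem_coe.mpr hxee
          rw [hJset] at this; exact this
        refine Submodule.mem_inf.mpr ⟨?_, ?_⟩
        · exact hadj hsclique hcs hxs (fun h => hxc h.symm)
        · exact Submodule.mem_map.mpr ⟨x, hxJ, rfl⟩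
      have himgcard : ((ee.erase c).image (c * ·)).card = q ^ (d - 1) - 1 := by
        rw [Finset.card_image_of_injective _ (mul_right_injective₀ hc0),
          Finset.card_erase_of_mem hc_ee, heecard]
      have hcard3 : q ^ (Module.finrank K cJ - 1) < ((↑(U ⊓ cJ) : Set F)).ncard := by
        have h10 : ((ee.erase c).image (c * ·)).card ≤ ((↑(U ⊓ cJ) : Set F)).ncard := by
          rw [← Set.ncard_coe_finset ((ee.erase c).image (c * ·))]
          exact Set.ncard_le_ncard hsub2 (Set.toFinite _)
        have h11 : Module.finrank K cJ - 1 = d - 2 := by omega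
        rw [h11]
        omega
      have hTeq : U ⊓ cJ = cJ := aux_eq_of_big hq2 hK inf_le_right hcard3
      intro v hv
      have h12 : c * v ∈ cJ := Submodule.mem_map.mpr ⟨v, hv, rfl⟩
      rw [← hTeq] at h12
      exact (hWmem c v).mpr (Submodule.mem_inf.mp h12).1
    have hfWc : Module.finrank K (Wf c) = d := hWrank c hc0
    have haWc : a ∈ Wf c := (hWmem c a).mpr (hadj hsclique hcs ha hca)
    have hbWc : b ∈ Wf c := (hWmem c b).mpr (hadj hsclique hcs hb hcb)
    have hsupeq : ∀ x : F, x ∈ Wf c → x ∉ J → J ⊔ Submodule.span K {x} = Wf c := by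
      intro x hxW hxJ
      refine Submodule.eq_of_le_of_finrank_le
        (sup_le hJWc (Submodule.span_le.mpr (Set.singleton_subset_iff.mpr hxW))) ?_
      have hJP : J < J ⊔ Submodule.span K {x} := by
        refine lt_of_le_of_ne le_sup_left (fun h => hxJ ?_)
        rw [h]
        exact Submodule.mem_sup_right (Submodule.mem_span_singleton_self x)
      have h13 := Submodule.finrank_lt_finrank_of_lt hJP
      rw [hfWc]
      omega
    have hPa : J ⊔ Submodule.span K {a} = Wf c := hsupeq a haWc ha_nJ
    have hPb : J ⊔ Submodule.span K {b} = Wf c := hsupeq b hbWc hb_nJ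
    have hbWa : b ∈ Wf a := (hWmem a b).mpr (hadj hsclique ha hb hab)
    have haWb : a ∈ Wf b := (hWmem b a).mpr (hadj hsclique hb ha hab.symm)
    have hWaEq : J ⊔ Submodule.span K {b} = Wf a := by
      refine Submodule.eq_of_le_of_finrank_le
        (sup_le inf_le_left (Submodule.span_le.mpr (Set.singleton_subset_iff.mpr hbWa))) ?_
      rw [hWrank a ha0, ← hfWc, ← hPb]
    have hWbEq : J ⊔ Submodule.span K {a} = Wf b := by
      refine Submodule.eq_of_le_of_finrank_le
        (sup_le inf_le_right (Submodule.span_le.mpr (Set.singleton_subset_iff.mpr haWb))) ?_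
      rw [hWrank b hb0, ← hfWc, ← hPa]
    exact hW (by rw [← hWaEq, hPb, ← hPa, hWbEq])
  -- pick a nonzero element of the clique; W is the common subspace
  have h1 : 1 < (s.erase 0).card := by
    rw [Finset.card_erase_of_mem hs0]
    omega
  obtain ⟨a0, ha0a, _b0, _, _⟩ := Finset.one_lt_card.mp h1
  obtain ⟨ha00, ha0s⟩ := Finset.mem_erase.mp ha0a
  set W : Submodule K F := Wf a0 with hW_def
  have hsW : (↑s : Set F) ⊆ (W : Set F) := by
    intro x hx
    rw [Finset.mem_coe] at hx
    by_cases hx0 : x = 0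
    · subst hx0; exact W.zero_mem
    · have hcc : 0 < ((s.erase 0).erase x).card := by
        rw [Finset.card_erase_of_mem (Finset.mem_erase.mpr ⟨hx0, hx⟩),
          Finset.card_erase_of_mem hs0]
        omega
      obtain ⟨b, hb⟩ := Finset.card_pos.mp hcc
      obtain ⟨hbx, hb'⟩ := Finset.mem_erase.mp hb
      obtain ⟨hb0, hbs⟩ := Finset.mem_erase.mp hb'
      have hxWb : x ∈ Wf b := (hWmem b x).mpr (hadj hsclique hbs hx hbx)
      rwa [allW b hbs hb0 a0 ha0s ha00] at hxWb
  -- any two elements of W multiply into U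
  have hWW : ∀ w, w ∈ W → w ≠ 0 → ∀ v ∈ W, w * v ∈ U := by
    intro w hw hw0
    set VW : Submodule K F := W.map (LinearMap.mulLeft K w) with hVW_def
    have hrankVW : Module.finrank K VW = d := by
      rw [hVW_def, aux_finrank_map hw0, hW_def, hWrank a0 ha00]
    have hTsub : (↑(s.image (w * ·)) : Set F) ⊆ (↑(U ⊓ VW) : Set F) := by
      intro y hy
      rw [Finset.mem_coe, Finset.mem_image] at hy
      obtain ⟨x, hxs, rfl⟩ := hy
      refine Submodule.mem_inf.mpr ⟨?_, ?_⟩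
      · by_cases hx0 : x = 0
        · subst hx0; rw [mul_zero]; exact U.zero_mem
        · have : w ∈ Wf x := by
            rw [allW x hxs hx0 a0 ha0s ha00]; exact hw
          have := (hWmem x w).mp this
          rwa [mul_comm] at this
      · exact Submodule.mem_map.mpr ⟨x, hsW (Finset.mem_coe.mpr hxs), rfl⟩
    have hcardT : q ^ (Module.finrank K VW - 1) < ((↑(U ⊓ VW) : Set F)).ncard := by
      have h10 : (s.image (w * ·)).card ≤ ((↑(U ⊓ VW) : Set F)).ncard := by
        rw [← Set.ncard_coe_finset (s.image (w * ·))]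
        exact Set.ncard_le_ncard hTsub (Set.toFinite _)
      have h11 : (s.image (w * ·)).card = s.card :=
        Finset.card_image_of_injective _ (mul_right_injective₀ hw0)
      have h12 : Module.finrank K VW - 1 = d - 1 := by omega
      rw [h12]
      omega
    have hTeq : U ⊓ VW = VW := aux_eq_of_big hq2 hK inf_le_right hcardT
    intro v hv
    have h12 : w * v ∈ VW := Submodule.mem_map.mpr ⟨v, hv, rfl⟩
    rw [← hTeq] at h12
    exact (Submodule.mem_inf.mp h12).1
  -- W is a clique of size q^d
  have htc : G.IsClique ↑((W : Set F).toFinset) := by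
    rw [Set.coe_toFinset]
    intro x hx y hy hxy
    refine ⟨hxy, ?_⟩
    by_cases hx0 : x = 0
    · subst hx0; rw [zero_mul]; exact U.zero_mem
    · exact hWW x hx hx0 y hy
  have hcardt : ((W : Set F).toFinset).card = q ^ d := by
    rw [← Set.ncard_eq_toFinset_card', aux_ncard hK, hW_def, hWrank a0 ha00]
  have lower : q ^ d ≤ G.cliqueNum := by
    rw [← hcardt]
    exact SimpleGraph.IsClique.card_le_cliqueNum (tc := htc)
  exact le_antisymm upper lower
end

section
/- Let q be a prime power, n ≥ 2, and let U ⊊ F_{q^n} be an F_q-linear subspace of dimension d_U ≥ 1. Then ω(G_U) ≥ 3. Moreover, if U contains no nonzero square of F_{q^n}, then ω(G_U) = 3. -/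
/-- `ω(G_U) ≥ 3`; moreover, if `U` contains no nonzero square of `F_{q^n}`,
then `ω(G_U) = 3`. -/
theorem omega_ge_three (q n : ℕ) (hq : IsPrimePow q) (hn : 2 ≤ n)
    (K F : Type*) [Field K] [Field F] [Algebra K F] [Fintype K] [Fintype F]
    (hK : Fintype.card K = q) (hF : Fintype.card F = q ^ n)
    (U : Submodule K F) (hU : U ≠ ⊤) (hd : 1 ≤ Module.finrank K U) :
    3 ≤ (paleyGraph (U : Set F)).cliqueNum ∧
    ((∀ b : F, b ≠ 0 → b ^ 2 ∉ U) → (paleyGraph (U : Set F)).cliqueNum = 3) := by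
  classical
  -- get a nonzero element of U
  have hUbot : U ≠ ⊥ := by
    intro h
    rw [h, finrank_bot] at hd
    omega
  obtain ⟨u, huU, hu0⟩ := Submodule.exists_mem_ne_zero_of_ne_bot hUbot
  -- card F ≥ 4
  have hq2 : 2 ≤ q := hq.two_le
  have hcard : 4 ≤ Fintype.card F := by
    rw [hF]
    calc 4 = 2 ^ 2 := rfl
    _ ≤ q ^ n := Nat.pow_le_pow_left hq2 n |>.trans' (Nat.pow_le_pow_right (by omega) hn)
  -- find c ≠ 0 with c^2 ≠ u
  have hc : ∃ c : F, c ≠ 0 ∧ c ^ 2 ≠ u := by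
    by_cases hsq : ∃ r : F, r ^ 2 = u
    · obtain ⟨r, hr⟩ := hsq
      have hex : ∃ c : F, c ∉ ({0, r, -r} : Finset F) := by
        by_contra hall
        push_neg at hall
        have hsub : (Finset.univ : Finset F) ⊆ {0, r, -r} := fun c _ => hall c
        have h1 := Finset.card_le_card hsub
        rw [Finset.card_univ] at h1
        have h2 : ({0, r, -r} : Finset F).card ≤ 3 := by
          have a1 := Finset.card_insert_le (0 : F) ({r, -r} : Finset F)
          have a2 := Finset.card_insert_le r ({-r} : Finset F)
          simp only [Finset.card_singleton] at a2
          omega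
        omega
      obtain ⟨c, hc⟩ := hex
      simp only [Finset.mem_insert, Finset.mem_singleton, not_or] at hc
      refine ⟨c, hc.1, fun hcu => ?_⟩
      have : (c - r) * (c + r) = 0 := by ring_nf; rw [← hr] at hcu; linear_combination hcu
      rcases mul_eq_zero.mp this with h | h
      · exact hc.2.1 (sub_eq_zero.mp h)
      · exact hc.2.2 (eq_neg_of_add_eq_zero_left h)
    · exact ⟨1, one_ne_zero, fun h => hsq ⟨1, h⟩⟩
  obtain ⟨c, hc0, hcu⟩ := hc
  set b : F := u * c⁻¹ with hb
  have hb0 : b ≠ 0 := mul_ne_zero hu0 (inv_ne_zero hc0)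
  have hcb : c * b = u := by rw [hb, mul_comm c, mul_assoc, inv_mul_cancel₀ hc0, mul_one]
  have hcbne : c ≠ b := by
    intro h
    apply hcu
    rw [sq, ← hcb, ← h]
  -- the triangle
  have htri : (paleyGraph (U : Set F)).IsNClique 3 {0, c, b} := by
    constructor
    · intro x hx y hy hxy
      simp only [Finset.coe_insert, Set.mem_insert_iff, Finset.coe_singleton,
        Set.mem_singleton_iff] at hx hy
      have h0 : (0 : F) ∈ (U : Set F) := U.zero_mem
      rcases hx with rfl | rfl | rfl <;> rcases hy with rfl | rfl | rfl <;>
        first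
        | exact absurd rfl hxy
        | exact And.intro hxy (by simpa using h0)
        | exact And.intro hxy (by simpa [hcb, mul_comm] using huU)
    · rw [Finset.card_insert_of_notMem (by simp [hc0.symm, hb0.symm]),
        Finset.card_insert_of_notMem (by simp [hcbne]), Finset.card_singleton]
  have hlow : 3 ≤ (paleyGraph (U : Set F)).cliqueNum := by
    have := SimpleGraph.IsClique.card_le_cliqueNum (tc := htri.1)
    rwa [htri.2] at this
  refine ⟨hlow, fun h => ?_⟩
  by_contra hne
  have h4 : 4 ≤ (paleyGraph (U : Set F)).cliqueNum := by omega
  obtain ⟨s, snc⟩ := (paleyGraph (U : Set F)).exists_isNClique_cliqueNum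
  have hscard : 4 ≤ s.card := by rw [snc.2]; exact h4
  have h3 : 3 ≤ (s.erase 0).card := le_trans (by omega) Finset.pred_card_le_card_erase
  obtain ⟨t, hts, htc⟩ := Finset.exists_subset_card_eq h3
  obtain ⟨x, y, z, hxy, hxz, hyz, rfl⟩ := Finset.card_eq_three.mp htc
  have hmem : ∀ w ∈ ({x, y, z} : Finset F), w ≠ 0 ∧ w ∈ s := by
    intro w hw
    have := hts hw
    rw [Finset.mem_erase] at this
    exact this
  obtain ⟨hx0, hxs⟩ := hmem x (by simp)
  obtain ⟨hy0, hys⟩ := hmem y (by simp)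
  obtain ⟨hz0, hzs⟩ := hmem z (by simp)
  have hxyU : x * y ∈ U := (snc.1 hxs hys hxy).2
  have hxzU : x * z ∈ U := (snc.1 hxs hzs hxz).2
  have hyzU : y * z ∈ U := (snc.1 hys hzs hyz).2
  -- nonzero elements of U are not squares
  have hns : ∀ v : F, v ∈ U → v ≠ 0 → ¬IsSquare v := by
    rintro v hv hv0 ⟨r, rfl⟩
    exact h r (by rintro rfl; simp at hv0) (by rwa [sq])
  by_cases h2 : ringChar F = 2
  · exact hns (x * y) hxyU (mul_ne_zero hx0 hy0) (FiniteField.isSquare_of_char_two h2 _)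
  · have e1 : quadraticChar F (x * y) = -1 :=
      quadraticChar_neg_one_iff_not_isSquare.mpr (hns _ hxyU (mul_ne_zero hx0 hy0))
    have e2 : quadraticChar F (x * z) = -1 :=
      quadraticChar_neg_one_iff_not_isSquare.mpr (hns _ hxzU (mul_ne_zero hx0 hz0))
    have e3 : quadraticChar F (y * z) = -1 :=
      quadraticChar_neg_one_iff_not_isSquare.mpr (hns _ hyzU (mul_ne_zero hy0 hz0))
    have hsq : quadraticChar F ((x * y) * ((x * z) * (y * z))) = 1 := by
      have : (x * y) * ((x * z) * (y * z)) = (x * y * z) ^ 2 := by ring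
      rw [this]
      exact quadraticChar_sq_one' (by exact mul_ne_zero (mul_ne_zero hx0 hy0) hz0)
    rw [map_mul (quadraticChar F) (x * y) ((x * z) * (y * z)),
      map_mul (quadraticChar F) (x * z) (y * z), e1, e2, e3] at hsq
    norm_num at hsq
end
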